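/- arXiv:1711.03247 — 12 statements merged into one kernel-verified Lean document; each statement's English description precedes it below -/
import Mathlib

section
/- Let g: ℝ^d → ℝ be a ρ-weakly convex function (i.e., g + (ρ/2)‖·‖² is convex) with nonempty set of minimizers 𝒳, and suppose g is sharp: g(x) - min g ≥ μ·dist(x, 𝒳) for all x, where μ, ρ > 0. Then g has no stationary points x (points with 0 ∈ ∂g(x)) satisfying 0 < dist(x, 𝒳) < 2μ/ρ. -/
open scoped InnerProductSpace

/-- The Fréchet subdifferential of `f` at `x`. -/
def frechetSubdiff {d : ℕ} (f : EuclideanSpace ℝ (Fin d) → ℝ) (x : EuclideanSpace ℝ (Fin d)) :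
    Set (EuclideanSpace ℝ (Fin d)) :=
  {v | ∀ ε > (0 : ℝ), ∃ δ > (0 : ℝ), ∀ y, ‖y - x‖ < δ →
      f y ≥ f x + ⟪v, y - x⟫_ℝ - ε * ‖y - x‖}

/-- The limiting subdifferential of `f` at `x`. -/
def limitingSubdiff {d : ℕ} (f : EuclideanSpace ℝ (Fin d) → ℝ) (x : EuclideanSpace ℝ (Fin d)) :
    Set (EuclideanSpace ℝ (Fin d)) :=
  {v | ∃ xs vs : ℕ → EuclideanSpace ℝ (Fin d),
      (∀ n, vs n ∈ frechetSubdiff f (xs n)) ∧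
      Filter.Tendsto xs Filter.atTop (nhds x) ∧
      Filter.Tendsto (fun n => f (xs n)) Filter.atTop (nhds (f x)) ∧
      Filter.Tendsto vs Filter.atTop (nhds v)}

lemma convex_frechet_global {d : ℕ} (h : EuclideanSpace ℝ (Fin d) → ℝ)
    (hc : ConvexOn ℝ Set.univ h) {x w : EuclideanSpace ℝ (Fin d)}
    (hw : w ∈ frechetSubdiff h x) :
    ∀ y, h y ≥ h x + ⟪w, y - x⟫_ℝ := by
  intro y
  rcases eq_or_ne y x with rfl | hne
  · simp
  have hn : 0 < ‖y - x‖ := norm_pos_iff.mpr (sub_ne_zero.mpr hne)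
  have key : ∀ ε > (0:ℝ), h x + ⟪w, y - x⟫_ℝ - h y ≤ ε * ‖y - x‖ := by
    intro ε hε
    obtain ⟨δ, hδ, H⟩ := hw ε hε
    set t : ℝ := min (1/2) (δ / (2 * ‖y - x‖)) with ht_def
    have ht : 0 < t := lt_min (by norm_num) (by positivity)
    have ht1 : t ≤ 1/2 := min_le_left _ _
    have htδ : t * ‖y - x‖ < δ := by
      have h1 : t ≤ δ / (2 * ‖y - x‖) := min_le_right _ _
      have h2 := mul_le_mul_of_nonneg_right h1 hn.le
      have h3 : δ / (2 * ‖y - x‖) * ‖y - x‖ = δ / 2 := by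
        field_simp
      rw [h3] at h2
      linarith
    set z := x + t • (y - x) with hz_def
    have hzx : z - x = t • (y - x) := by simp [hz_def]
    have hnz : ‖z - x‖ = t * ‖y - x‖ := by
      rw [hzx, norm_smul, Real.norm_eq_abs, abs_of_pos ht]
    have hF : h z ≥ h x + ⟪w, z - x⟫_ℝ - ε * ‖z - x‖ := H z (by rw [hnz]; exact htδ)
    rw [hzx, real_inner_smul_right, norm_smul, Real.norm_eq_abs, abs_of_pos ht] at hF
    have hz2 : z = (1 - t) • x + t • y := by rw [hz_def]; module
    have hC : h ((1-t) • x + t • y) ≤ (1-t) * h x + t * h y :=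
      hc.2 (Set.mem_univ x) (Set.mem_univ y) (by linarith) ht.le (by ring)
    rw [← hz2] at hC
    have h4 : t * (h x + ⟪w, y - x⟫_ℝ - h y) ≤ t * (ε * ‖y - x‖) := by nlinarith [hF, hC]
    exact le_of_mul_le_mul_left h4 ht
  by_contra h'
  push_neg at h'
  set a := h x + ⟪w, y - x⟫_ℝ - h y with ha
  have ha0 : 0 < a := sub_pos.mpr h'
  have := key (a / (2 * ‖y - x‖)) (by positivity)
  have heq : ‖y - x‖ * a / (2 * ‖y - x‖) = a / 2 := by
    field_simp
  rw [div_mul_eq_mul_div, mul_comm, heq] at this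
  linarith

lemma weakconvex_frechet_global {d : ℕ} (g : EuclideanSpace ℝ (Fin d) → ℝ) (ρ : ℝ) (hρ : 0 < ρ)
    (hwc : ConvexOn ℝ Set.univ (fun y => g y + ρ / 2 * ‖y‖ ^ 2))
    {x v : EuclideanSpace ℝ (Fin d)} (hv : v ∈ frechetSubdiff g x) :
    ∀ y, g y ≥ g x + ⟪v, y - x⟫_ℝ - ρ / 2 * ‖y - x‖ ^ 2 := by
  intro y
  have hid2 : ∀ z : EuclideanSpace ℝ (Fin d),
      ρ/2 * ‖z‖^2 - ρ/2 * ‖x‖^2 - ρ * ⟪x, z - x⟫_ℝ = ρ/2 * ‖z - x‖^2 := by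
    intro z
    have e1 : ‖z - x‖^2 = ‖z‖^2 - 2 * ⟪z, x⟫_ℝ + ‖x‖^2 := norm_sub_sq_real z x
    have e2 : ⟪x, z - x⟫_ℝ = ⟪x, z⟫_ℝ - ⟪x, x⟫_ℝ := inner_sub_right x z x
    have e3 : ⟪x, x⟫_ℝ = ‖x‖^2 := real_inner_self_eq_norm_sq x
    have e4 : ⟪x, z⟫_ℝ = ⟪z, x⟫_ℝ := (real_inner_comm x z).symm
    rw [e1, e2, e3, e4]; ring
  have hw : (v + ρ • x) ∈ frechetSubdiff (fun y => g y + ρ / 2 * ‖y‖ ^ 2) x := by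
    intro ε hε
    obtain ⟨δ, hδ, H⟩ := hv ε hε
    refine ⟨δ, hδ, fun z hz => ?_⟩
    have h1 := H z hz
    have hid : ⟪v + ρ • x, z - x⟫_ℝ = ⟪v, z - x⟫_ℝ + ρ * ⟪x, z - x⟫_ℝ := by
      rw [inner_add_left, real_inner_smul_left]
    have h2 := hid2 z
    have h3 : (0:ℝ) ≤ ρ/2 * ‖z - x‖^2 := by positivity
    simp only [ge_iff_le, hid]
    linarith
  have := convex_frechet_global _ hwc hw y
  have hid : ⟪v + ρ • x, y - x⟫_ℝ = ⟪v, y - x⟫_ℝ + ρ * ⟪x, y - x⟫_ℝ := by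
    rw [inner_add_left, real_inner_smul_left]
  have h2 := hid2 y
  simp only [ge_iff_le, hid] at this ⊢
  linarith

/-- A ρ-weakly convex, sharp function has no stationary points `x` with
`0 < dist(x, Xs) < 2μ/ρ`. -/
theorem no_stationary_points_near_solution_set
    {d : ℕ} (g : EuclideanSpace ℝ (Fin d) → ℝ) (ρ μ : ℝ) (hρ : 0 < ρ) (hμ : 0 < μ)
    (hwc : ConvexOn ℝ Set.univ (fun y => g y + ρ / 2 * ‖y‖ ^ 2))
    (Xs : Set (EuclideanSpace ℝ (Fin d))) (hXs : Xs = {y | ∀ z, g y ≤ g z})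
    (hXsne : Xs.Nonempty)
    (hsharp : ∀ xb ∈ Xs, ∀ y, g y - g xb ≥ μ * Metric.infDist y Xs)
    (x : EuclideanSpace ℝ (Fin d))
    (hstat : (0 : EuclideanSpace ℝ (Fin d)) ∈ limitingSubdiff g x) :
    ¬ (0 < Metric.infDist x Xs ∧ Metric.infDist x Xs < 2 * μ / ρ) := by
  rintro ⟨hD1, hD2⟩
  obtain ⟨xs, vs, hfs, hxs, hgxs, hvs⟩ := hstat
  have hglob : ∀ y, g y ≥ g x - ρ/2 * ‖y - x‖^2 := by
    intro y
    have hn : ∀ n, g (xs n) + ⟪vs n, y - xs n⟫_ℝ - ρ/2 * ‖y - xs n‖^2 ≤ g y :=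
      fun n => weakconvex_frechet_global g ρ hρ hwc (hfs n) y
    have hlim : Filter.Tendsto
        (fun n => g (xs n) + ⟪vs n, y - xs n⟫_ℝ - ρ/2 * ‖y - xs n‖^2) Filter.atTop
        (nhds (g x + ⟪(0 : EuclideanSpace ℝ (Fin d)), y - x⟫_ℝ - ρ/2 * ‖y - x‖^2)) := by
      exact (hgxs.add (hvs.inner (tendsto_const_nhds.sub hxs))).sub
        (((tendsto_const_nhds.sub hxs).norm.pow 2).const_mul (ρ/2))
    have hle := le_of_tendsto hlim (Filter.Eventually.of_forall hn)
    simpa using hle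
  obtain ⟨xb, hxb⟩ := hXsne
  set D := Metric.infDist x Xs with hDdef
  have hsx : g x - g xb ≥ μ * D := hsharp xb hxb x
  have hnum : 0 < μ * D - ρ/2 * D^2 := by
    have h5 : D * ρ < 2 * μ := (lt_div_iff₀ hρ).mp hD2
    nlinarith [hD1]
  set ε : ℝ := min 1 ((μ * D - ρ/2 * D^2) / (ρ * (D + 1))) with hεdef
  have hε : 0 < ε := lt_min one_pos (by positivity)
  have hlt : D < D + ε := by linarith
  obtain ⟨y, hyXs, hdy⟩ := (Metric.infDist_lt_iff ⟨xb, hxb⟩).mp hlt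
  have hgy : g y = g xb := by
    rw [hXs] at hyXs hxb
    exact le_antisymm (hyXs xb) (hxb y)
  have h1 := hglob y
  have hnorm : ‖y - x‖ < D + ε := by
    rw [dist_eq_norm] at hdy
    rwa [norm_sub_rev]
  have hε1 : ε ≤ 1 := min_le_left _ _
  have hε2' : ε * (ρ * (D + 1)) ≤ μ * D - ρ/2 * D^2 := by
    rw [← le_div_iff₀ (by positivity : (0:ℝ) < ρ * (D + 1))]
    exact min_le_right _ _
  have hsq : ‖y - x‖^2 < (D + ε)^2 := by
    nlinarith [norm_nonneg (y - x)]
  nlinarith [h1, hsx, hsq, mul_pos hρ hε,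
    mul_nonneg (mul_nonneg hρ.le hε.le) (sub_nonneg.mpr hε1)]
end

section
/- Let g: ℝ^d → ℝ be ρ-weakly convex and sharp with constants μ, ρ > 0 and minimizer set 𝒳. Fix γ ∈ (0,1), let 𝒯 = {x : dist(x, 𝒳) ≤ γμ/ρ}, and let L = sup{‖ζ‖ : x ∈ 𝒯, ζ ∈ ∂g(x)}. Suppose x ∈ 𝒯 is not a minimizer, ζ ∈ ∂g(x) with ζ ≠ 0, and define x⁺ = x - ((g(x) - min g)/‖ζ‖²)ζ. Then dist²(x⁺, 𝒳) ≤ (1 - (1-γ)μ²/L²)·dist²(x, 𝒳). -/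
open scoped InnerProductSpace

/-- One step of the Polyak subgradient method on a ρ-weakly convex, μ-sharp function
contracts the squared distance to the solution set at the rate `1 - (1-γ)μ²/L²`. -/
theorem polyak_step_linear_rate
    {d : ℕ} (g : EuclideanSpace ℝ (Fin d) → ℝ) (ρ μ γ L : ℝ)
    (hρ : 0 < ρ) (hμ : 0 < μ) (hγ0 : 0 < γ) (hγ1 : γ < 1)
    (Xs : Set (EuclideanSpace ℝ (Fin d))) (hXs : Xs = {y | ∀ z, g y ≤ g z})
    (xb : EuclideanSpace ℝ (Fin d)) (hxb : xb ∈ Xs)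
    (hwc : ∀ x y v, v ∈ limitingSubdiff g x →
      g y ≥ g x + ⟪v, y - x⟫_ℝ - ρ / 2 * ‖y - x‖ ^ 2)
    (hsharp : ∀ y, g y - g xb ≥ μ * Metric.infDist y Xs)
    (T : Set (EuclideanSpace ℝ (Fin d))) (hT : T = {y | Metric.infDist y Xs ≤ γ * μ / ρ})
    (hL : ∀ y ∈ T, ∀ ζ ∈ limitingSubdiff g y, ‖ζ‖ ≤ L)
    (x : EuclideanSpace ℝ (Fin d)) (hxT : x ∈ T) (hxnot : x ∉ Xs)
    (ζ : EuclideanSpace ℝ (Fin d)) (hζ : ζ ∈ limitingSubdiff g x) (hζ0 : ζ ≠ 0)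
    (x' : EuclideanSpace ℝ (Fin d)) (hx' : x' = x - ((g x - g xb) / ‖ζ‖ ^ 2) • ζ) :
    Metric.infDist x' Xs ^ 2 ≤ (1 - (1 - γ) * μ ^ 2 / L ^ 2) * Metric.infDist x Xs ^ 2 := by
  have hgmin : ∀ z, g xb ≤ g z := by rw [hXs] at hxb; exact hxb
  set D := Metric.infDist x Xs with hD
  have hD0 : 0 ≤ D := Metric.infDist_nonneg
  have hpos : 0 < g x - g xb := by
    rw [hXs] at hxnot
    simp only [Set.mem_setOf_eq, not_forall, not_le] at hxnot
    obtain ⟨z, hz⟩ := hxnot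
    linarith [hgmin z]
  have hζn : 0 < ‖ζ‖ := norm_pos_iff.mpr hζ0
  have hLζ : ‖ζ‖ ≤ L := hL x hxT ζ hζ
  have hLpos : 0 < L := lt_of_lt_of_le hζn hLζ
  set h := g x - g xb with hh
  set A := h / ‖ζ‖ ^ 2 with hA
  have hA0 : 0 < A := div_pos hpos (by positivity)
  have hAζ : A * ‖ζ‖ ^ 2 = h := by rw [hA]; field_simp
  set E := γ * μ / ρ with hE
  have hρE : ρ * E = γ * μ := by rw [hE]; field_simp [hρ.ne']
  have hE0 : 0 ≤ E := by positivity
  have hDT : D ≤ E := by rw [hT] at hxT; exact hxT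
  have hρD : ρ * D ≤ γ * μ := by nlinarith [mul_le_mul_of_nonneg_left hDT hρ.le]
  have hsh : μ * D ≤ h := hsharp x
  have hXne : Xs.Nonempty := ⟨xb, hxb⟩
  have hζL2 : ‖ζ‖ ^ 2 ≤ L ^ 2 := by nlinarith
  have hAlb : μ * D / L ^ 2 ≤ A := by
    rw [hA, div_le_div_iff₀ (by positivity) (by positivity)]
    nlinarith [mul_le_mul_of_nonneg_left hζL2 (mul_nonneg hμ.le hD0),
      mul_le_mul_of_nonneg_right hsh (sq_nonneg L)]
  set c : ℝ := (2 * E + 1) + A * (2 * γ * μ + ρ) with hc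
  have hc0 : 0 < c := by positivity
  clear_value D h A E c
  have key : ∀ ε : ℝ, 0 < ε → ε ≤ 1 →
      Metric.infDist x' Xs ^ 2 ≤ (1 - (1 - γ) * μ ^ 2 / L ^ 2) * D ^ 2 + c * ε := by
    intro ε hε0 hε1
    obtain ⟨y, hyX, hyd⟩ := (Metric.infDist_lt_iff hXne).mp
      (show Metric.infDist x Xs < D + ε by rw [← hD]; linarith)
    have hgy : g y = g xb := by
      rw [hXs] at hyX
      exact le_antisymm (hyX xb) (hgmin y)
    set s := ‖x - y‖ with hs
    have hs0 : D ≤ s := by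
      rw [hs, ← dist_eq_norm, hD]; exact Metric.infDist_le_dist_of_mem hyX
    have hs1 : s < D + ε := by rw [hs, ← dist_eq_norm]; exact hyd
    -- weak convexity inequality
    have hinner : h - ρ / 2 * s ^ 2 ≤ ⟪ζ, x - y⟫_ℝ := by
      have := hwc x y ζ hζ
      have h1 : ⟪ζ, y - x⟫_ℝ = -⟪ζ, x - y⟫_ℝ := by
        rw [show y - x = -(x - y) by abel, inner_neg_right]
      have h2 : ‖y - x‖ = s := by rw [hs, norm_sub_rev]
      rw [h1, h2, hgy] at this
      linarith [hh]
    -- norm expansion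
    have hexp : ‖x' - y‖ ^ 2 = s ^ 2 - 2 * A * ⟪ζ, x - y⟫_ℝ + A * h := by
      have hxy : x' - y = (x - y) - A • ζ := by rw [hx']; abel
      rw [hxy, norm_sub_sq_real, real_inner_smul_right, real_inner_comm, norm_smul,
        mul_pow, Real.norm_eq_abs, sq_abs,
        show A ^ 2 * ‖ζ‖ ^ 2 = A * (A * ‖ζ‖ ^ 2) by ring, hAζ, ← hs]
      ring
    have hle1 : ‖x' - y‖ ^ 2 ≤ s ^ 2 - A * (h - ρ * s ^ 2) := by
      rw [hexp]
      linarith [mul_le_mul_of_nonneg_left hinner hA0.le]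
    -- arithmetic bounds
    have hs2 : s ^ 2 ≤ (D + ε) ^ 2 :=
      pow_le_pow_left₀ (by rw [hs]; exact norm_nonneg _) hs1.le 2
    have hsq : s ^ 2 ≤ D ^ 2 + ε * (2 * E + 1) := by
      have q1 : D * ε ≤ E * ε := mul_le_mul_of_nonneg_right hDT hε0.le
      have q2 : ε * ε ≤ 1 * ε := mul_le_mul_of_nonneg_right hε1 hε0.le
      calc s ^ 2 ≤ (D + ε) ^ 2 := hs2
        _ = D ^ 2 + 2 * (D * ε) + ε * ε := by ring
        _ ≤ D ^ 2 + ε * (2 * E + 1) := by linarith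
    have hstep2 : (1 - γ) * μ * D - ε * (2 * γ * μ + ρ) ≤ h - ρ * s ^ 2 := by
      have p1 : ρ * s ^ 2 ≤ ρ * (D ^ 2 + ε * (2 * E + 1)) :=
        mul_le_mul_of_nonneg_left hsq hρ.le
      have p2 : ρ * D * D ≤ γ * μ * D := mul_le_mul_of_nonneg_right hρD hD0
      have p3 : ρ * E * ε = γ * μ * ε := by rw [hρE]
      linarith [hsh, p1, p2, p3]
    have hstep3 : A * ((1 - γ) * μ * D) - A * (2 * γ * μ + ρ) * ε ≤ A * (h - ρ * s ^ 2) := by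
      linarith [mul_le_mul_of_nonneg_left hstep2 hA0.le]
    have hstep4 : (1 - γ) * μ ^ 2 * D ^ 2 / L ^ 2 ≤ A * ((1 - γ) * μ * D) := by
      have hfac : 0 ≤ (1 - γ) * μ * D := by
        apply mul_nonneg (mul_nonneg (by linarith) hμ.le) hD0
      have hm := mul_le_mul_of_nonneg_left hAlb hfac
      calc (1 - γ) * μ ^ 2 * D ^ 2 / L ^ 2 = (1 - γ) * μ * D * (μ * D / L ^ 2) := by ring
        _ ≤ (1 - γ) * μ * D * A := hm
        _ = A * ((1 - γ) * μ * D) := by ring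
    have hdle : Metric.infDist x' Xs ≤ ‖x' - y‖ := by
      rw [← dist_eq_norm]; exact Metric.infDist_le_dist_of_mem hyX
    have hd2 : Metric.infDist x' Xs ^ 2 ≤ ‖x' - y‖ ^ 2 :=
      pow_le_pow_left₀ Metric.infDist_nonneg hdle 2
    have hrhs : (1 - (1 - γ) * μ ^ 2 / L ^ 2) * D ^ 2
        = D ^ 2 - (1 - γ) * μ ^ 2 * D ^ 2 / L ^ 2 := by ring
    calc Metric.infDist x' Xs ^ 2 ≤ s ^ 2 - A * (h - ρ * s ^ 2) := le_trans hd2 hle1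
      _ ≤ (1 - (1 - γ) * μ ^ 2 / L ^ 2) * D ^ 2 + c * ε := by
          rw [hrhs, hc]; linarith [hsq, hstep3, hstep4]
  -- conclude by letting ε → 0
  apply le_of_forall_pos_le_add
  intro ε' hε'
  have hεc : 0 < ε' / c := div_pos hε' hc0
  have hmin0 : 0 < min 1 (ε' / c) := lt_min one_pos hεc
  have hk := key (min 1 (ε' / c)) hmin0 (min_le_left _ _)
  have hcm : c * min 1 (ε' / c) ≤ ε' := by
    calc c * min 1 (ε' / c) ≤ c * (ε' / c) :=
          mul_le_mul_of_nonneg_left (min_le_right _ _) hc0.le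
      _ = ε' := by field_simp
  linarith
end

section
/- Let a ∼ N(0, I_d) be a standard Gaussian vector in ℝ^d and x, x̄ ∈ ℝ^d. Set X = xx^T - x̄x̄^T. Then E_a[|⟨a,x⟩² - ⟨a,x̄⟩²|] = E_v[|⟨λ(X), v⟩|], where λ(X) ∈ ℝ^d is the vector of eigenvalues of X and v has i.i.d. χ²₁ (chi-squared with one degree of freedom) coordinates. -/
open MeasureTheory ProbabilityTheory
open scoped ENNReal
open scoped Matrix

lemma lintegral_fin_prod {n : ℕ} (f : Fin n → ℝ → ℝ≥0∞) (hf : ∀ i, Measurable (f i)) :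
    ∫⁻ a : Fin n → ℝ, ∏ i, f i (a i) ∂(Measure.pi fun _ => (volume : Measure ℝ))
      = ∏ i, ∫⁻ x, f i x := by
  induction n with
  | zero => simp
  | succ n ih =>
    have h := (measurePreserving_piFinSuccAbove (fun _ : Fin (n+1) => (volume : Measure ℝ)) 0)
    have hg : Measurable fun p : ℝ × (Fin n → ℝ) => f 0 p.1 * ∏ j, f j.succ (p.2 j) := by
      exact ((hf 0).comp measurable_fst).mul
        (Finset.measurable_prod _ fun j _ => (hf j.succ).comp ((measurable_pi_apply j).comp measurable_snd))
    have key : ∫⁻ a : Fin (n+1) → ℝ, ∏ i, f i (a i) ∂(Measure.pi fun _ => (volume : Measure ℝ))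
        = ∫⁻ p, f 0 p.1 * ∏ j, f j.succ (p.2 j)
            ∂((volume : Measure ℝ).prod (Measure.pi fun _ : Fin n => (volume : Measure ℝ))) := by
      rw [← h.lintegral_comp hg]
      congr 1
      funext a
      simp [MeasurableEquiv.piFinSuccAbove, Fin.prod_univ_succ, Fin.zero_succAbove, Fin.tail]
    have hsplit := lintegral_prod_mul (μ := (volume : Measure ℝ))
      (ν := Measure.pi fun _ : Fin n => (volume : Measure ℝ)) (f := f 0)
      (g := fun y => ∏ j, f j.succ (y j)) (hf 0).aemeasurable
      (Finset.measurable_prod _ fun j _ => (hf j.succ).comp (measurable_pi_apply j)).aemeasurable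
    rw [key, hsplit, ih (fun j => f j.succ) (fun j => hf j.succ), Fin.prod_univ_succ]

lemma pi_gaussian_eq (d : ℕ) :
    (Measure.pi fun _ : Fin d => gaussianReal 0 1)
      = (volume : Measure (Fin d → ℝ)).withDensity
          (fun a => ∏ i, gaussianPDF 0 1 (a i)) := by
  have hmeas : ∀ i : Fin d, Measurable (gaussianPDF 0 1) := fun _ => measurable_gaussianPDF 0 1
  refine Measure.pi_eq (μ := fun _ : Fin d => gaussianReal 0 1) fun s hs => ?_
  have hset : MeasurableSet (Set.univ.pi s) := MeasurableSet.univ_pi hs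
  have hind : ∀ a : Fin d → ℝ,
      (Set.univ.pi s).indicator (fun a => ∏ i, gaussianPDF 0 1 (a i)) a
        = ∏ i, (s i).indicator (gaussianPDF 0 1) (a i) := by
    intro a
    by_cases h : a ∈ Set.univ.pi s
    · rw [Set.indicator_of_mem h]
      exact Finset.prod_congr rfl fun i _ =>
        (Set.indicator_of_mem (h i (Set.mem_univ i)) _).symm
    · rw [Set.indicator_of_notMem h]
      rw [Set.mem_univ_pi] at h
      push_neg at h
      obtain ⟨i, hi⟩ := h
      exact (Finset.prod_eq_zero (Finset.mem_univ i) (Set.indicator_of_notMem hi _)).symm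
  have h1 : ∫⁻ a in Set.univ.pi s, (∏ i, gaussianPDF 0 1 (a i)) ∂(volume : Measure (Fin d → ℝ))
      = ∫⁻ a : Fin d → ℝ, ∏ i, (s i).indicator (gaussianPDF 0 1) (a i) := by
    rw [← lintegral_indicator hset _]
    exact lintegral_congr hind
  rw [withDensity_apply _ hset, h1, volume_pi,
    lintegral_fin_prod _ (fun i => (hmeas i).indicator (hs i))]
  refine Finset.prod_congr rfl fun i _ => ?_
  rw [lintegral_indicator (hs i) _,
    gaussianReal_apply 0 (one_ne_zero) (s i)]

lemma prod_gaussianPDF_eq {d : ℕ} (u : Fin d → ℝ) :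
    (∏ i, gaussianPDF 0 1 (u i))
      = ENNReal.ofReal ((Real.sqrt (2 * Real.pi))⁻¹ ^ d * Real.exp (-(∑ i, (u i)^2) / 2)) := by
  unfold gaussianPDF
  rw [← ENNReal.ofReal_prod_of_nonneg (fun i _ => (gaussianPDFReal_nonneg 0 1 (u i)))]
  congr 1
  simp only [gaussianPDFReal, NNReal.coe_one, mul_one, sub_zero]
  rw [Finset.prod_mul_distrib, Finset.prod_const, ← Real.exp_sum]
  simp [neg_div, Finset.sum_div, Finset.sum_neg_distrib]

lemma measurePreserving_gaussian_pi {d : ℕ}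
    (B : OrthonormalBasis (Fin d) ℝ (EuclideanSpace ℝ (Fin d))) :
    MeasurePreserving (fun a : Fin d → ℝ => fun i => ∑ j, B i j * a j)
      (Measure.pi fun _ => gaussianReal 0 1) (Measure.pi fun _ => gaussianReal 0 1) := by
  set φ : (Fin d → ℝ) → (Fin d → ℝ) := fun a => fun i => ∑ j, B i j * a j with hφdef
  have hφmeas : Measurable φ :=
    measurable_pi_lambda _ fun i =>
      Finset.measurable_sum _ fun j _ => (measurable_pi_apply j).const_mul _
  have hrepr : ∀ a : Fin d → ℝ, ∀ i,
      B.repr ((MeasurableEquiv.toLp 2 (Fin d → ℝ)) a) i = φ a i := by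
    intro a i
    rw [B.repr_apply_apply]
    simp [PiLp.inner_apply, MeasurableEquiv.coe_toLp, hφdef]
    exact Finset.sum_congr rfl fun _ _ => mul_comm _ _
  have hvol : MeasurePreserving φ (volume : Measure (Fin d → ℝ)) volume := by
    have h1 := EuclideanSpace.volume_preserving_symm_measurableEquiv_toLp (Fin d)
    have h2 := B.measurePreserving_repr
    have h3 := (h1.comp h2).comp h1.symm
    convert h3 using 1
    case e'_3 => rfl
    case e'_4 => rfl
    funext a
    funext i
    exact (hrepr a i).symm
  have hnormsq : ∀ a : Fin d → ℝ, ∑ i, (φ a i)^2 = ∑ i, (a i)^2 := by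
    intro a
    set a' : EuclideanSpace ℝ (Fin d) := (MeasurableEquiv.toLp 2 (Fin d → ℝ)) a
    have h := B.repr.inner_map_map a' a'
    simp only [PiLp.inner_apply, RCLike.inner_apply, conj_trivial] at h
    calc ∑ i, (φ a i)^2 = ∑ i, B.repr a' i * B.repr a' i := by
          refine Finset.sum_congr rfl fun i _ => ?_
          rw [hrepr a i, pow_two]
        _ = ∑ i, a' i * a' i := h
        _ = ∑ i, (a i)^2 := by
          refine Finset.sum_congr rfl fun i _ => ?_
          rw [pow_two]; rfl
  have hρφ : ∀ a : Fin d → ℝ, (∏ i, gaussianPDF 0 1 (φ a i)) = ∏ i, gaussianPDF 0 1 (a i) := by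
    intro a
    rw [prod_gaussianPDF_eq, prod_gaussianPDF_eq, hnormsq]
  have hρmeas : Measurable (fun a : Fin d → ℝ => ∏ i, gaussianPDF 0 1 (a i)) :=
    Finset.measurable_prod _ fun i _ =>
      (measurable_gaussianPDF 0 1).comp (measurable_pi_apply i)
  refine ⟨hφmeas, ?_⟩
  rw [pi_gaussian_eq]
  ext s hs
  rw [Measure.map_apply hφmeas hs, withDensity_apply _ (hφmeas hs),
    withDensity_apply _ hs]
  calc ∫⁻ a in φ ⁻¹' s, (∏ i, gaussianPDF 0 1 (a i)) ∂(volume : Measure (Fin d → ℝ))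
      = ∫⁻ a in φ ⁻¹' s, (∏ i, gaussianPDF 0 1 (φ a i)) ∂(volume : Measure (Fin d → ℝ)) := by
        refine setLIntegral_congr_fun (hφmeas hs) (fun a _ => ?_)
        rw [hρφ]
      _ = ∫⁻ u in s, (∏ i, gaussianPDF 0 1 (u i)) ∂(Measure.map φ volume) :=
        (setLIntegral_map hs hρmeas hφmeas).symm
      _ = ∫⁻ u in s, (∏ i, gaussianPDF 0 1 (u i)) ∂(volume : Measure (Fin d → ℝ)) := by
        rw [hvol.map_eq]

lemma dot_spectral {d : ℕ} (X : Matrix (Fin d) (Fin d) ℝ) (hX : X.IsHermitian)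
    (a : Fin d → ℝ) :
    a ⬝ᵥ X *ᵥ a
      = ∑ i, hX.eigenvalues i * (∑ j, hX.eigenvectorBasis i j * a j)^2 := by
  set U : Matrix (Fin d) (Fin d) ℝ := (hX.eigenvectorUnitary : Matrix (Fin d) (Fin d) ℝ) with hU
  set w : Fin d → ℝ := fun i => ∑ j, hX.eigenvectorBasis i j * a j with hwdef
  have hw : star U *ᵥ a = w := by
    funext i
    simp [Matrix.mulVec, dotProduct, Matrix.star_apply,
      Matrix.IsHermitian.eigenvectorUnitary_apply, hwdef, hU]
  have hvs : a ᵥ* U = star U *ᵥ a := by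
    rw [Matrix.star_eq_conjTranspose, Matrix.conjTranspose_eq_transpose_of_trivial,
      Matrix.mulVec_transpose]
  conv_lhs => rw [hX.spectral_theorem, Unitary.conjStarAlgAut_apply]
  rw [← Matrix.mulVec_mulVec, ← Matrix.mulVec_mulVec, Matrix.dotProduct_mulVec, hvs, hw]
  have hdiag : (Matrix.diagonal (RCLike.ofReal ∘ hX.eigenvalues) : Matrix (Fin d) (Fin d) ℝ) *ᵥ w
      = fun i => hX.eigenvalues i * w i := by
    funext i
    rw [Matrix.mulVec_diagonal]
    simp
  rw [hdiag]
  simp only [dotProduct]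
  exact Finset.sum_congr rfl fun i _ => by ring


/-- Spectral representation of the population objective: for a standard Gaussian `a`,
`E[|⟨a,x⟩² - ⟨a,xb⟩²|] = E[|⟨λ(X), v⟩|]` where `X = x xᵀ - xb xbᵀ` and `v` has i.i.d.
χ²₁ coordinates (squares of i.i.d. standard normal coordinates). -/
theorem spectral_representation_population_objective {d : ℕ} (x xb : Fin d → ℝ)
    (X : Matrix (Fin d) (Fin d) ℝ)
    (hXdef : X = Matrix.vecMulVec x x - Matrix.vecMulVec xb xb)
    (hX : X.IsHermitian) :
    ∫ a : Fin d → ℝ, |(∑ i, a i * x i) ^ 2 - (∑ i, a i * xb i) ^ 2|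
        ∂(Measure.pi fun _ => gaussianReal 0 1) =
      ∫ u : Fin d → ℝ, |∑ i, hX.eigenvalues i * (u i) ^ 2|
        ∂(Measure.pi fun _ => gaussianReal 0 1) := by
  have key : ∀ a : Fin d → ℝ,
      (∑ i, a i * x i)^2 - (∑ i, a i * xb i)^2 = a ⬝ᵥ X *ᵥ a := by
    intro a
    have h1 : ∀ (y : Fin d → ℝ), a ⬝ᵥ (Matrix.vecMulVec y y) *ᵥ a = (∑ i, a i * y i)^2 := by
      intro y
      rw [pow_two, Finset.sum_mul_sum]
      simp only [dotProduct, Matrix.mulVec, Matrix.vecMulVec_apply, Finset.mul_sum]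
      exact Finset.sum_congr rfl fun i _ => Finset.sum_congr rfl fun j _ => by ring
    rw [hXdef, Matrix.sub_mulVec, dotProduct_sub, h1, h1]
  set φ : (Fin d → ℝ) → (Fin d → ℝ) :=
    fun a => fun i => ∑ j, hX.eigenvectorBasis i j * a j with hφdef
  have hmp := measurePreserving_gaussian_pi hX.eigenvectorBasis
  have hfc : Continuous fun u : Fin d → ℝ => |∑ i, hX.eigenvalues i * (u i)^2| :=
    (continuous_finset_sum _ fun i _ => continuous_const.mul ((continuous_apply i).pow 2)).abs
  calc ∫ a : Fin d → ℝ, |(∑ i, a i * x i) ^ 2 - (∑ i, a i * xb i) ^ 2|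
        ∂(Measure.pi fun _ => gaussianReal 0 1)
      = ∫ a : Fin d → ℝ, |∑ i, hX.eigenvalues i * (φ a i)^2|
          ∂(Measure.pi fun _ => gaussianReal 0 1) := by
        refine integral_congr_ae (Filter.Eventually.of_forall fun a => ?_)
        dsimp only
        rw [key a, dot_spectral X hX a]
    _ = ∫ u : Fin d → ℝ, |∑ i, hX.eigenvalues i * (u i) ^ 2|
          ∂(Measure.map φ (Measure.pi fun _ => gaussianReal 0 1)) := by
        exact (integral_map hmp.aemeasurable hfc.aestronglyMeasurable).symm
    _ = ∫ u : Fin d → ℝ, |∑ i, hX.eigenvalues i * (u i) ^ 2|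
          ∂(Measure.pi fun _ => gaussianReal 0 1) := by
        rw [hmp.map_eq]
end

section
/- Let v₁, v₂ be i.i.d. chi-squared random variables with one degree of freedom. Then for all y₁ ≥ 0 and y₂ ≤ 0, E[|v₁y₁ + v₂y₂|] = (4/π)[(y₁+y₂)·arctan(√(-y₁/y₂)) + √(-y₁y₂)] - (y₁+y₂). -/
open MeasureTheory ProbabilityTheory Real Set
open scoped NNReal ENNReal

lemma my_prod_gaussian_eq :
    (gaussianReal 0 1).prod (gaussianReal 0 1) =
      (volume : Measure (ℝ × ℝ)).withDensity
        (fun p => gaussianPDF 0 1 p.1 * gaussianPDF 0 1 p.2) := by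
  have h1 : SigmaFinite (volume.withDensity (gaussianPDF 0 1)) := by
    rw [← gaussianReal_of_var_ne_zero 0 one_ne_zero]; infer_instance
  rw [gaussianReal_of_var_ne_zero 0 one_ne_zero]
  refine Measure.prod_eq fun s t hs ht => ?_
  rw [withDensity_apply _ (hs.prod ht), withDensity_apply _ hs, withDensity_apply _ ht,
    Measure.volume_eq_prod, ← Measure.prod_restrict]
  exact lintegral_prod_mul (measurable_gaussianPDF 0 1).aemeasurable
    (measurable_gaussianPDF 0 1).aemeasurable

lemma my_integral_eq (f : ℝ × ℝ → ℝ) :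
    ∫ u, f u ∂((gaussianReal 0 1).prod (gaussianReal 0 1)) =
      ∫ p : ℝ × ℝ, (gaussianPDFReal 0 1 p.1 * gaussianPDFReal 0 1 p.2) • f p := by
  rw [my_prod_gaussian_eq]
  have hd : (fun p : ℝ × ℝ => gaussianPDF 0 1 p.1 * gaussianPDF 0 1 p.2)
      = fun p : ℝ × ℝ =>
        (((gaussianPDFReal 0 1 p.1 * gaussianPDFReal 0 1 p.2).toNNReal : ℝ≥0) : ℝ≥0∞) := by
    funext p
    rw [gaussianPDF_def, ← ENNReal.ofReal_mul (gaussianPDFReal_nonneg _ _ _)]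
    rfl
  have hmeas : Measurable fun p : ℝ × ℝ =>
      (gaussianPDFReal 0 1 p.1 * gaussianPDFReal 0 1 p.2).toNNReal :=
    (((measurable_gaussianPDFReal 0 1).comp measurable_fst).mul
      ((measurable_gaussianPDFReal 0 1).comp measurable_snd)).real_toNNReal
  rw [hd, integral_withDensity_eq_integral_smul hmeas f]
  congr 1; funext p
  rw [NNReal.smul_def, Real.coe_toNNReal _
    (mul_nonneg (gaussianPDFReal_nonneg _ _ _) (gaussianPDFReal_nonneg _ _ _))]

lemma my_radial : ∫ r in Ioi (0:ℝ), r ^ 3 * Real.exp (-r ^ 2 / 2) = 2 := by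
  have h := integral_rpow_mul_exp_neg_mul_rpow (p := 2) (q := 3) (b := 1/2)
    (by norm_num) (by norm_num) (by norm_num)
  rw [show ((3:ℝ)+1)/2 = 2 by norm_num] at h
  rw [Real.Gamma_two] at h
  have hL : ∫ x in Ioi (0:ℝ), x ^ (3:ℝ) * Real.exp (-(1/2) * x ^ (2:ℝ))
      = ∫ r in Ioi (0:ℝ), r ^ 3 * Real.exp (-r ^ 2 / 2) := by
    refine setIntegral_congr_fun measurableSet_Ioi fun x hx => ?_
    have hx0 : (0:ℝ) ≤ x := le_of_lt hx
    rw [show (3:ℝ) = ((3:ℕ):ℝ) by norm_num, Real.rpow_natCast,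
      show (2:ℝ) = ((2:ℕ):ℝ) by norm_num, Real.rpow_natCast]
    ring_nf
  rw [hL] at h
  rw [h]
  rw [show (-((3:ℝ)+1)/2) = (-2 : ℝ) by norm_num]
  rw [show ((-2:ℝ) = ((-2 : ℤ) : ℝ)) by norm_num, Real.rpow_intCast]
  norm_num

lemma my_angular_sym (y₁ y₂ : ℝ) :
    ∫ θ in Ioo (-π) π, |y₁ * Real.cos θ ^ 2 + y₂ * Real.sin θ ^ 2|
      = 4 * ∫ θ in (0:ℝ)..(π/2), |y₁ * Real.cos θ ^ 2 + y₂ * Real.sin θ ^ 2| := by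
  set h : ℝ → ℝ := fun θ => |y₁ * Real.cos θ ^ 2 + y₂ * Real.sin θ ^ 2| with hh
  have hc : Continuous h := by
    apply Continuous.abs; fun_prop
  have hint : ∀ a b : ℝ, IntervalIntegrable h volume a b := fun a b =>
    hc.intervalIntegrable a b
  have h0 : ∫ θ in Ioo (-π) π, h θ = ∫ θ in (-π)..π, h θ := by
    rw [intervalIntegral.integral_of_le (by linarith [pi_pos] : -π ≤ π),
      MeasureTheory.integral_Ioc_eq_integral_Ioo]
  have hneg : ∫ θ in (-π)..(0:ℝ), h θ = ∫ θ in (0:ℝ)..π, h θ := by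
    have := intervalIntegral.integral_comp_neg (a := (0:ℝ)) (b := π) h
    rw [neg_zero] at this
    rw [← this]
    refine intervalIntegral.integral_congr fun x _ => ?_
    simp [hh]
  have hrefl : ∫ θ in (π/2)..π, h θ = ∫ θ in (0:ℝ)..(π/2), h θ := by
    have := intervalIntegral.integral_comp_sub_left (a := (0:ℝ)) (b := π/2) h π
    rw [show π - π/2 = π/2 by ring, sub_zero] at this
    rw [← this]
    refine intervalIntegral.integral_congr fun x _ => ?_
    simp [hh, Real.cos_pi_sub, Real.sin_pi_sub]
  have hsplit1 : ∫ θ in (-π)..π, h θ = (∫ θ in (-π)..(0:ℝ), h θ) + ∫ θ in (0:ℝ)..π, h θ :=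
    (intervalIntegral.integral_add_adjacent_intervals (hint _ _) (hint _ _)).symm
  have hsplit2 : ∫ θ in (0:ℝ)..π, h θ = (∫ θ in (0:ℝ)..(π/2), h θ) + ∫ θ in (π/2)..π, h θ :=
    (intervalIntegral.integral_add_adjacent_intervals (hint _ _) (hint _ _)).symm
  rw [h0, hsplit1, hneg, hsplit2, hrefl]; ring

lemma my_FTC (y₁ y₂ a b : ℝ) :
    ∫ θ in a..b, (y₁ * Real.cos θ ^ 2 + y₂ * Real.sin θ ^ 2) =
      ((y₁ + y₂) / 2 * b + (y₁ - y₂) / 2 * (Real.sin b * Real.cos b)) -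
      ((y₁ + y₂) / 2 * a + (y₁ - y₂) / 2 * (Real.sin a * Real.cos a)) := by
  refine intervalIntegral.integral_eq_sub_of_hasDerivAt
    (f := fun θ : ℝ => (y₁ + y₂) / 2 * θ + (y₁ - y₂) / 2 * (Real.sin θ * Real.cos θ))
    (fun x _ => ?_)
    (Continuous.intervalIntegrable (by fun_prop : Continuous fun θ : ℝ => y₁ * Real.cos θ ^ 2 + y₂ * Real.sin θ ^ 2) a b)
  have h1 : HasDerivAt (fun θ : ℝ => (y₁ + y₂) / 2 * θ) ((y₁ + y₂) / 2) x := by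
    simpa using (hasDerivAt_id x).const_mul ((y₁ + y₂) / 2)
  have h2 : HasDerivAt (fun θ : ℝ => Real.sin θ * Real.cos θ)
      (Real.cos x * Real.cos x + Real.sin x * (-Real.sin x)) x :=
    (Real.hasDerivAt_sin x).mul (Real.hasDerivAt_cos x)
  have h3 := h1.add (h2.const_mul ((y₁ - y₂) / 2))
  convert h3 using 1
  · rfl
  linear_combination ((y₁ + y₂) / 2) * Real.sin_sq_add_cos_sq x

lemma my_J (y₁ y₂ : ℝ) (hy₁ : 0 ≤ y₁) (hy₂ : y₂ < 0) :
    ∫ θ in (0:ℝ)..(π/2), |y₁ * Real.cos θ ^ 2 + y₂ * Real.sin θ ^ 2|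
      = (y₁ + y₂) * Real.arctan (Real.sqrt (-y₁ / y₂)) + Real.sqrt (-(y₁ * y₂))
        - (y₁ + y₂) * (π / 4) := by
  set t₀ : ℝ := Real.sqrt (-y₁ / y₂) with ht₀def
  set θ₀ : ℝ := Real.arctan t₀ with hθ₀def
  clear_value θ₀
  clear_value t₀
  have hdiv : 0 ≤ -y₁ / y₂ := by
    rw [div_nonneg_iff]; right; constructor <;> linarith
  have ht₀ : 0 ≤ t₀ := ht₀def ▸ Real.sqrt_nonneg _
  have hθ₀0 : 0 ≤ θ₀ := by
    rw [hθ₀def, ← Real.arctan_zero]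
    exact Real.arctan_strictMono.monotone ht₀
  have hθ₀2 : θ₀ ≤ π / 2 := hθ₀def ▸ (Real.arctan_lt_pi_div_two t₀).le
  have hkey : y₂ * t₀ ^ 2 = -y₁ := by
    rw [ht₀def, Real.sq_sqrt hdiv, mul_comm, div_mul_cancel₀ _ hy₂.ne]
  have h1tpos : (0:ℝ) < 1 + t₀ ^ 2 := by positivity
  have hsqrtpos : (0:ℝ) < Real.sqrt (1 + t₀ ^ 2) := Real.sqrt_pos.mpr h1tpos
  have hsq : (Real.sqrt (1 + t₀ ^ 2)) ^ 2 = 1 + t₀ ^ 2 := Real.sq_sqrt h1tpos.le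
  have hφθ₀ : y₁ * Real.cos θ₀ ^ 2 + y₂ * Real.sin θ₀ ^ 2 = 0 := by
    rw [hθ₀def, Real.cos_arctan, Real.sin_arctan]
    rw [div_pow, div_pow, hsq]
    field_simp
    linear_combination hkey
  have hcθ₀ : 0 ≤ Real.cos θ₀ := Real.cos_nonneg_of_mem_Icc ⟨by linarith, hθ₀2⟩
  have hsign1 : ∀ θ ∈ Icc (0:ℝ) θ₀, 0 ≤ y₁ * Real.cos θ ^ 2 + y₂ * Real.sin θ ^ 2 := by
    intro θ ⟨h1, h2⟩
    have hc : Real.cos θ₀ ≤ Real.cos θ :=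
      Real.cos_le_cos_of_nonneg_of_le_pi h1 (by linarith [Real.pi_pos]) h2
    nlinarith [mul_self_le_mul_self hcθ₀ hc, Real.sin_sq_add_cos_sq θ,
      Real.sin_sq_add_cos_sq θ₀, hφθ₀, hy₂, hy₁]
  have hsign2 : ∀ θ ∈ Icc θ₀ (π/2), y₁ * Real.cos θ ^ 2 + y₂ * Real.sin θ ^ 2 ≤ 0 := by
    intro θ ⟨h1, h2⟩
    have hcθ : 0 ≤ Real.cos θ :=
      Real.cos_nonneg_of_mem_Icc ⟨by linarith, h2⟩
    have hc : Real.cos θ ≤ Real.cos θ₀ :=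
      Real.cos_le_cos_of_nonneg_of_le_pi hθ₀0 (by linarith [Real.pi_pos]) h1
    nlinarith [mul_self_le_mul_self hcθ hc, Real.sin_sq_add_cos_sq θ,
      Real.sin_sq_add_cos_sq θ₀, hφθ₀, hy₂, hy₁]
  have hintabs : ∀ a b : ℝ, IntervalIntegrable
      (fun θ => |y₁ * Real.cos θ ^ 2 + y₂ * Real.sin θ ^ 2|) volume a b := fun a b =>
    Continuous.intervalIntegrable (by fun_prop) a b
  have hsplit : ∫ θ in (0:ℝ)..(π/2), |y₁ * Real.cos θ ^ 2 + y₂ * Real.sin θ ^ 2|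
      = (∫ θ in (0:ℝ)..θ₀, |y₁ * Real.cos θ ^ 2 + y₂ * Real.sin θ ^ 2|)
        + ∫ θ in θ₀..(π/2), |y₁ * Real.cos θ ^ 2 + y₂ * Real.sin θ ^ 2| :=
    (intervalIntegral.integral_add_adjacent_intervals (hintabs _ _) (hintabs _ _)).symm
  have hpart1 : ∫ θ in (0:ℝ)..θ₀, |y₁ * Real.cos θ ^ 2 + y₂ * Real.sin θ ^ 2|
      = ∫ θ in (0:ℝ)..θ₀, (y₁ * Real.cos θ ^ 2 + y₂ * Real.sin θ ^ 2) := by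
    refine intervalIntegral.integral_congr fun x hx => ?_
    rw [uIcc_of_le hθ₀0] at hx
    exact abs_of_nonneg (hsign1 x hx)
  have hpart2 : ∫ θ in θ₀..(π/2), |y₁ * Real.cos θ ^ 2 + y₂ * Real.sin θ ^ 2|
      = -∫ θ in θ₀..(π/2), (y₁ * Real.cos θ ^ 2 + y₂ * Real.sin θ ^ 2) := by
    rw [← intervalIntegral.integral_neg]
    refine intervalIntegral.integral_congr fun x hx => ?_
    rw [uIcc_of_le hθ₀2] at hx
    exact abs_of_nonpos (hsign2 x hx)
  rw [hsplit, hpart1, hpart2, my_FTC, my_FTC]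
  rw [Real.sin_zero, Real.cos_zero, Real.sin_pi_div_two, Real.cos_pi_div_two]
  have hsc : Real.sin θ₀ * Real.cos θ₀ = t₀ / (1 + t₀ ^ 2) := by
    rw [hθ₀def, Real.cos_arctan, Real.sin_arctan, div_mul_div_comm, mul_one,
      Real.mul_self_sqrt h1tpos.le]
  have ht0s : Real.sqrt (-(y₁ * y₂)) = t₀ * (-y₂) := by
    rw [show -(y₁ * y₂) = (-y₁ / y₂) * y₂ ^ 2 from by rw [div_mul_eq_mul_div, eq_div_iff hy₂.ne]; ring,
      Real.sqrt_mul hdiv, Real.sqrt_sq_eq_abs, abs_of_neg hy₂, ← ht₀def]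
  have hfin : (y₁ - y₂) / 2 * (t₀ / (1 + t₀ ^ 2)) = Real.sqrt (-(y₁ * y₂)) / 2 := by
    rw [ht0s]
    field_simp
    linear_combination t₀ * hkey
  rw [hsc]
  linear_combination 2 * hfin


lemma my_reduction (y₁ y₂ : ℝ) :
    ∫ u : ℝ × ℝ, |u.1 ^ 2 * y₁ + u.2 ^ 2 * y₂|
        ∂((gaussianReal 0 1).prod (gaussianReal 0 1)) =
      (4 / π) * ∫ θ in (0:ℝ)..(π/2), |y₁ * Real.cos θ ^ 2 + y₂ * Real.sin θ ^ 2| := by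
  rw [my_integral_eq (fun u => |u.1 ^ 2 * y₁ + u.2 ^ 2 * y₂|)]
  rw [← integral_comp_polarCoord_symm
    (fun p : ℝ × ℝ => (gaussianPDFReal 0 1 p.1 * gaussianPDFReal 0 1 p.2) •
      |p.1 ^ 2 * y₁ + p.2 ^ 2 * y₂|)]
  have hEq : EqOn
      (fun p : ℝ × ℝ => p.1 •
        ((gaussianPDFReal 0 1 (polarCoord.symm p).1 * gaussianPDFReal 0 1 (polarCoord.symm p).2) •
          |(polarCoord.symm p).1 ^ 2 * y₁ + (polarCoord.symm p).2 ^ 2 * y₂|))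
      (fun p : ℝ × ℝ => (p.1 ^ 3 * Real.exp (-p.1 ^ 2 / 2)) *
        ((2 * π)⁻¹ * |y₁ * Real.cos p.2 ^ 2 + y₂ * Real.sin p.2 ^ 2|))
      polarCoord.target := by
    intro p hp
    rw [polarCoord_target] at hp
    have hp1 : (0:ℝ) < p.1 := hp.1
    simp only [polarCoord_symm_apply, smul_eq_mul, gaussianPDFReal, NNReal.coe_one, mul_one,
      sub_zero]
    have habs : |(p.1 * Real.cos p.2) ^ 2 * y₁ + (p.1 * Real.sin p.2) ^ 2 * y₂|
        = p.1 ^ 2 * |y₁ * Real.cos p.2 ^ 2 + y₂ * Real.sin p.2 ^ 2| := by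
      rw [show (p.1 * Real.cos p.2) ^ 2 * y₁ + (p.1 * Real.sin p.2) ^ 2 * y₂
        = p.1 ^ 2 * (y₁ * Real.cos p.2 ^ 2 + y₂ * Real.sin p.2 ^ 2) from by ring, abs_mul,
        abs_of_pos (pow_pos hp1 2)]
    have hexp : Real.exp (-(p.1 * Real.cos p.2) ^ 2 / 2) * Real.exp (-(p.1 * Real.sin p.2) ^ 2 / 2)
        = Real.exp (-p.1 ^ 2 / 2) := by
      rw [← Real.exp_add]; congr 1
      linear_combination (-(p.1 ^ 2) / 2) * Real.sin_sq_add_cos_sq p.2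
    have hs : ((√(2 * π))⁻¹) * ((√(2 * π))⁻¹) = (2 * π)⁻¹ := by
      rw [← mul_inv, Real.mul_self_sqrt (by positivity)]
    rw [habs]
    calc p.1 * ((√(2 * π))⁻¹ * Real.exp (-(p.1 * Real.cos p.2) ^ 2 / 2) *
          ((√(2 * π))⁻¹ * Real.exp (-(p.1 * Real.sin p.2) ^ 2 / 2)) *
          (p.1 ^ 2 * |y₁ * Real.cos p.2 ^ 2 + y₂ * Real.sin p.2 ^ 2|))
        = p.1 ^ 3 * ((Real.exp (-(p.1 * Real.cos p.2) ^ 2 / 2) *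
            Real.exp (-(p.1 * Real.sin p.2) ^ 2 / 2)) *
            (((√(2 * π))⁻¹ * (√(2 * π))⁻¹) * |y₁ * Real.cos p.2 ^ 2 + y₂ * Real.sin p.2 ^ 2|)) := by
          ring
      _ = _ := by rw [hexp, hs]; ring
  rw [setIntegral_congr_fun polarCoord.open_target.measurableSet hEq]
  rw [polarCoord_target, Measure.volume_eq_prod, ← Measure.prod_restrict]
  rw [MeasureTheory.integral_prod_mul (f := fun r : ℝ => r ^ 3 * Real.exp (-r ^ 2 / 2))
    (g := fun θ : ℝ => (2 * π)⁻¹ * |y₁ * Real.cos θ ^ 2 + y₂ * Real.sin θ ^ 2|)]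
  rw [my_radial, integral_const_mul, my_angular_sym]
  have hπ : π ≠ 0 := pi_ne_zero
  field_simp

/-- Explicit formula for `E[|v₁ y₁ + v₂ y₂|]` where `v₁, v₂` are i.i.d. χ²₁
(squares of independent standard normals), for `y₁ ≥ 0 ≥ y₂` (the case `y₂ = 0`
being interpreted by continuity as `y₁`). -/

theorem chi_squared_abs_expectation (y₁ y₂ : ℝ) (hy₁ : 0 ≤ y₁) (hy₂ : y₂ ≤ 0) :
    ∫ u : ℝ × ℝ, |u.1 ^ 2 * y₁ + u.2 ^ 2 * y₂|
        ∂((gaussianReal 0 1).prod (gaussianReal 0 1)) =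
      if y₂ = 0 then y₁
      else 4 / Real.pi * ((y₁ + y₂) * Real.arctan (Real.sqrt (-y₁ / y₂)) +
        Real.sqrt (-(y₁ * y₂))) - (y₁ + y₂) := by
  rw [my_reduction]
  by_cases h0 : y₂ = 0
  · subst h0
    rw [if_pos rfl]
    have hcongr : ∫ θ in (0:ℝ)..(π/2), |y₁ * Real.cos θ ^ 2 + 0 * Real.sin θ ^ 2|
        = ∫ θ in (0:ℝ)..(π/2), (y₁ * Real.cos θ ^ 2 + 0 * Real.sin θ ^ 2) := by
      refine intervalIntegral.integral_congr fun x _ =>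
        abs_of_nonneg (by nlinarith [sq_nonneg (Real.cos x)])
    rw [hcongr, my_FTC]
    rw [Real.sin_zero, Real.cos_zero, Real.sin_pi_div_two, Real.cos_pi_div_two]
    have hπ : π ≠ 0 := Real.pi_ne_zero
    field_simp
    ring
  · rw [if_neg h0, my_J y₁ y₂ hy₁ (lt_of_le_of_ne hy₂ h0)]
    have hπ : π ≠ 0 := Real.pi_ne_zero
    field_simp
end

section
/- Let ζ(y₁, y₂) = (4/π)[(y₁+y₂)·arctan(√(-y₁/y₂)) + √(-y₁y₂)] - (y₁+y₂) for y₁ > 0 > y₂. Then the solutions of ∂ζ/∂y₁(y₁, y₂) = 0 on ℝ₊₊ × ℝ₋₋ are exactly the pairs (c²y, -y) with y > 0, where c > 0 is the unique solution of π/4 = c/(1+c²) + arctan(c). -/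
/-- The outer function `ζ(y₁, y₂)` of the population objective. -/
noncomputable def zetaFn (y₁ y₂ : ℝ) : ℝ :=
  4 / Real.pi * ((y₁ + y₂) * Real.arctan (Real.sqrt (-y₁ / y₂)) + Real.sqrt (-(y₁ * y₂)))
    - (y₁ + y₂)

private lemma gfun_strictMono : StrictMono (fun x : ℝ => Real.arctan x + x / (1 + x ^ 2)) := by
  apply strictMono_of_deriv_pos
  intro x
  have hne : (1 + x ^ 2) ≠ 0 := by positivity
  have hd : HasDerivAt (fun x : ℝ => Real.arctan x + x / (1 + x ^ 2))
      (1 / (1 + x ^ 2) + (1 * (1 + x ^ 2) - x * (0 + 2 * x ^ 1)) / (1 + x ^ 2) ^ 2) x := by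
    exact (Real.hasDerivAt_arctan x).add
      ((hasDerivAt_id x).div ((hasDerivAt_const x 1).add (hasDerivAt_pow 2 x)) hne)
  rw [hd.deriv]
  rw [show (1 / (1 + x ^ 2) + (1 * (1 + x ^ 2) - x * (0 + 2 * x ^ 1)) / (1 + x ^ 2) ^ 2)
      = 2 / (1 + x ^ 2) ^ 2 by field_simp; ring]
  positivity

private lemma zeta_hasDerivAt (y₁ y₂ : ℝ) (h1 : 0 < y₁) (h2 : y₂ < 0) :
    HasDerivAt (fun t => zetaFn t y₂)
      (4 / Real.pi * ((1 * Real.arctan (Real.sqrt (-y₁ / y₂))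
        + (y₁ + y₂) * (1 / (1 + Real.sqrt (-y₁ / y₂) ^ 2)
            * (1 / (2 * Real.sqrt (-y₁ / y₂)) * (-1 / y₂))))
        + 1 / (2 * Real.sqrt (-(y₁ * y₂))) * (-y₂)) - 1) y₁ := by
  have hy₂ : y₂ ≠ 0 := ne_of_lt h2
  have hpos1 : (0:ℝ) < -y₁ / y₂ := by
    rw [neg_div]
    exact neg_pos.mpr (div_neg_of_pos_of_neg h1 h2)
  have hpos2 : (0:ℝ) < -(y₁ * y₂) := by nlinarith
  have hlin : HasDerivAt (fun t : ℝ => -t / y₂) (-1 / y₂) y₁ := by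
    simpa using ((hasDerivAt_id y₁).neg.div_const y₂)
  have hsqrt1 : HasDerivAt (fun t : ℝ => Real.sqrt (-t / y₂))
      (1 / (2 * Real.sqrt (-y₁ / y₂)) * (-1 / y₂)) y₁ :=
    (Real.hasDerivAt_sqrt (ne_of_gt hpos1)).comp y₁ hlin
  have harctan : HasDerivAt (fun t : ℝ => Real.arctan (Real.sqrt (-t / y₂)))
      (1 / (1 + Real.sqrt (-y₁ / y₂) ^ 2)
        * (1 / (2 * Real.sqrt (-y₁ / y₂)) * (-1 / y₂))) y₁ :=
    (Real.hasDerivAt_arctan _).comp y₁ hsqrt1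
  have hprod : HasDerivAt (fun t : ℝ => (t + y₂) * Real.arctan (Real.sqrt (-t / y₂)))
      (1 * Real.arctan (Real.sqrt (-y₁ / y₂))
        + (y₁ + y₂) * (1 / (1 + Real.sqrt (-y₁ / y₂) ^ 2)
            * (1 / (2 * Real.sqrt (-y₁ / y₂)) * (-1 / y₂)))) y₁ :=
    ((hasDerivAt_id y₁).add_const y₂).mul harctan
  have hlin2 : HasDerivAt (fun t : ℝ => -(t * y₂)) (-y₂) y₁ := by
    simpa [Pi.neg_def] using ((hasDerivAt_id y₁).mul_const y₂).neg
  have hsqrt2 : HasDerivAt (fun t : ℝ => Real.sqrt (-(t * y₂)))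
      (1 / (2 * Real.sqrt (-(y₁ * y₂))) * (-y₂)) y₁ :=
    (Real.hasDerivAt_sqrt (ne_of_gt hpos2)).comp y₁ hlin2
  have hsum := ((hprod.add hsqrt2).const_mul (4 / Real.pi)).sub
    ((hasDerivAt_id y₁).add_const y₂)
  simpa [zetaFn, Pi.sub_def] using hsum

/-- On `ℝ₊₊ × ℝ₋₋`, the solutions of `∂ζ/∂y₁(y₁, y₂) = 0` are exactly the pairs
`(c² y, -y)` with `y > 0`, where `c > 0` is the unique solution of
`π/4 = c/(1+c²) + arctan c`. -/
theorem partial_zeta_vanishes_iff (c : ℝ) (hc : 0 < c)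
    (hceq : Real.pi / 4 = c / (1 + c ^ 2) + Real.arctan c) :
    ∀ y₁ y₂ : ℝ, 0 < y₁ → y₂ < 0 →
      (deriv (fun t => zetaFn t y₂) y₁ = 0 ↔ y₁ = c ^ 2 * (-y₂)) := by
  intro y₁ y₂ hy₁ hy₂
  have hq : (0:ℝ) < -y₂ := by linarith
  set a := Real.sqrt (-y₁ / y₂) with ha
  have hpos1 : (0:ℝ) < -y₁ / y₂ := by
    rw [neg_div]
    exact neg_pos.mpr (div_neg_of_pos_of_neg hy₁ hy₂)
  have hapos : 0 < a := Real.sqrt_pos.mpr hpos1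
  have hsq : a ^ 2 = y₁ / (-y₂) := by
    rw [ha, Real.sq_sqrt hpos1.le]
    rw [neg_div, div_neg]
  have hy₁eq : y₁ = a ^ 2 * (-y₂) := by
    field_simp at hsq
    rw [hsq, neg_mul_neg, div_mul_cancel₀ _ (ne_of_lt hy₂)]
  have hb : Real.sqrt (-(y₁ * y₂)) = a * (-y₂) := by
    rw [show -(y₁ * y₂) = (a * (-y₂)) ^ 2 by rw [hy₁eq]; ring]
    exact Real.sqrt_sq (by positivity)
  have hderiv := (zeta_hasDerivAt y₁ y₂ hy₁ hy₂).deriv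
  rw [hderiv]
  have hval : 4 / Real.pi * ((1 * Real.arctan a
        + (y₁ + y₂) * (1 / (1 + a ^ 2) * (1 / (2 * a) * (-1 / y₂))))
        + 1 / (2 * Real.sqrt (-(y₁ * y₂))) * (-y₂)) - 1
      = 4 / Real.pi * (Real.arctan a + a / (1 + a ^ 2)) - 1 := by
    rw [hb, hy₁eq]
    have h1a : (1:ℝ) + a ^ 2 ≠ 0 := by positivity
    have hy₂ne : y₂ ≠ 0 := ne_of_lt hy₂
    congr 2
    field_simp
    ring
  rw [hval]
  have hπ : (0:ℝ) < Real.pi := Real.pi_pos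
  have hπne : Real.pi ≠ 0 := ne_of_gt hπ
  have hgc : Real.arctan c + c / (1 + c ^ 2) = Real.pi / 4 := by linarith [hceq]
  set G := Real.arctan a + a / (1 + a ^ 2) with hGdef
  clear_value G
  constructor
  · intro h0
    have hG : G = Real.pi / 4 := by
      have h1 : 4 / Real.pi * G = 1 := by linarith
      field_simp at h1
      linarith
    have hac : a = c := gfun_strictMono.injective (by
      show Real.arctan a + a / (1 + a ^ 2) = Real.arctan c + c / (1 + c ^ 2)
      rw [← hGdef, hG, hgc])
    rw [hy₁eq, hac]
  · intro h
    have hac : a = c := by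
      have hsq2 : a ^ 2 = c ^ 2 := by
        rw [hsq, h, mul_div_assoc, div_self (ne_of_gt hq), mul_one]
      calc a = Real.sqrt (a ^ 2) := (Real.sqrt_sq hapos.le).symm
        _ = Real.sqrt (c ^ 2) := by rw [hsq2]
        _ = c := Real.sqrt_sq hc.le
    have hG : G = Real.pi / 4 := by rw [hGdef, hac]; exact hgc
    rw [hG]
    field_simp
    norm_num
end

section
/- Let x, x̄ ∈ ℝ^d with x ∉ {x̄, -x̄}, set X = xx^T - x̄x̄^T, and let U₁, U_d be orthonormal eigenvectors of X for the largest eigenvalue λ₁(X) and smallest eigenvalue λ_d(X). Then span{x, x̄} ⊆ span{U₁, U_d} and ⟨x, x̄⟩ = ⟨U₁,x⟩⟨U₁,x̄⟩ + ⟨U_d,x⟩⟨U_d,x̄⟩. -/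
open scoped InnerProductSpace

lemma eig_iff {d : ℕ} (x xb v : EuclideanSpace ℝ (Fin d)) (μ : ℝ) :
    (∀ i, ∑ j, (x i * x j - xb i * xb j) * v j = μ * v i) ↔
    ⟪x, v⟫_ℝ • x - ⟪xb, v⟫_ℝ • xb = μ • v := by
  have hinner : ∀ w : EuclideanSpace ℝ (Fin d), ⟪w, v⟫_ℝ = ∑ j, w j * v j := by
    intro w; simp [PiLp.inner_apply, RCLike.inner_apply]; exact Finset.sum_congr rfl (fun _ _ => mul_comm _ _)
  constructor
  · intro h
    ext i
    have := h i
    simp only [PiLp.sub_apply, PiLp.smul_apply, smul_eq_mul, hinner]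
    rw [← this]
    simp [sub_mul, Finset.sum_sub_distrib, Finset.mul_sum, mul_comm, mul_left_comm]
    rw [← Finset.sum_sub_distrib, ← Finset.sum_sub_distrib]
    exact Finset.sum_congr rfl (fun j _ => by ring)
  · intro h i
    have := congrFun (congrArg (fun z : EuclideanSpace ℝ (Fin d) => (z : Fin d → ℝ)) h) i
    simp only [PiLp.sub_apply, PiLp.smul_apply, smul_eq_mul, hinner] at this
    rw [← this]
    simp [sub_mul, Finset.sum_sub_distrib, Finset.mul_sum, mul_comm, mul_left_comm]
    rw [← Finset.sum_sub_distrib, ← Finset.sum_sub_distrib]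
    exact Finset.sum_congr rfl (fun j _ => by ring)

lemma claim1 {d : ℕ} (x xb U v : EuclideanSpace ℝ (Fin d)) (l μ : ℝ)
    (hU : ‖U‖ = 1)
    (hUeq : ⟪x, U⟫_ℝ • x - ⟪xb, U⟫_ℝ • xb = l • U)
    (hv : v ≠ 0) (hUv : ⟪U, v⟫_ℝ = 0)
    (hveq : ⟪x, v⟫_ℝ • x - ⟪xb, v⟫_ℝ • xb = μ • v)
    (hμ : 0 < μ) (hμl : μ ≤ l) : False := by
  set a := ⟪x, U⟫_ℝ with ha
  set α := ⟪x, v⟫_ℝ with hα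
  set cU := ⟪xb, U⟫_ℝ with hcU
  set cv := ⟪xb, v⟫_ℝ with hcv
  have hUU : ⟪U, U⟫_ℝ = 1 := by
    rw [real_inner_self_eq_norm_sq, hU]; norm_num
  have hnv : 0 < ⟪v, v⟫_ℝ := by
    rw [real_inner_self_eq_norm_sq]
    exact pow_pos (norm_pos_iff.mpr hv) 2
  have hS : α • (l • U) - a • (μ • v) = (-(α * cU - a * cv)) • xb := by
    rw [← hUeq, ← hveq]; module
  have hI1 : α^2 * l + a^2 * μ * ⟪v, v⟫_ℝ = -(α * cU - a * cv)^2 := by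
    have := congrArg (fun z : EuclideanSpace ℝ (Fin d) => ⟪α • U - a • v, z⟫_ℝ) hS
    simp only [inner_sub_left, inner_sub_right, inner_smul_left, inner_smul_right,
      RCLike.conj_to_real, conj_trivial] at this
    have h2 : ⟪v, U⟫_ℝ = 0 := by rw [real_inner_comm]; exact hUv
    have h3 : ⟪U, xb⟫_ℝ = cU := by rw [hcU, real_inner_comm]
    have h4 : ⟪v, xb⟫_ℝ = cv := by rw [hcv, real_inner_comm]
    rw [hUU, h2, h3, h4, hUv] at this
    ring_nf at this ⊢
    linarith [this]
  have hI2 : μ * ⟪v, v⟫_ℝ = α^2 - cv^2 := by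
    have := congrArg (fun z : EuclideanSpace ℝ (Fin d) => ⟪v, z⟫_ℝ) hveq
    simp only [inner_sub_right, inner_smul_right] at this
    have h5 : ⟪v, x⟫_ℝ = α := by rw [hα, real_inner_comm]
    have h6 : ⟪v, xb⟫_ℝ = cv := by rw [hcv, real_inner_comm]
    rw [h5, h6] at this
    ring_nf at this ⊢
    linarith [this]
  nlinarith [sq_nonneg (α * cU - a * cv), sq_nonneg α, sq_nonneg a, sq_nonneg cv,
    mul_pos hμ hnv, mul_nonneg (sq_nonneg α) (sub_nonneg.mpr hμl),
    mul_pos (mul_pos hμ hμ) hnv, mul_nonneg (mul_nonneg (sq_nonneg a) hμ.le) hnv.le]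

set_option maxHeartbeats 2000000 in
/-- For `x ∉ {xb, -xb}` and orthonormal eigenvectors `U₁, Ud` of `X = x xᵀ - xb xbᵀ`
for the largest eigenvalue `l1 ≥ 0` and smallest eigenvalue `ld ≤ 0`, one has
`span{x, xb} ⊆ span{U₁, Ud}` and `⟨x, xb⟩ = ⟨U₁,x⟩⟨U₁,xb⟩ + ⟨Ud,x⟩⟨Ud,xb⟩`. -/
theorem span_and_correlation {d : ℕ} (x xb U₁ Ud : EuclideanSpace ℝ (Fin d)) (l1 ld : ℝ)
    (hx1 : x ≠ xb) (hx2 : x ≠ -xb)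
    (hU₁ : ‖U₁‖ = 1) (hUd : ‖Ud‖ = 1) (horth : ⟪U₁, Ud⟫_ℝ = 0)
    (hl1 : 0 ≤ l1) (hld : ld ≤ 0)
    (heig1 : ∀ i, ∑ j, (x i * x j - xb i * xb j) * U₁ j = l1 * U₁ i)
    (heigd : ∀ i, ∑ j, (x i * x j - xb i * xb j) * Ud j = ld * Ud i)
    (hextreme : ∀ (μ : ℝ) (v : EuclideanSpace ℝ (Fin d)), v ≠ 0 →
      (∀ i, ∑ j, (x i * x j - xb i * xb j) * v j = μ * v i) → ld ≤ μ ∧ μ ≤ l1) :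
    Submodule.span ℝ {x, xb} ≤ Submodule.span ℝ {U₁, Ud} ∧
    ⟪x, xb⟫_ℝ = ⟪U₁, x⟫_ℝ * ⟪U₁, xb⟫_ℝ + ⟪Ud, x⟫_ℝ * ⟪Ud, xb⟫_ℝ := by
  have hUU : ⟪U₁, U₁⟫_ℝ = 1 := by rw [real_inner_self_eq_norm_sq, hU₁]; norm_num
  have hdd : ⟪Ud, Ud⟫_ℝ = 1 := by rw [real_inner_self_eq_norm_sq, hUd]; norm_num
  have horth' : ⟪Ud, U₁⟫_ℝ = 0 := by rw [real_inner_comm]; exact horth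
  set a := ⟪U₁, x⟫_ℝ with ha
  set b := ⟪Ud, x⟫_ℝ with hb
  set c := ⟪U₁, xb⟫_ℝ with hc
  set e := ⟪Ud, xb⟫_ℝ with he
  have hE1 : a • x - c • xb = l1 • U₁ := by
    have h := (eig_iff x xb U₁ l1).mp heig1
    rwa [real_inner_comm U₁ x, real_inner_comm U₁ xb, ← ha, ← hc] at h
  have hEd : b • x - e • xb = ld • Ud := by
    have h := (eig_iff x xb Ud ld).mp heigd
    rwa [real_inner_comm Ud x, real_inner_comm Ud xb, ← hb, ← he] at h
  set y := x - a • U₁ - b • Ud with hydef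
  set z := xb - c • U₁ - e • Ud with hzdef
  have hxy : x = y + a • U₁ + b • Ud := by rw [hydef]; module
  have hxbz : xb = z + c • U₁ + e • Ud := by rw [hzdef]; module
  have hU1y : ⟪U₁, y⟫_ℝ = 0 := by
    rw [hydef]; simp [inner_sub_right, inner_smul_right, hUU, horth, ha, hU₁]
  have hUdy : ⟪Ud, y⟫_ℝ = 0 := by
    rw [hydef]; simp [inner_sub_right, inner_smul_right, hdd, horth', hb, hUd]
  have hU1z : ⟪U₁, z⟫_ℝ = 0 := by
    rw [hzdef]; simp [inner_sub_right, inner_smul_right, hUU, horth, hc, hU₁]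
  have hUdz : ⟪Ud, z⟫_ℝ = 0 := by
    rw [hzdef]; simp [inner_sub_right, inner_smul_right, hdd, horth', he, hUd]
  have hxyi : ⟪x, y⟫_ℝ = ⟪y, y⟫_ℝ := by
    nth_rewrite 1 [hxy]
    simp [inner_add_left, inner_smul_left, hU1y, hUdy]
  have hxzi : ⟪x, z⟫_ℝ = ⟪y, z⟫_ℝ := by
    nth_rewrite 1 [hxy]
    simp [inner_add_left, inner_smul_left, hU1z, hUdz]
  have hxbyi : ⟪xb, y⟫_ℝ = ⟪y, z⟫_ℝ := by
    nth_rewrite 1 [hxbz]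
    simp only [inner_add_left, inner_smul_left, RCLike.conj_to_real, conj_trivial,
      hU1y, hUdy]
    rw [real_inner_comm y z]
    ring
  have hxbzi : ⟪xb, z⟫_ℝ = ⟪z, z⟫_ℝ := by
    nth_rewrite 1 [hxbz]
    simp [inner_add_left, inner_smul_left, hU1z, hUdz]
  set s := ⟪y, y⟫_ℝ with hsdef
  set t := ⟪z, z⟫_ℝ with htdef
  set p := ⟪y, z⟫_ℝ with hpdef
  have hzy : ⟪z, y⟫_ℝ = p := by rw [hpdef, real_inner_comm]
  have R1 : a * s = c * p := by
    have h := congrArg (fun w : EuclideanSpace ℝ (Fin d) => ⟪w, y⟫_ℝ) hE1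
    simp only [inner_sub_left, inner_smul_left, RCLike.conj_to_real, conj_trivial] at h
    rw [hxyi, hxbyi, hU1y] at h
    linarith only [h]
  have R2 : a * p = c * t := by
    have h := congrArg (fun w : EuclideanSpace ℝ (Fin d) => ⟪w, z⟫_ℝ) hE1
    simp only [inner_sub_left, inner_smul_left, RCLike.conj_to_real, conj_trivial] at h
    rw [hxzi, hxbzi, hU1z] at h
    linarith only [h]
  have R3 : b * s = e * p := by
    have h := congrArg (fun w : EuclideanSpace ℝ (Fin d) => ⟪w, y⟫_ℝ) hEd
    simp only [inner_sub_left, inner_smul_left, RCLike.conj_to_real, conj_trivial] at h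
    rw [hxyi, hxbyi, hUdy] at h
    linarith only [h]
  have R4 : b * p = e * t := by
    have h := congrArg (fun w : EuclideanSpace ℝ (Fin d) => ⟪w, z⟫_ℝ) hEd
    simp only [inner_sub_left, inner_smul_left, RCLike.conj_to_real, conj_trivial] at h
    rw [hxzi, hxbzi, hUdz] at h
    linarith only [h]
  have hs0 : 0 ≤ s := real_inner_self_nonneg
  have ht0 : 0 ≤ t := real_inner_self_nonneg
  have hCS : p * p ≤ s * t := real_inner_mul_inner_self_le y z
  have hU1ne : U₁ ≠ 0 := by
    intro h; rw [h, norm_zero] at hU₁; norm_num at hU₁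
  have hmain : y = 0 ∧ z = 0 := by
    by_contra hcon
    by_cases hlt : p * p < s * t
    · -- linearly independent case
      have hsp : 0 < s := by nlinarith only [hlt, hs0, ht0, mul_self_nonneg p]
      have htp : 0 < t := by nlinarith only [hlt, hs0, ht0, mul_self_nonneg p]
      have ha0 : a = 0 := by
        have h : a * (s * t - p * p) = 0 := by linear_combination t * R1 - p * R2
        rcases mul_eq_zero.mp h with h' | h'
        · exact h'
        · exact absurd h' (by linarith only [hlt])
      have hb0 : b = 0 := by
        have h : b * (s * t - p * p) = 0 := by linear_combination t * R3 - p * R4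
        rcases mul_eq_zero.mp h with h' | h'
        · exact h'
        · exact absurd h' (by linarith only [hlt])
      have hc0 : c = 0 := by
        have h := R2; rw [ha0, zero_mul] at h
        exact (mul_eq_zero.mp h.symm).resolve_right htp.ne'
      have he0 : e = 0 := by
        have h := R4; rw [hb0, zero_mul] at h
        exact (mul_eq_zero.mp h.symm).resolve_right htp.ne'
      have hl10 : l1 = 0 := by
        rw [ha0, hc0] at hE1
        simp only [zero_smul, sub_zero] at hE1
        rcases smul_eq_zero.mp hE1.symm with h' | h'
        · exact h'
        · exact absurd h' hU1ne
      have hxy0 : x = y := by rw [hxy, ha0, hb0]; simp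
      have hxbz0 : xb = z := by rw [hxbz, hc0, he0]; simp
      by_cases hp : p = 0
      · have hyne : y ≠ 0 := by
          intro h; rw [hsdef, h, inner_zero_left] at hsp; exact lt_irrefl 0 hsp
        have heq : ⟪x, y⟫_ℝ • x - ⟪xb, y⟫_ℝ • xb = s • y := by
          rw [hxyi, hxbyi, hp, hxy0]
          module
        have hb1 := (hextreme s y hyne ((eig_iff x xb y s).mpr heq)).2
        linarith only [hb1, hsp, hl10]
      · set D := Real.sqrt ((s + t)^2 - 4 * p^2) with hDdef
        have hD0 : 0 ≤ (s + t)^2 - 4 * p^2 := by nlinarith only [hlt, hs0, ht0, sq_nonneg (s - t), sq_nonneg (s + t), sq_nonneg p, mul_self_nonneg p]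
        have hDsq : D^2 = (s + t)^2 - 4 * p^2 := Real.sq_sqrt hD0
        have hDnn : 0 ≤ D := Real.sqrt_nonneg _
        set μ := (s - t + D) / 2 with hμdef
        have hμpos : 0 < μ := by
          rw [hμdef]
          nlinarith only [hDsq, hDnn, hlt, hs0, ht0, mul_self_nonneg p, sq_nonneg (s - t), sq_nonneg (D - (t - s)), sq_nonneg (D + (t - s))]
        have hchar : μ^2 - (s - t) * μ + (p * p - s * t) = 0 := by
          rw [hμdef]; linear_combination hDsq / 4
        set v := p • y + (μ - s) • z with hvdef
        have hyv : ⟪y, v⟫_ℝ = p * μ := by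
          rw [hvdef]
          simp only [inner_add_right, inner_smul_right]
          rw [← hsdef, ← hpdef]; ring
        have hvne : v ≠ 0 := by
          intro h
          rw [h, inner_zero_right] at hyv
          exact (mul_ne_zero hp hμpos.ne') hyv.symm
        have hxv : ⟪x, v⟫_ℝ = p * μ := by
          rw [hvdef]
          simp only [inner_add_right, inner_smul_right]
          rw [hxyi, hxzi]; ring
        have hxbv : ⟪xb, v⟫_ℝ = -(μ * (μ - s)) := by
          rw [hvdef]
          simp only [inner_add_right, inner_smul_right]
          rw [hxbyi, hxbzi]
          linear_combination hchar
        have heq : ⟪x, v⟫_ℝ • x - ⟪xb, v⟫_ℝ • xb = μ • v := by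
          rw [hxv, hxbv, hvdef, hxy0, hxbz0]
          module
        have hb1 := (hextreme μ v hvne ((eig_iff x xb v μ).mpr heq)).2
        linarith only [hb1, hμpos, hl10]
    · -- Cauchy-Schwarz equality case
      have hpst : p * p = s * t := le_antisymm hCS (not_lt.mp hlt)
      by_cases ht : t = 0
      · have hz0 : z = 0 := by
          have h : ⟪z, z⟫_ℝ = 0 := by rw [← htdef]; exact ht
          exact inner_self_eq_zero.mp h
        have hp0 : p = 0 := by
          have h : p * p = 0 := by rw [hpst, ht, mul_zero]
          exact mul_self_eq_zero.mp h
        have hyne : y ≠ 0 := fun h => hcon ⟨h, hz0⟩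
        have hsne : s ≠ 0 := by
          rw [hsdef]; exact fun h => hyne (inner_self_eq_zero.mp h)
        have hsp : 0 < s := lt_of_le_of_ne hs0 (Ne.symm hsne)
        have ha0 : a = 0 := by
          have h := R1; rw [hp0, mul_zero] at h
          exact (mul_eq_zero.mp h).resolve_right hsne
        have hb0 : b = 0 := by
          have h := R3; rw [hp0, mul_zero] at h
          exact (mul_eq_zero.mp h).resolve_right hsne
        have hxy0 : x = y := by rw [hxy, ha0, hb0]; simp
        have heq : ⟪x, y⟫_ℝ • x - ⟪xb, y⟫_ℝ • xb = s • y := by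
          rw [hxyi, hxbyi, hp0, hxy0]
          module
        have hE1' : ⟪x, U₁⟫_ℝ • x - ⟪xb, U₁⟫_ℝ • xb = l1 • U₁ := by
          rw [real_inner_comm U₁ x, real_inner_comm U₁ xb, ← ha, ← hc]; exact hE1
        have hbnd := (hextreme s y hyne ((eig_iff x xb y s).mpr heq)).2
        exact claim1 x xb U₁ y l1 s hU₁ hE1' hyne hU1y heq hsp hbnd
      · have htp : 0 < t := lt_of_le_of_ne ht0 (Ne.symm ht)
        set k := p / t with hkdef
        have hkp : p = k * t := by rw [hkdef]; field_simp
        have hseq : s = k * k * t := by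
          have h := hpst
          rw [hkp] at h
          have h2 : (k * k * t) * t = s * t := by linear_combination h
          exact (mul_right_cancel₀ ht h2).symm
        have hyz : y = k • z := by
          have h0 : ⟪y - k • z, y - k • z⟫_ℝ = 0 := by
            simp only [inner_sub_left, inner_sub_right, inner_smul_left, inner_smul_right,
              RCLike.conj_to_real, conj_trivial]
            rw [← hsdef, ← htdef, ← hpdef, hzy]
            rw [hkp, hseq]; ring
          exact sub_eq_zero.mp (inner_self_eq_zero.mp h0)
        have hck : c = a * k := by
          have h := R2
          rw [hkp] at h
          have h2 : (a * k) * t = c * t := by linear_combination h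
          exact (mul_right_cancel₀ ht h2).symm
        have hek : e = b * k := by
          have h := R4
          rw [hkp] at h
          have h2 : (b * k) * t = e * t := by linear_combination h
          exact (mul_right_cancel₀ ht h2).symm
        have hzne : z ≠ 0 := by
          intro h; rw [htdef, h, inner_zero_left] at htp; exact lt_irrefl 0 htp
        have heqz : ⟪x, z⟫_ℝ • x - ⟪xb, z⟫_ℝ • xb = ((k * k - 1) * t) • z := by
          rw [hxzi, hxbzi, hxy, hxbz, hyz, hck, hek, hkp]
          module
        by_cases hk1 : k * k = 1
        · have h : (k - 1) * (k + 1) = 0 := by linear_combination hk1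
          rcases mul_eq_zero.mp h with h' | h'
          · have hk : k = 1 := by linarith only [h']
            apply hx1
            rw [hxy, hxbz, hyz, hck, hek, hk]
            module
          · have hk : k = -1 := by linarith only [h']
            apply hx2
            rw [hxy, hxbz, hyz, hck, hek, hk]
            module
        · set μz := (k * k - 1) * t with hμzdef
          have hμzne : μz ≠ 0 := by
            rw [hμzdef]
            exact mul_ne_zero (sub_ne_zero.mpr hk1) ht
          have hbnds := hextreme μz z hzne ((eig_iff x xb z μz).mpr heqz)
          rcases lt_or_gt_of_ne hμzne with hneg | hpos
          · have hEd' : ⟪xb, Ud⟫_ℝ • xb - ⟪x, Ud⟫_ℝ • x = (-ld) • Ud := by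
              rw [real_inner_comm Ud xb, real_inner_comm Ud x, ← hb, ← he, neg_smul, ← hEd]
              module
            have heqz' : ⟪xb, z⟫_ℝ • xb - ⟪x, z⟫_ℝ • x = (-μz) • z := by
              rw [neg_smul, ← heqz]
              module
            have h1 : 0 < -μz := by linarith only [hneg]
            have h2 : -μz ≤ -ld := by linarith only [hbnds.1]
            exact claim1 xb x Ud z (-ld) (-μz) hUd hEd' hzne hUdz heqz' h1 h2
          · have hE1' : ⟪x, U₁⟫_ℝ • x - ⟪xb, U₁⟫_ℝ • xb = l1 • U₁ := by
              rw [real_inner_comm U₁ x, real_inner_comm U₁ xb, ← ha, ← hc]; exact hE1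
            exact claim1 x xb U₁ z l1 μz hU₁ hE1' hzne hU1z heqz hpos hbnds.2
  obtain ⟨hy0, hz0⟩ := hmain
  have hxeq : x = a • U₁ + b • Ud := by rw [hxy, hy0]; module
  have hxbeq : xb = c • U₁ + e • Ud := by rw [hxbz, hz0]; module
  constructor
  · apply Submodule.span_le.mpr
    intro w hw
    simp only [Set.mem_insert_iff, Set.mem_singleton_iff] at hw
    rcases hw with rfl | rfl
    · exact Submodule.mem_span_pair.mpr ⟨a, b, hxeq.symm⟩
    · exact Submodule.mem_span_pair.mpr ⟨c, e, hxbeq.symm⟩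
  · nth_rewrite 1 [hxeq, hxbeq]
    simp only [inner_add_left, inner_add_right, inner_smul_left, inner_smul_right,
      RCLike.conj_to_real, conj_trivial]
    rw [hUU, hdd, horth, horth']
    ring
end

section
/- Let f, g: ℝ^d → ℝ be lower semicontinuous functions, let l, u: ℝ^d → ℝ with l constant, and suppose l(y) ≤ f(y) - g(y) ≤ u(y) for all y. Let (x, v) satisfy the ρ-weak-convexity subgradient inequality g(y) ≥ g(x) + ⟨v, y-x⟩ - (ρ/2)‖y-x‖² for all y. Then dist((x,v), gph ∂f) ≤ √(4(ρ + √(2+ρ²)))·√(u(x) - l(x)), where gph ∂f = {(z,w) : w ∈ ∂f(z)}. -/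
open scoped InnerProductSpace

/-- A lower semicontinuous function bounded below attains its minimum on a nonempty
compact set (in a metric space, via sequential compactness). -/
lemma exists_min_of_lsc {X : Type*} [MetricSpace X] {K : Set X} (hK : IsCompact K)
    (hne : K.Nonempty) {h : X → ℝ} (hh : LowerSemicontinuous h) (C : ℝ)
    (hbd : ∀ y, C ≤ h y) : ∃ z ∈ K, ∀ y ∈ K, h z ≤ h y := by
  set A := h '' K with hA
  have hAne : A.Nonempty := hne.image h
  have hAbd : BddBelow A := ⟨C, by rintro a ⟨y, _, rfl⟩; exact hbd y⟩
  set m := sInf A with hm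
  have hy : ∀ n : ℕ, ∃ y ∈ K, h y < m + 1 / (n + 1) := by
    intro n
    have hpos : (0 : ℝ) < 1 / (n + 1) := by positivity
    obtain ⟨a, haA, ha⟩ := exists_lt_of_csInf_lt hAne (by linarith : sInf A < m + 1 / (n + 1))
    obtain ⟨y, hyK, rfl⟩ := haA
    exact ⟨y, hyK, ha⟩
  choose ys hysK hys using hy
  obtain ⟨z, hzK, φ, hφ, hlim⟩ := hK.tendsto_subseq hysK
  refine ⟨z, hzK, fun y hyK => ?_⟩
  have hm_le : m ≤ h y := csInf_le hAbd ⟨y, hyK, rfl⟩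
  refine le_trans ?_ hm_le
  by_contra hc
  push_neg at hc
  obtain ⟨c, hc1, hc2⟩ := exists_between hc
  have hev : ∀ᶠ n in Filter.atTop, c < h (ys (φ n)) := hlim.eventually (hh z c hc2)
  have htend0 : Filter.Tendsto (fun n : ℕ => (1 : ℝ) / (n + 1)) Filter.atTop (nhds 0) :=
    tendsto_one_div_add_atTop_nhds_zero_nat
  have htend : Filter.Tendsto (fun n : ℕ => m + 1 / ((φ n : ℝ) + 1)) Filter.atTop (nhds m) := by
    have := (htend0.comp hφ.tendsto_atTop).const_add m
    simpa using this
  have hev2 : ∀ᶠ n in Filter.atTop, m + 1 / ((φ n : ℝ) + 1) < c :=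
    htend.eventually_lt_const hc1
  obtain ⟨n, h1, h2⟩ := (hev.and hev2).exists
  have h3 := hys (φ n)
  linarith

set_option maxHeartbeats 1000000 in
/-- Comparison theorem with constant lower bound `l`: if `l ≤ f - g ≤ u` and `(x, v)`
satisfies the ρ-weak-convexity subgradient inequality for `g`, then the (Euclidean
product) distance of `(x, v)` to the graph of `∂f` is at most
`√(4(ρ + √(2+ρ²)))·√(u(x) - l)`. -/
theorem comparison_theorem_constant_lower
    {d : ℕ} (f g : EuclideanSpace ℝ (Fin d) → ℝ)
    (hf : LowerSemicontinuous f) (hg : LowerSemicontinuous g)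
    (l : ℝ) (u : EuclideanSpace ℝ (Fin d) → ℝ) (ρ : ℝ) (hρ : 0 ≤ ρ)
    (hlu : ∀ y, l ≤ f y - g y ∧ f y - g y ≤ u y)
    (x v : EuclideanSpace ℝ (Fin d))
    (hwc : ∀ y, g y ≥ g x + ⟪v, y - x⟫_ℝ - ρ / 2 * ‖y - x‖ ^ 2) :
    ∃ z w, w ∈ limitingSubdiff f z ∧
      Real.sqrt (‖z - x‖ ^ 2 + ‖w - v‖ ^ 2) ≤
        Real.sqrt (4 * (ρ + Real.sqrt (2 + ρ ^ 2))) * Real.sqrt (u x - l) := by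
  obtain ⟨hlx, hux'⟩ := hlu x
  have hux : 0 ≤ u x - l := by linarith
  obtain ⟨s, hs_def⟩ : ∃ s', s' = Real.sqrt (2 + ρ ^ 2) := ⟨_, rfl⟩
  have hs2 : s ^ 2 = 2 + ρ ^ 2 := by rw [hs_def]; exact Real.sq_sqrt (by positivity)
  have hs_pos : 0 < s := by rw [hs_def]; exact Real.sqrt_pos.mpr (by positivity)
  obtain ⟨lam, hlam_def⟩ : ∃ lam', lam' = ρ + s := ⟨_, rfl⟩
  have hlam_pos : 0 < lam := by rw [hlam_def]; linarith
  obtain ⟨h, hh_def⟩ : ∃ h' : EuclideanSpace ℝ (Fin d) → ℝ,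
      h' = fun y => f y + (lam / 2 * ‖y - x‖ ^ 2 - ⟪v, y - x⟫_ℝ) := ⟨_, rfl⟩
  have hcont : Continuous fun y : EuclideanSpace ℝ (Fin d) =>
      lam / 2 * ‖y - x‖ ^ 2 - ⟪v, y - x⟫_ℝ := by
    apply Continuous.sub
    · exact continuous_const.mul (((continuous_id.sub continuous_const)).norm.pow 2)
    · exact continuous_const.inner (continuous_id.sub continuous_const)
  have hh_lsc : LowerSemicontinuous h := by
    rw [hh_def]; exact hf.add hcont.lowerSemicontinuous
  have hlow : ∀ y, g x + l + s / 2 * ‖y - x‖ ^ 2 ≤ h y := by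
    intro y
    have h1 := (hlu y).1
    have h2 := hwc y
    have h3 : lam / 2 * ‖y - x‖ ^ 2 - ρ / 2 * ‖y - x‖ ^ 2 = s / 2 * ‖y - x‖ ^ 2 := by
      rw [hlam_def]; ring
    simp only [hh_def]
    linarith
  obtain ⟨R, hR_def⟩ : ∃ R', R' = Real.sqrt (2 * (u x - l) / s) := ⟨_, rfl⟩
  have hR_nonneg : 0 ≤ R := by rw [hR_def]; exact Real.sqrt_nonneg _
  have hR2 : R ^ 2 = 2 * (u x - l) / s := by
    rw [hR_def]; exact Real.sq_sqrt (by positivity)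
  have hsR : s / 2 * R ^ 2 = u x - l := by
    rw [hR2]; field_simp
  obtain ⟨z, hzK, hzmin⟩ := exists_min_of_lsc (isCompact_closedBall x R)
    ⟨x, Metric.mem_closedBall_self hR_nonneg⟩ hh_lsc (g x + l)
    (fun y => le_trans (by nlinarith [sq_nonneg ‖y - x‖]) (hlow y))
  have hhx : h x = f x := by
    simp only [hh_def, sub_self, norm_zero, inner_zero_right]
    ring
  have hglobal : ∀ y, h z ≤ h y := by
    intro y
    by_cases hy : y ∈ Metric.closedBall x R
    · exact hzmin y hy
    · have hy' : R < ‖y - x‖ := by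
        simp only [Metric.mem_closedBall, dist_eq_norm, not_le] at hy
        exact hy
      have h1 : h z ≤ h x := hzmin x (Metric.mem_closedBall_self hR_nonneg)
      have h2 : h z ≤ g x + l + s / 2 * R ^ 2 := by
        rw [hhx] at h1; rw [hsR]; linarith
      have h3 := hlow y
      have h4 : s / 2 * R ^ 2 ≤ s / 2 * ‖y - x‖ ^ 2 :=
        mul_le_mul_of_nonneg_left (by nlinarith) (by positivity)
      linarith
  obtain ⟨w, hw_def⟩ : ∃ w', w' = v - lam • (z - x) := ⟨_, rfl⟩
  have hkey : ∀ y, f y ≥ f z + ⟪w, y - z⟫_ℝ - lam / 2 * ‖y - z‖ ^ 2 := by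
    intro y
    have h1 := hglobal y
    have hsplit : y - x = (y - z) + (z - x) := by abel
    have hexp : ‖y - x‖ ^ 2 = ‖y - z‖ ^ 2 + 2 * ⟪y - z, z - x⟫_ℝ + ‖z - x‖ ^ 2 := by
      rw [hsplit]; exact norm_add_sq_real _ _
    have hsym : ⟪y - z, z - x⟫_ℝ = ⟪z - x, y - z⟫_ℝ := real_inner_comm _ _
    have hexp' : lam / 2 * ‖y - x‖ ^ 2
        = lam / 2 * ‖y - z‖ ^ 2 + lam * ⟪z - x, y - z⟫_ℝ + lam / 2 * ‖z - x‖ ^ 2 := by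
      rw [hexp, hsym]; ring
    have hwin : ⟪w, y - z⟫_ℝ = ⟪v, y - z⟫_ℝ - lam * ⟪z - x, y - z⟫_ℝ := by
      rw [hw_def, inner_sub_left, real_inner_smul_left]
    have hvsplit : ⟪v, y - x⟫_ℝ = ⟪v, y - z⟫_ℝ + ⟪v, z - x⟫_ℝ := by
      rw [hsplit, inner_add_right]
    simp only [hh_def] at h1
    linarith
  have hwF : w ∈ frechetSubdiff f z := by
    intro ε hε
    refine ⟨2 * ε / lam, by positivity, fun y hy => ?_⟩
    have hn : (0 : ℝ) ≤ ‖y - z‖ := norm_nonneg _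
    have hδ : lam / 2 * (2 * ε / lam) = ε := by field_simp
    have hmm : ‖y - z‖ * ‖y - z‖ ≤ (2 * ε / lam) * ‖y - z‖ :=
      mul_le_mul_of_nonneg_right hy.le hn
    have hmm2 : lam / 2 * (‖y - z‖ * ‖y - z‖) ≤ lam / 2 * ((2 * ε / lam) * ‖y - z‖) :=
      mul_le_mul_of_nonneg_left hmm (by positivity)
    have hmm3 : lam / 2 * ((2 * ε / lam) * ‖y - z‖) = ε * ‖y - z‖ := by
      rw [← mul_assoc, hδ]
    have hfin : lam / 2 * ‖y - z‖ ^ 2 ≤ ε * ‖y - z‖ := by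
      rw [pow_two]; linarith
    linarith [hkey y]
  have hwL : w ∈ limitingSubdiff f z :=
    ⟨fun _ => z, fun _ => w, fun _ => hwF, tendsto_const_nhds, tendsto_const_nhds,
      tendsto_const_nhds⟩
  refine ⟨z, w, hwL, ?_⟩
  have hzx : ‖z - x‖ ≤ R := by
    simpa [dist_eq_norm] using hzK
  have hwv : ‖w - v‖ = lam * ‖z - x‖ := by
    have hwe : w - v = -(lam • (z - x)) := by rw [hw_def]; abel
    rw [hwe, norm_neg, norm_smul, Real.norm_eq_abs, abs_of_pos hlam_pos]
  have hb : ‖z - x‖ ^ 2 + ‖w - v‖ ^ 2 ≤ 4 * (ρ + s) * (u x - l) := by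
    have h1 : ‖z - x‖ ^ 2 ≤ R ^ 2 := by nlinarith [norm_nonneg (z - x)]
    have hcomb : (1 + lam ^ 2) * R ^ 2 = (1 + (ρ + s) ^ 2) * (2 * (u x - l)) / s := by
      rw [hR2, hlam_def]; ring
    have key : (1 + lam ^ 2) * R ^ 2 ≤ 4 * (ρ + s) * (u x - l) := by
      rw [hcomb, div_le_iff₀ hs_pos]
      nlinarith [hux, hs2, mul_nonneg hux hs_pos.le]
    rw [hwv]
    have h2 : ‖z - x‖ ^ 2 + (lam * ‖z - x‖) ^ 2 = (1 + lam ^ 2) * ‖z - x‖ ^ 2 := by ring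
    have h3 : (1 + lam ^ 2) * ‖z - x‖ ^ 2 ≤ (1 + lam ^ 2) * R ^ 2 :=
      mul_le_mul_of_nonneg_left h1 (by positivity)
    linarith
  have hfin := Real.sqrt_le_sqrt hb
  rw [hs_def] at hfin
  calc Real.sqrt (‖z - x‖ ^ 2 + ‖w - v‖ ^ 2)
      ≤ Real.sqrt (4 * (ρ + Real.sqrt (2 + ρ ^ 2)) * (u x - l)) := hfin
    _ = Real.sqrt (4 * (ρ + Real.sqrt (2 + ρ ^ 2))) * Real.sqrt (u x - l) :=
        Real.sqrt_mul (by positivity) _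
end

section
/- Let f, g: ℝ^d → ℝ be lower semicontinuous, l: ℝ^d → ℝ locally Lipschitz, and u: ℝ^d → ℝ, with l(y) ≤ f(y) - g(y) ≤ u(y) for all y. Suppose (x,v) satisfies g(y) ≥ g(x) + ⟨v, y-x⟩ - (ρ/2)‖y-x‖² for all y. Then for every γ > 0 there exists x̂ with ‖x̂ - x‖ ≤ 2γ and dist(v, ∂f(x̂)) ≤ 2ργ + (u(x) - l(x))/γ + lip(l; x̂), where lip(l; x̂) = limsup_{y→x̂} |l(y)-l(x̂)|/‖y-x̂‖. -/
open scoped InnerProductSpace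

/-- The local Lipschitz constant `lip(l; x) = limsup_{y → x} |l(y) - l(x)|/‖y - x‖`. -/
noncomputable def lipAt {d : ℕ} (l : EuclideanSpace ℝ (Fin d) → ℝ)
    (x : EuclideanSpace ℝ (Fin d)) : ℝ :=
  Filter.limsup (fun y => |l y - l x| / ‖y - x‖) (nhdsWithin x {x}ᶜ)

open scoped InnerProductSpace
open Filter Metric Set

/-- A lower semicontinuous function attains its minimum on a nonempty compact set. -/
lemma lsc_exists_min_on_compact {X : Type*} [MetricSpace X] {S : Set X}
    (hS : IsCompact S) (hne : S.Nonempty) {f : X → ℝ} (hf : LowerSemicontinuous f) :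
    ∃ z ∈ S, ∀ y ∈ S, f z ≤ f y := by
  by_cases hbdd : BddBelow (f '' S)
  · set m := sInf (f '' S) with hm
    have key : ∀ n : ℕ, ∃ p, p ∈ S ∧ f p < m + 1 / (n + 1) := by
      intro n
      have hlt : m < m + 1 / (n + 1) := by
        have : (0:ℝ) < 1 / (n + 1) := by positivity
        linarith
      obtain ⟨a, ⟨p, hp, rfl⟩, ha⟩ := exists_lt_of_csInf_lt (hne.image f) hlt
      exact ⟨p, hp, ha⟩
    choose p hpS hpf using key
    obtain ⟨z, hzS, φ, hφ, hconv⟩ := hS.tendsto_subseq hpS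
    refine ⟨z, hzS, fun y hy => ?_⟩
    have hmz : f z ≤ m := by
      by_contra h
      push_neg at h
      obtain ⟨c, hc1, hc2⟩ := exists_between h
      have hev : ∀ᶠ n in atTop, c < f (p (φ n)) := hconv.eventually (hf z c hc2)
      have hev2 : ∀ᶠ n in atTop, c ≤ m + 1 / (φ n + 1) :=
        hev.mono fun n hn => le_of_lt (hn.trans (hpf (φ n)))
      have htend : Tendsto (fun n : ℕ => m + 1 / ((φ n : ℝ) + 1)) atTop (nhds m) := by
        have h1 : Tendsto (fun n : ℕ => 1 / ((φ n : ℝ) + 1)) atTop (nhds 0) :=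
          tendsto_one_div_add_atTop_nhds_zero_nat.comp hφ.tendsto_atTop
        simpa using tendsto_const_nhds.add h1
      exact absurd (ge_of_tendsto htend hev2) (not_le.2 hc1)
    exact hmz.trans (csInf_le hbdd ⟨y, hy, rfl⟩)
  · exfalso
    have key : ∀ n : ℕ, ∃ p, p ∈ S ∧ f p < -n := by
      intro n
      rw [not_bddBelow_iff] at hbdd
      obtain ⟨a, ⟨q, hq, rfl⟩, ha⟩ := hbdd (-n)
      exact ⟨q, hq, ha⟩
    choose p hpS hpf using key
    obtain ⟨z, hzS, φ, hφ, hconv⟩ := hS.tendsto_subseq hpS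
    have hev : ∀ᶠ n in atTop, f z - 1 < f (p (φ n)) :=
      hconv.eventually (hf z (f z - 1) (by linarith))
    set N : ℕ := ⌈|f z|⌉₊ + 2 with hN
    obtain ⟨n, hn1, hn2⟩ := (hev.and (eventually_ge_atTop N)).exists
    have hcast : ((N : ℕ) : ℝ) ≤ (n : ℝ) := by exact_mod_cast hn2
    have hphin : (n : ℝ) ≤ (φ n : ℝ) := by exact_mod_cast hφ.le_apply
    have hceil : |f z| ≤ (⌈|f z|⌉₊ : ℝ) := Nat.le_ceil _
    have hNval : ((N : ℕ) : ℝ) = (⌈|f z|⌉₊ : ℝ) + 2 := by push_cast [hN]; ring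
    have h1 : f z - 1 < f (p (φ n)) := hn1
    have h2 : f (p (φ n)) < -(φ n : ℝ) := hpf (φ n)
    have h3 : -|f z| ≤ f z := neg_abs_le (f z)
    linarith

lemma frechet_subset_limiting {d : ℕ} (f : EuclideanSpace ℝ (Fin d) → ℝ)
    (x : EuclideanSpace ℝ (Fin d)) : frechetSubdiff f x ⊆ limitingSubdiff f x := by
  intro w hw
  exact ⟨fun _ => x, fun _ => w, fun _ => hw, tendsto_const_nhds, tendsto_const_nhds,
    tendsto_const_nhds⟩

set_option maxHeartbeats 1000000 in
lemma keyA {d : ℕ} (f : EuclideanSpace ℝ (Fin d) → ℝ) (hf : LowerSemicontinuous f)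
    (z w : EuclideanSpace ℝ (Fin d)) (M C r t : ℝ)
    (hM : 0 ≤ M) (hC : 0 ≤ C) (hr : 0 < r) (ht : 0 < t)
    (H : ∀ y, ‖y - z‖ ≤ r → f z + ⟪w, y - z⟫_ℝ - M * ‖y - z‖ - C * ‖y - z‖ ^ 2 ≤ f y) :
    ∃ ξ ∈ limitingSubdiff f z, ‖w - ξ‖ ≤ M + t := by
  classical
  set K : Set (EuclideanSpace ℝ (Fin d)) := Metric.closedBall z r with hKdef
  have hK : IsCompact K := isCompact_closedBall z r
  have hzK : z ∈ K := Metric.mem_closedBall_self hr.le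
  have hmemK : ∀ p : EuclideanSpace ℝ (Fin d), p ∈ K ↔ ‖p - z‖ ≤ r := by
    intro p; rw [hKdef, Metric.mem_closedBall, dist_eq_norm]
  set G : ℕ → (EuclideanSpace ℝ (Fin d) × EuclideanSpace ℝ (Fin d)) → ℝ :=
    fun n p => f p.1 + (-⟪w, p.1 - z⟫_ℝ + (M + t) * ‖p.2 - z‖ + (C + t) * ‖p.2 - z‖ ^ 2
      + ((n : ℝ) + 1) * ‖p.1 - p.2‖ ^ 2) with hGdef
  have hGlsc : ∀ n, LowerSemicontinuous (G n) := by
    intro n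
    have h1 : LowerSemicontinuous fun p : EuclideanSpace ℝ (Fin d) × EuclideanSpace ℝ (Fin d) =>
        f p.1 := hf.comp continuous_fst
    have h2 : Continuous fun p : EuclideanSpace ℝ (Fin d) × EuclideanSpace ℝ (Fin d) =>
        -⟪w, p.1 - z⟫_ℝ + (M + t) * ‖p.2 - z‖ + (C + t) * ‖p.2 - z‖ ^ 2
          + ((n : ℝ) + 1) * ‖p.1 - p.2‖ ^ 2 := by
      have hc1 : Continuous fun p : EuclideanSpace ℝ (Fin d) × EuclideanSpace ℝ (Fin d) =>
          ⟪w, p.1 - z⟫_ℝ := Continuous.inner continuous_const (continuous_fst.sub continuous_const)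
      have hn2 : Continuous fun p : EuclideanSpace ℝ (Fin d) × EuclideanSpace ℝ (Fin d) =>
          ‖p.2 - z‖ := (continuous_snd.sub continuous_const).norm
      have hn12 : Continuous fun p : EuclideanSpace ℝ (Fin d) × EuclideanSpace ℝ (Fin d) =>
          ‖p.1 - p.2‖ := (continuous_fst.sub continuous_snd).norm
      exact ((hc1.neg.add (continuous_const.mul hn2)).add
        (continuous_const.mul (hn2.pow 2))).add (continuous_const.mul (hn12.pow 2))
    exact h1.add h2.lowerSemicontinuous
  have hmins : ∀ n : ℕ, ∃ q, q ∈ K ×ˢ K ∧ ∀ p ∈ K ×ˢ K, G n q ≤ G n p := by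
    intro n
    obtain ⟨q, hq1, hq2⟩ := lsc_exists_min_on_compact (hK.prod hK) ⟨(z, z), hzK, hzK⟩ (hGlsc n)
    exact ⟨q, hq1, hq2⟩
  choose q hqK hqmin using hmins
  set y : ℕ → EuclideanSpace ℝ (Fin d) := fun n => (q n).1 with hydef
  set u : ℕ → EuclideanSpace ℝ (Fin d) := fun n => (q n).2 with hudef
  have hyK : ∀ n, y n ∈ K := fun n => (Set.mem_prod.1 (hqK n)).1
  have huK : ∀ n, u n ∈ K := fun n => (Set.mem_prod.1 (hqK n)).2
  set a' : ℕ → ℝ := fun n => ‖y n - z‖ with ha'def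
  set a : ℕ → ℝ := fun n => ‖u n - z‖ with hadef
  set e : ℕ → ℝ := fun n => ‖y n - u n‖ with hedef
  have ha'r : ∀ n, a' n ≤ r := fun n => (hmemK _).1 (hyK n)
  have har : ∀ n, a n ≤ r := fun n => (hmemK _).1 (huK n)
  have he2r : ∀ n, e n ≤ 2 * r := by
    intro n
    have : ‖y n - u n‖ ≤ ‖y n - z‖ + ‖z - u n‖ := norm_sub_le_norm_sub_add_norm_sub _ _ _
    have h2 : ‖z - u n‖ = a n := by rw [norm_sub_rev]
    have := ha'r n; have := har n
    simp only [hedef]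
    linarith [norm_sub_le_norm_sub_add_norm_sub (y n) z (u n), (ha'r n), (har n),
      (norm_sub_rev z (u n) ▸ har n : ‖z - u n‖ ≤ r)]
  have hGq : ∀ n, G n (q n) = f (y n) + (-⟪w, y n - z⟫_ℝ + (M + t) * a n + (C + t) * (a n) ^ 2
      + ((n : ℝ) + 1) * (e n) ^ 2) := fun n => rfl
  -- minimality against (z, z)
  have min1 : ∀ n, f (y n) + (-⟪w, y n - z⟫_ℝ + (M + t) * a n + (C + t) * (a n) ^ 2
      + ((n : ℝ) + 1) * (e n) ^ 2) ≤ f z := by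
    intro n
    have h := hqmin n (z, z) ⟨hzK, hzK⟩
    rw [hGq n] at h
    simpa [hGdef, sub_self, inner_zero_right] using h
  have HY : ∀ n, f z + ⟪w, y n - z⟫_ℝ - M * a' n - C * (a' n) ^ 2 ≤ f (y n) :=
    fun n => H (y n) (ha'r n)
  have core : ∀ n, (M + t) * a n + (C + t) * (a n) ^ 2 + ((n : ℝ) + 1) * (e n) ^ 2
      ≤ M * a' n + C * (a' n) ^ 2 := by
    intro n; have h1 := min1 n; have h2 := HY n; linarith
  have htri : ∀ n, a' n ≤ e n + a n := by
    intro n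
    have h := norm_sub_le_norm_sub_add_norm_sub (y n) (u n) z
    simpa [ha'def, hadef, hedef] using h
  have hBn : ∀ n : ℕ, ((n : ℝ) + 1) * (e n) ^ 2 ≤ M * r + C * r ^ 2 := by
    intro n
    have h1 := core n
    have h2 := ha'r n
    have h3 : (0:ℝ) ≤ a' n := norm_nonneg _
    have h4 : (0:ℝ) ≤ a n := norm_nonneg _
    have k1 : M * a' n ≤ M * r := mul_le_mul_of_nonneg_left h2 hM
    have k2 : C * a' n ^ 2 ≤ C * r ^ 2 :=
      mul_le_mul_of_nonneg_left (pow_le_pow_left₀ h3 h2 2) hC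
    have k3 : (0:ℝ) ≤ (M + t) * a n := mul_nonneg (by linarith) h4
    have k4 : (0:ℝ) ≤ (C + t) * (a n) ^ 2 := mul_nonneg (by linarith) (sq_nonneg _)
    linarith
  have he_tend : Filter.Tendsto e Filter.atTop (nhds 0) := by
    have hsq : Filter.Tendsto (fun n => (e n) ^ 2) Filter.atTop (nhds 0) := by
      have htb : Filter.Tendsto (fun n : ℕ => (M * r + C * r ^ 2) * (1 / ((n : ℝ) + 1)))
          Filter.atTop (nhds 0) := by
        simpa using tendsto_one_div_add_atTop_nhds_zero_nat.const_mul (M * r + C * r ^ 2)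
      refine squeeze_zero (fun n => sq_nonneg _) (fun n => ?_) htb
      have hn1 : (0:ℝ) < (n : ℝ) + 1 := by positivity
      rw [mul_one_div, le_div_iff₀ hn1, mul_comm]
      exact hBn n
    have heq : (fun n => Real.sqrt ((e n) ^ 2)) = e :=
      funext fun n => Real.sqrt_sq (norm_nonneg _)
    have := (Real.continuous_sqrt.tendsto 0).comp hsq
    rw [Function.comp_def, heq] at this
    simpa using this
  have ha_le : ∀ n, a n ≤ ((M + 4 * C * r) / t) * e n := by
    intro n
    rw [div_mul_eq_mul_div, le_div_iff₀ ht]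
    have h1 := core n
    have h2 := htri n
    have h3 : (0:ℝ) ≤ a n := norm_nonneg _
    have h4 : (0:ℝ) ≤ e n := norm_nonneg _
    have h5 := har n
    have h6 := he2r n
    have h7 : (0:ℝ) ≤ a' n := norm_nonneg _
    have h8 : (0:ℝ) ≤ ((n : ℝ) + 1) * (e n) ^ 2 := by positivity
    have h9 : (0:ℝ) ≤ t * (a n) ^ 2 := by positivity
    have k1 : M * a' n ≤ M * (e n + a n) := mul_le_mul_of_nonneg_left h2 hM
    have k2 : C * a' n ^ 2 ≤ C * (e n + a n) ^ 2 :=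
      mul_le_mul_of_nonneg_left (pow_le_pow_left₀ h7 h2 2) hC
    have k3 : C * (e n + a n) ^ 2 = C * (e n) ^ 2 + 2 * C * (a n) * (e n) + C * (a n) ^ 2 := by
      ring
    have k4 : C * (e n) ^ 2 ≤ C * (2 * r) * e n := by nlinarith [mul_nonneg hC h4]
    have k5 : 2 * C * (a n) * (e n) ≤ 2 * C * r * (e n) := by nlinarith [mul_nonneg hC h4]
    linarith [h1, k1, k2, k3, k4, k5, h8, h9]
  have ha_tend : Filter.Tendsto a Filter.atTop (nhds 0) := by
    apply squeeze_zero (fun n => norm_nonneg _) ha_le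
    simpa using he_tend.const_mul ((M + 4 * C * r) / t)
  have ha'_tend : Filter.Tendsto a' Filter.atTop (nhds 0) := by
    apply squeeze_zero (fun n => norm_nonneg _) (fun n => htri n)
    simpa using he_tend.add ha_tend
  have hy_tend : Filter.Tendsto y Filter.atTop (nhds z) := by
    rw [tendsto_iff_dist_tendsto_zero]
    simpa [dist_eq_norm] using ha'_tend
  have hyz_tend : Filter.Tendsto (fun n => y n - z) Filter.atTop (nhds 0) := by
    simpa using hy_tend.sub (tendsto_const_nhds (x := z))
  have hinner : Filter.Tendsto (fun n => ⟪w, y n - z⟫_ℝ) Filter.atTop (nhds 0) := by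
    have := Filter.Tendsto.inner (𝕜 := ℝ) (tendsto_const_nhds (x := w) (f := Filter.atTop)) hyz_tend
    simpa using this
  have hfy_tend : Filter.Tendsto (fun n => f (y n)) Filter.atTop (nhds (f z)) := by
    have hl : Filter.Tendsto (fun n => f z + ⟪w, y n - z⟫_ℝ - M * a' n - C * (a' n) ^ 2)
        Filter.atTop (nhds (f z)) := by
      have := (((tendsto_const_nhds (x := f z)).add hinner).sub
        (ha'_tend.const_mul M)).sub ((ha'_tend.pow 2).const_mul C)
      simpa [mul_comm] using this
    have hu2 : Filter.Tendsto (fun n => f z + ⟪w, y n - z⟫_ℝ) Filter.atTop (nhds (f z)) := by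
      simpa using (tendsto_const_nhds (x := f z)).add hinner
    apply tendsto_of_tendsto_of_tendsto_of_le_of_le hl hu2 (fun n => HY n)
    intro n
    show f (y n) ≤ f z + ⟪w, y n - z⟫_ℝ
    have h := min1 n
    have h1 : (0:ℝ) ≤ (M + t) * a n := by positivity
    have h2 : (0:ℝ) ≤ (C + t) * (a n) ^ 2 := by positivity
    have h3 : (0:ℝ) ≤ ((n : ℝ) + 1) * (e n) ^ 2 := by positivity
    linarith
  obtain ⟨N, hN⟩ := Filter.eventually_atTop.1
    ((ha'_tend.eventually (eventually_lt_nhds hr)).and (ha_tend.eventually (eventually_lt_nhds hr)))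
  set η : ℕ → EuclideanSpace ℝ (Fin d) := fun n => (2 * ((n : ℝ) + 1)) • (y n - u n) with hηdef
  have hηnorm : ∀ n, ‖η n‖ = 2 * ((n : ℝ) + 1) * e n := by
    intro n
    rw [hηdef]
    simp only [norm_smul, Real.norm_eq_abs]
    rw [abs_of_pos (by positivity)]
  have he_eq : ∀ n : ℕ, ‖y n - u n‖ = e n := fun n => rfl
  have ha_eq : ∀ n : ℕ, ‖u n - z‖ = a n := fun n => rfl
  have hfrech : ∀ n, N ≤ n → (w - η n) ∈ frechetSubdiff f (y n) := by
    intro n hn ε hε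
    have hr1 : a' n < r := (hN n hn).1
    refine ⟨min (ε / ((n : ℝ) + 1)) (r - a' n), lt_min (by positivity) (by linarith), ?_⟩
    intro p hp
    have hpyn : ‖p - y n‖ < ε / ((n : ℝ) + 1) := lt_of_lt_of_le hp (min_le_left _ _)
    have hpyn2 : ‖p - y n‖ < r - a' n := lt_of_lt_of_le hp (min_le_right _ _)
    have hpK : p ∈ K := by
      rw [hmemK]
      have h1 : ‖p - z‖ ≤ ‖p - y n‖ + ‖y n - z‖ := norm_sub_le_norm_sub_add_norm_sub _ _ _
      have h2 : ‖y n - z‖ = a' n := rfl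
      linarith
    have hmin2 : G n (y n, u n) ≤ G n (p, u n) := hqmin n (p, u n) ⟨hpK, huK n⟩
    simp only [hGdef] at hmin2
    have hid : ‖p - u n‖ ^ 2 = ‖p - y n‖ ^ 2 + 2 * ⟪p - y n, y n - u n⟫_ℝ + ‖y n - u n‖ ^ 2 := by
      have h1 : p - u n = (p - y n) + (y n - u n) := by abel
      rw [h1, norm_add_sq_real]
    have hinn1 : ⟪w, p - z⟫_ℝ = ⟪w, p - y n⟫_ℝ + ⟪w, y n - z⟫_ℝ := by
      rw [← inner_add_right]
      congr 1
      abel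
    have hinn2 : ⟪w - η n, p - y n⟫_ℝ
        = ⟪w, p - y n⟫_ℝ - 2 * ((n : ℝ) + 1) * ⟪p - y n, y n - u n⟫_ℝ := by
      rw [inner_sub_left, hηdef]
      simp only [real_inner_smul_left]
      rw [real_inner_comm (y n - u n) (p - y n)]
    have hq2 : ((n : ℝ) + 1) * ‖p - y n‖ ^ 2 ≤ ε * ‖p - y n‖ := by
      have h0 : (0:ℝ) ≤ ‖p - y n‖ := norm_nonneg _
      have hnp : (0:ℝ) < (n : ℝ) + 1 := by positivity
      have h1 : ((n : ℝ) + 1) * ‖p - y n‖ ≤ ε := by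
        rw [mul_comm, ← le_div_iff₀ hnp]
        exact hpyn.le
      calc ((n : ℝ) + 1) * ‖p - y n‖ ^ 2 = (((n : ℝ) + 1) * ‖p - y n‖) * ‖p - y n‖ := by ring
        _ ≤ ε * ‖p - y n‖ := mul_le_mul_of_nonneg_right h1 h0
    have hid2 : ((n : ℝ) + 1) * ‖p - u n‖ ^ 2 = ((n : ℝ) + 1) * ‖p - y n‖ ^ 2
        + 2 * ((n : ℝ) + 1) * ⟪p - y n, y n - u n⟫_ℝ + ((n : ℝ) + 1) * ‖y n - u n‖ ^ 2 := by
      rw [hid]; ring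
    show f p ≥ f (y n) + ⟪w - η n, p - y n⟫_ℝ - ε * ‖p - y n‖
    linarith [hmin2, hid2, hinn1, hinn2, hq2]
  have hηbound : ∀ n, N ≤ n → ‖η n‖ ≤ (M + t) + 2 * (C + t) * a n := by
    intro n hn
    by_cases hyu : y n = u n
    · have hη0 : η n = 0 := by rw [hηdef]; simp [hyu]
      rw [hη0, norm_zero]
      have h4 : (0:ℝ) ≤ a n := norm_nonneg _
      have h5 : (0:ℝ) ≤ 2 * (C + t) * a n := by
        apply mul_nonneg (by linarith) h4
      linarith
    · have hepos : 0 < e n := by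
        have : y n - u n ≠ 0 := sub_ne_zero.2 hyu
        exact norm_pos_iff.2 this
      apply le_of_forall_pos_le_add
      intro s hs
      have hra : 0 < r - a n := by linarith [(hN n hn).2]
      set D0 : ℝ := (C + t) + ((n : ℝ) + 1) + 1 with hD0
      have hD0pos : 0 < D0 := by positivity
      set τ : ℝ := min (r - a n) (s / D0) with hτ
      have hτpos : 0 < τ := lt_min hra (by positivity)
      have hτ1 : τ ≤ r - a n := min_le_left _ _
      have hτ2 : τ ≤ s / D0 := min_le_right _ _
      set u' := u n + (τ / e n) • (y n - u n) with hu'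
      have hu'un : ‖u' - u n‖ = τ := by
        have h1 : u' - u n = (τ / e n) • (y n - u n) := by rw [hu']; abel
        rw [h1, norm_smul, Real.norm_eq_abs, abs_of_pos (by positivity), he_eq n]
        field_simp
      have hu'z : ‖u' - z‖ ≤ a n + τ := by
        have h1 : ‖u' - z‖ ≤ ‖u' - u n‖ + ‖u n - z‖ := norm_sub_le_norm_sub_add_norm_sub _ _ _
        rw [hu'un, ha_eq n] at h1
        linarith
      have hu'K : u' ∈ K := by rw [hmemK]; linarith
      have hmin3 : G n (y n, u n) ≤ G n (y n, u') := hqmin n (y n, u') ⟨hyK n, hu'K⟩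
      simp only [hGdef] at hmin3
      have hynu' : ‖y n - u'‖ ^ 2 = (e n - τ) ^ 2 := by
        have h1 : y n - u' = (1 - τ / e n) • (y n - u n) := by
          rw [hu', sub_smul, one_smul]
          abel
        rw [h1, norm_smul, Real.norm_eq_abs, mul_pow, sq_abs, he_eq n]
        field_simp
        try ring
      have hb0 : (0:ℝ) ≤ ‖u' - z‖ := norm_nonneg _
      have hMt : (0:ℝ) ≤ M + t := by linarith
      have hCt : (0:ℝ) ≤ C + t := by linarith
      have h1 : (M + t) * ‖u' - z‖ ≤ (M + t) * (a n + τ) := mul_le_mul_of_nonneg_left hu'z hMt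
      have hsq : ‖u' - z‖ ^ 2 ≤ (a n + τ) ^ 2 := pow_le_pow_left₀ hb0 hu'z 2
      have h2 : (C + t) * ‖u' - z‖ ^ 2 ≤ (C + t) * (a n + τ) ^ 2 :=
        mul_le_mul_of_nonneg_left hsq hCt
      have hynu'2 : ((n : ℝ) + 1) * ‖y n - u'‖ ^ 2 = ((n : ℝ) + 1) * (e n - τ) ^ 2 := by
        rw [hynu']
      have he2eq : ((n : ℝ) + 1) * ‖y n - u n‖ ^ 2 = ((n : ℝ) + 1) * (e n) ^ 2 := by
        rw [he_eq]
      have haeq1 : (M + t) * ‖u n - z‖ = (M + t) * a n := by rw [ha_eq]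
      have haeq2 : (C + t) * ‖u n - z‖ ^ 2 = (C + t) * (a n) ^ 2 := by rw [ha_eq]
      have hkey : 2 * ((n : ℝ) + 1) * e n * τ
          ≤ (M + t) * τ + (C + t) * (2 * a n * τ + τ ^ 2) + ((n : ℝ) + 1) * τ ^ 2 := by
        linarith [hmin3, hynu'2, he2eq, haeq1, haeq2, h1, h2]
      have hdiv : 2 * ((n : ℝ) + 1) * e n ≤ (M + t) + (C + t) * (2 * a n + τ) + ((n : ℝ) + 1) * τ := by
        have h3 : (2 * ((n : ℝ) + 1) * e n) * τ
            ≤ ((M + t) + (C + t) * (2 * a n + τ) + ((n : ℝ) + 1) * τ) * τ := by linarith [hkey]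
        exact le_of_mul_le_mul_right h3 hτpos
      have hsmall : (C + t) * τ + ((n : ℝ) + 1) * τ ≤ s := by
        have h4 : D0 * τ ≤ D0 * (s / D0) := mul_le_mul_of_nonneg_left hτ2 hD0pos.le
        have h5 : D0 * (s / D0) = s := by field_simp
        have h6 : (0:ℝ) ≤ τ := hτpos.le
        nlinarith [h4, h5, h6]
      rw [hηnorm n]
      linarith [hdiv, hsmall]
  set R : ℝ := (M + t) + 2 * (C + t) * r with hR
  have hηK : ∀ k : ℕ, η (N + k) ∈ Metric.closedBall (0 : EuclideanSpace ℝ (Fin d)) R := by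
    intro k
    rw [Metric.mem_closedBall, dist_zero_right]
    have h1 := hηbound (N + k) (Nat.le_add_right N k)
    have h2 : a (N + k) ≤ r := har _
    have hCt : (0:ℝ) ≤ 2 * (C + t) := by linarith
    have h3 := mul_le_mul_of_nonneg_left h2 hCt
    rw [hR]
    linarith
  obtain ⟨ηl, hηlK, φ, hφ, hconv⟩ :=
    (isCompact_closedBall (0 : EuclideanSpace ℝ (Fin d)) R).tendsto_subseq hηK
  set idx : ℕ → ℕ := fun k => N + φ k with hidx
  have hidx_tend : Filter.Tendsto idx Filter.atTop Filter.atTop :=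
    Filter.tendsto_atTop_mono (fun k => le_trans hφ.le_apply (Nat.le_add_left _ _))
      Filter.tendsto_id
  refine ⟨w - ηl, ⟨fun k => y (idx k), fun k => w - η (idx k),
    fun k => hfrech (idx k) (Nat.le_add_right N (φ k)), hy_tend.comp hidx_tend,
    hfy_tend.comp hidx_tend, Filter.Tendsto.sub tendsto_const_nhds hconv⟩, ?_⟩
  have hnorm1 : Filter.Tendsto (fun k => ‖η (idx k)‖) Filter.atTop (nhds ‖ηl‖) := hconv.norm
  have hnorm2 : Filter.Tendsto (fun k => (M + t) + 2 * (C + t) * a (idx k)) Filter.atTop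
      (nhds ((M + t) + 2 * (C + t) * 0)) :=
    tendsto_const_nhds.add ((ha_tend.comp hidx_tend).const_mul _)
  have hle : ‖ηl‖ ≤ M + t := by
    have h := le_of_tendsto_of_tendsto' hnorm1 hnorm2
      (fun k => hηbound (idx k) (Nat.le_add_right _ _))
    simpa using h
  have hww : w - (w - ηl) = ηl := by abel
  rw [hww]
  exact hle

set_option maxHeartbeats 1000000 in
/-- Comparison theorem: if `l ≤ f - g ≤ u` with `l` locally Lipschitz and `(x, v)`
satisfies the ρ-weak-convexity subgradient inequality for `g`, then for every `γ > 0`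
there is `xh` with `‖xh - x‖ ≤ 2γ` and
`dist(v, ∂f(xh)) ≤ 2ργ + (u(x) - l(x))/γ + lip(l; xh)`. -/
theorem comparison_theorem
    {d : ℕ} (f g : EuclideanSpace ℝ (Fin d) → ℝ)
    (hf : LowerSemicontinuous f) (hg : LowerSemicontinuous g)
    (l u : EuclideanSpace ℝ (Fin d) → ℝ) (hl : LocallyLipschitz l) (ρ : ℝ) (hρ : 0 ≤ ρ)
    (hlu : ∀ y, l y ≤ f y - g y ∧ f y - g y ≤ u y)
    (x v : EuclideanSpace ℝ (Fin d))
    (hwc : ∀ y, g y ≥ g x + ⟪v, y - x⟫_ℝ - ρ / 2 * ‖y - x‖ ^ 2)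
    (hmin : ∀ γ : ℝ, 0 < γ → ∃ z, IsMinOn
      (fun y => f y - ⟪v, y - x⟫_ℝ + ρ / 2 * ‖y - x‖ ^ 2 - l y
        + (u x - l x) / (4 * γ ^ 2) * ‖y - x‖ ^ 2) Set.univ z) :
    ∀ γ : ℝ, 0 < γ → ∃ xh, ‖xh - x‖ ≤ 2 * γ ∧
      Metric.infDist v (limitingSubdiff f xh) ≤ 2 * ρ * γ + (u x - l x) / γ + lipAt l xh := by
  intro γ hγ
  have hD0 : 0 ≤ u x - l x := by have h := hlu x; linarith [h.1, h.2]
  rcases Nat.eq_zero_or_pos d with hd | hd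
  · -- trivial case `d = 0`
    subst hd
    haveI hss : Subsingleton (EuclideanSpace ℝ (Fin 0)) :=
      ⟨fun a b => PiLp.ext fun i => i.elim0⟩
    refine ⟨x, by simp; positivity, ?_⟩
    have hvmem : v ∈ limitingSubdiff f x := by
      apply frechet_subset_limiting
      intro ε hε
      refine ⟨1, one_pos, fun y hy => ?_⟩
      have hyx : y = x := Subsingleton.elim y x
      simp [hyx]
    have h0 : Metric.infDist v (limitingSubdiff f x) ≤ 0 := by
      simpa using Metric.infDist_le_dist_of_mem (x := v) hvmem
    have hlip : lipAt l x = 0 := by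
      have hcompl : ({x}ᶜ : Set (EuclideanSpace ℝ (Fin 0))) = ∅ := by
        ext y; simp [Subsingleton.elim y x]
      rw [lipAt, hcompl, nhdsWithin_empty]
      have huniv : {a : ℝ | ∀ᶠ n in (⊥ : Filter (EuclideanSpace ℝ (Fin 0))),
          (fun y => |l y - l x| / ‖y - x‖) n ≤ a} = Set.univ := by
        ext b; simp
      rw [Filter.limsup_eq, huniv]
      have hnb : ¬BddBelow (Set.univ : Set ℝ) := by
        rintro ⟨b, hb⟩
        have h1 : b ≤ b - 1 := hb (Set.mem_univ (b - 1))
        linarith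
      rw [csInf_of_not_bddBelow hnb, Real.sInf_empty]
    rw [hlip]
    have : 0 ≤ 2 * ρ * γ + (u x - l x) / γ := by positivity
    linarith
  · haveI : Nontrivial (EuclideanSpace ℝ (Fin d)) := by
      refine ⟨⟨EuclideanSpace.single ⟨0, hd⟩ 1, 0, fun h => ?_⟩⟩
      have h1 : (EuclideanSpace.single ⟨0, hd⟩ (1:ℝ) : EuclideanSpace ℝ (Fin d)) ⟨0, hd⟩
          = (0 : EuclideanSpace ℝ (Fin d)) ⟨0, hd⟩ := by rw [h]
      rw [EuclideanSpace.single_apply] at h1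
      simp at h1
    set c : ℝ := (u x - l x) / (4 * γ ^ 2) with hcdef
    have hc0 : 0 ≤ c := by positivity
    set CC : ℝ := ρ / 2 + c with hCC
    have hCC0 : 0 ≤ CC := by rw [hCC]; linarith
    clear_value c CC
    obtain ⟨z, hz2γ, hzmin⟩ : ∃ z, ‖z - x‖ ≤ 2 * γ ∧ ∀ y,
        f z - l z - ⟪v, z - x⟫_ℝ + CC * ‖z - x‖ ^ 2
          ≤ f y - l y - ⟪v, y - x⟫_ℝ + CC * ‖y - x‖ ^ 2 := by
      rcases eq_or_lt_of_le hD0 with hDz | hDpos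
      · refine ⟨x, by simp; positivity, ?_⟩
        intro y
        have h1 := (hlu y).1
        have h2 := hwc y
        have h3 := (hlu x).2
        have h4 : u x = l x := by linarith
        have h5 : 0 ≤ c * ‖y - x‖ ^ 2 := by positivity
        have h6 : CC * ‖y - x‖ ^ 2 = ρ / 2 * ‖y - x‖ ^ 2 + c * ‖y - x‖ ^ 2 := by
          rw [hCC]; ring
        have h7 : ⟪v, x - x⟫_ℝ = 0 := by rw [sub_self, inner_zero_right]
        have h8 : ‖x - x‖ = 0 := by rw [sub_self, norm_zero]
        rw [h7, h8]
        simp only [ne_eq, OfNat.ofNat_ne_zero, not_false_eq_true, zero_pow, mul_zero]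
        linarith
      · obtain ⟨z, hzmin⟩ := hmin γ hγ
        rw [isMinOn_iff] at hzmin
        have hzm : ∀ y, f z - l z - ⟪v, z - x⟫_ℝ + CC * ‖z - x‖ ^ 2
            ≤ f y - l y - ⟪v, y - x⟫_ℝ + CC * ‖y - x‖ ^ 2 := by
          intro y
          have h : f z - ⟪v, z - x⟫_ℝ + ρ / 2 * ‖z - x‖ ^ 2 - l z
              + (u x - l x) / (4 * γ ^ 2) * ‖z - x‖ ^ 2
              ≤ f y - ⟪v, y - x⟫_ℝ + ρ / 2 * ‖y - x‖ ^ 2 - l y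
              + (u x - l x) / (4 * γ ^ 2) * ‖y - x‖ ^ 2 := hzmin y (Set.mem_univ y)
          rw [← hcdef] at h
          have e1 : CC * ‖z - x‖ ^ 2 = ρ / 2 * ‖z - x‖ ^ 2 + c * ‖z - x‖ ^ 2 := by
            rw [hCC]; ring
          have e2 : CC * ‖y - x‖ ^ 2 = ρ / 2 * ‖y - x‖ ^ 2 + c * ‖y - x‖ ^ 2 := by
            rw [hCC]; ring
          linarith
        have hb1 := hzm x
        have hg1 := (hlu z).1
        have hg2 := hwc z
        have hg3 := (hlu x).2
        have hCCr : CC * ‖z - x‖ ^ 2 = ρ / 2 * ‖z - x‖ ^ 2 + c * ‖z - x‖ ^ 2 := by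
          rw [hCC]; ring
        have h7 : ⟪v, x - x⟫_ℝ = 0 := by rw [sub_self, inner_zero_right]
        have h8 : ‖x - x‖ = 0 := by rw [sub_self, norm_zero]
        rw [h7, h8] at hb1
        have hcz : c * ‖z - x‖ ^ 2 ≤ u x - l x := by
          simp only [ne_eq, OfNat.ofNat_ne_zero, not_false_eq_true, zero_pow, mul_zero] at hb1
          linarith
        have hc4 : c * (4 * γ ^ 2) = u x - l x := by
          rw [hcdef]; field_simp
        have hcpos : 0 < c := by rw [hcdef]; positivity
        have hsq : ‖z - x‖ ^ 2 ≤ 4 * γ ^ 2 := by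
          have := hcz; rw [← hc4] at this
          exact le_of_mul_le_mul_left this hcpos
        have hz2 : ‖z - x‖ ≤ 2 * γ := by
          nlinarith [norm_nonneg (z - x), hγ]
        exact ⟨z, hz2, hzm⟩
    set w := v - (2 * CC) • (z - x) with hwdef
    clear_value w
    have hvw : ‖v - w‖ = 2 * CC * ‖z - x‖ := by
      have h1 : v - w = (2 * CC) • (z - x) := by rw [hwdef]; abel
      rw [h1, norm_smul, Real.norm_eq_abs, abs_of_nonneg (by linarith)]
    have hvwA : ‖v - w‖ ≤ 2 * ρ * γ + (u x - l x) / γ := by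
      rw [hvw]
      have h1 : 2 * CC * ‖z - x‖ ≤ 2 * CC * (2 * γ) :=
        mul_le_mul_of_nonneg_left hz2γ (by linarith)
      have h2 : 2 * CC * (2 * γ) = 2 * ρ * γ + 4 * c * γ := by rw [hCC]; ring
      have h3 : 4 * c * γ = (u x - l x) / γ := by
        rw [hcdef]; field_simp
      linarith
    have hminor : ∀ y, f z + ⟪w, y - z⟫_ℝ - CC * ‖y - z‖ ^ 2 + (l y - l z) ≤ f y := by
      intro y
      have h := hzmin y
      have hsplit : ‖y - x‖ ^ 2 = ‖y - z‖ ^ 2 + 2 * ⟪y - z, z - x⟫_ℝ + ‖z - x‖ ^ 2 := by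
        have h1 : y - x = (y - z) + (z - x) := by abel
        rw [h1, norm_add_sq_real]
      have hinn : ⟪v, y - x⟫_ℝ = ⟪v, y - z⟫_ℝ + ⟪v, z - x⟫_ℝ := by
        rw [← inner_add_right]; congr 1; abel
      have hwin : ⟪w, y - z⟫_ℝ = ⟪v, y - z⟫_ℝ - 2 * CC * ⟪y - z, z - x⟫_ℝ := by
        rw [hwdef, inner_sub_left, real_inner_smul_left, real_inner_comm (z - x) (y - z)]
      have hCCe : CC * ‖y - x‖ ^ 2
          = CC * ‖y - z‖ ^ 2 + 2 * CC * ⟪y - z, z - x⟫_ℝ + CC * ‖z - x‖ ^ 2 := by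
        rw [hsplit]; ring
      linarith [h, hCCe, hinn, hwin]
    obtain ⟨K₀, U, hU, hlipK⟩ := hl z
    have hzU : z ∈ U := mem_of_mem_nhds hU
    have hqbdd : Filter.IsBoundedUnder (· ≤ ·) (nhdsWithin z {z}ᶜ)
        (fun y => |l y - l z| / ‖y - z‖) := by
      refine ⟨(K₀ : ℝ), ?_⟩
      rw [Filter.eventually_map]
      filter_upwards [mem_nhdsWithin_of_mem_nhds hU, self_mem_nhdsWithin] with yy hyU hyne
      have hyne' : yy ≠ z := hyne
      have hnpos : 0 < ‖yy - z‖ := norm_pos_iff.2 (sub_ne_zero.2 hyne')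
      have hd1 : |l yy - l z| ≤ (K₀ : ℝ) * ‖yy - z‖ := by
        have := hlipK.dist_le_mul yy hyU z hzU
        rwa [Real.dist_eq, dist_eq_norm] at this
      rw [div_le_iff₀ hnpos]
      exact hd1
    have hL0 : 0 ≤ lipAt l z := by
      rw [lipAt]
      refine Filter.le_limsup_of_frequently_le ?_ hqbdd
      exact Filter.Frequently.of_forall fun yy => div_nonneg (abs_nonneg _) (norm_nonneg _)
    refine ⟨z, hz2γ, ?_⟩
    apply le_of_forall_pos_le_add
    intro s hs
    have hev : ∀ᶠ yy in nhdsWithin z {z}ᶜ, |l yy - l z| / ‖yy - z‖ < lipAt l z + s / 2 := by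
      apply Filter.eventually_lt_of_limsup_lt _ hqbdd
      rw [lipAt]
      linarith
    rw [Filter.Eventually, Metric.mem_nhdsWithin_iff] at hev
    obtain ⟨r, hr, hball⟩ := hev
    have H : ∀ yy, ‖yy - z‖ ≤ r / 2 →
        f z + ⟪w, yy - z⟫_ℝ - (lipAt l z + s / 2) * ‖yy - z‖ - CC * ‖yy - z‖ ^ 2 ≤ f yy := by
      intro yy hyy
      by_cases hyz : yy = z
      · subst hyz
        simp only [sub_self, inner_zero_right, norm_zero]
        simp
      · have hin : yy ∈ Metric.ball z r ∩ {z}ᶜ :=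
          ⟨by rw [Metric.mem_ball, dist_eq_norm]; linarith, hyz⟩
        have hq : |l yy - l z| / ‖yy - z‖ < lipAt l z + s / 2 := hball hin
        have hnpos : 0 < ‖yy - z‖ := norm_pos_iff.2 (sub_ne_zero.2 hyz)
        rw [div_lt_iff₀ hnpos] at hq
        have habs : |l yy - l z| ≤ (lipAt l z + s / 2) * ‖yy - z‖ := by linarith
        have hll : -((lipAt l z + s / 2) * ‖yy - z‖) ≤ l yy - l z := by
          have := neg_abs_le (l yy - l z); linarith
        linarith [hminor yy]
    obtain ⟨ξ, hξmem, hξnorm⟩ := keyA f hf z w (lipAt l z + s / 2) CC (r / 2) (s / 2)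
      (by linarith) hCC0 (by linarith) (by linarith) H
    have hd1 : Metric.infDist v (limitingSubdiff f z) ≤ dist v ξ :=
      Metric.infDist_le_dist_of_mem hξmem
    have hd2 : dist v ξ ≤ ‖v - w‖ + ‖w - ξ‖ := by
      rw [dist_eq_norm]
      have h1 : v - ξ = (v - w) + (w - ξ) := by abel
      rw [h1]
      exact norm_add_le _ _
    linarith [hvwA, hξnorm, hd1, hd2]
end

section
/- Let f, g: ℝ^d → ℝ, with g being ρ-weakly convex, and suppose there exist x̄ ∈ ℝ^d and δ > 0 such that |f(x) - g(x)| ≤ δ‖x - x̄‖‖x + x̄‖ for all x. Then for any stationary point x of g (0 ∈ ∂g(x)), there exists x̂ with ‖x - x̂‖ ≤ √(4δ/(ρ+2δ))·√(‖x-x̄‖‖x+x̄‖) and dist(0, ∂f(x̂)) ≤ (δ + 2√(δ(ρ+2δ)))·(‖x-x̄‖ + ‖x+x̄‖). -/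
open Filter Real
open scoped Topology


open scoped InnerProductSpace

lemma sqrt_le_tangent {u u0 : ℝ} (hu : 0 ≤ u) (hu0 : 0 < u0) :
    Real.sqrt u ≤ Real.sqrt u0 + (u - u0) / (2 * Real.sqrt u0) := by
  have hs0 : 0 < Real.sqrt u0 := Real.sqrt_pos.2 hu0
  have h1 : Real.sqrt u ^ 2 = u := Real.sq_sqrt hu
  have h2 : Real.sqrt u0 ^ 2 = u0 := Real.sq_sqrt hu0.le
  rw [← sub_le_iff_le_add', le_div_iff₀ (by positivity)]
  nlinarith [sq_nonneg (Real.sqrt u - Real.sqrt u0), Real.sqrt_nonneg u]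

/-- A lower semicontinuous function attains its minimum on a nonempty compact set. -/
lemma lsc_exists_min {X : Type*} [MetricSpace X] {s : Set X} (hs : IsCompact s)
    (hne : s.Nonempty) {F : X → ℝ} (hF : LowerSemicontinuous F) :
    ∃ z ∈ s, ∀ y ∈ s, F z ≤ F y := by
  set G : X → ℝ := fun y => Real.arctan (F y) with hGdef
  have hG : LowerSemicontinuous G :=
    Real.continuous_arctan.comp_lowerSemicontinuous hF Real.arctan_strictMono.monotone
  have hbdd : BddBelow (G '' s) := by
    refine ⟨-(Real.pi / 2), ?_⟩
    rintro a ⟨y, -, rfl⟩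
    exact (Real.neg_pi_div_two_lt_arctan _).le
  have hne' : (G '' s).Nonempty := hne.image _
  set I := sInf (G '' s) with hI
  have hseq : ∀ n : ℕ, ∃ y, y ∈ s ∧ G y < I + 1 / (n + 1) := by
    intro n
    obtain ⟨a, ⟨y, hy, rfl⟩, ha⟩ :=
      exists_lt_of_csInf_lt hne' (lt_add_of_pos_right I (show (0:ℝ) < 1/(n+1) by positivity))
    exact ⟨y, hy, ha⟩
  choose y hy hGy using hseq
  obtain ⟨z, hzs, φ, hφ, hyz⟩ := hs.tendsto_subseq hy
  refine ⟨z, hzs, fun w hw => ?_⟩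
  have key : G z ≤ I := by
    by_contra h
    push_neg at h
    have hc : (I + G z) / 2 < G z := by linarith
    have h1 : ∀ᶠ n in atTop, (I + G z) / 2 < G (y (φ n)) := hyz.eventually (hG z _ hc)
    have h2 : Tendsto (fun n : ℕ => I + 1 / ((φ n : ℝ) + 1)) atTop (𝓝 (I + 0)) :=
      tendsto_const_nhds.add
        (tendsto_one_div_add_atTop_nhds_zero_nat.comp hφ.tendsto_atTop)
    rw [add_zero] at h2
    have h3 : ∀ᶠ n in atTop, I + 1 / ((φ n : ℝ) + 1) < (I + G z) / 2 :=
      h2.eventually_lt_const (by linarith)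
    obtain ⟨n, hn1, hn3⟩ := (h1.and h3).exists
    exact absurd (hn1.trans (lt_of_lt_of_le (hGy (φ n)) (le_of_eq rfl))) (by
      have := hGy (φ n); linarith)
  have hIw : I ≤ G w := csInf_le hbdd ⟨w, hw, rfl⟩
  exact Real.arctan_strictMono.le_iff_le.mp (key.trans hIw)


set_option maxHeartbeats 1000000 in
lemma KI_lemma {d : ℕ} (xb z y : EuclideanSpace ℝ (Fin d)) (ε : ℝ) (hε : 0 < ε)
    (hy1 : ‖y - z‖ ≤ 1) :
    Real.sqrt ((‖y - xb‖ * ‖y + xb‖) ^ 2 + ε ^ 2) ≤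
      Real.sqrt ((‖z - xb‖ * ‖z + xb‖) ^ 2 + ε ^ 2)
      + ⟪(Real.sqrt ((‖z - xb‖ * ‖z + xb‖) ^ 2 + ε ^ 2))⁻¹ •
          ((‖z - xb‖ ^ 2) • (z + xb) + (‖z + xb‖ ^ 2) • (z - xb)), y - z⟫_ℝ
      + ((‖z - xb‖ ^ 2 + ‖z + xb‖ ^ 2 + 4 * ‖z - xb‖ * ‖z + xb‖ + 2 * ‖z - xb‖
          + 2 * ‖z + xb‖ + 1) / (2 * Real.sqrt ((‖z - xb‖ * ‖z + xb‖) ^ 2 + ε ^ 2)))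
          * ‖y - z‖ ^ 2 := by
  have hzpos : 0 < Real.sqrt ((‖z - xb‖ * ‖z + xb‖) ^ 2 + ε ^ 2) :=
    Real.sqrt_pos.2 (by positivity)
  set hz : ℝ := Real.sqrt ((‖z - xb‖ * ‖z + xb‖) ^ 2 + ε ^ 2) with hzdef
  set w := y - z with hwdef
  set A := ⟪z - xb, w⟫_ℝ with hAdef
  set B := ⟪z + xb, w⟫_ℝ with hBdef
  have hyxb : y - xb = (z - xb) + w := by rw [hwdef]; abel
  have hyxb2 : y + xb = (z + xb) + w := by rw [hwdef]; abel
  have h1 : ‖y - xb‖ ^ 2 = ‖z - xb‖ ^ 2 + 2 * A + ‖w‖ ^ 2 := by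
    rw [hyxb, @norm_add_sq_real]
  have h2 : ‖y + xb‖ ^ 2 = ‖z + xb‖ ^ 2 + 2 * B + ‖w‖ ^ 2 := by
    rw [hyxb2, @norm_add_sq_real]
  have hA := abs_real_inner_le_norm (z - xb) w
  have hB := abs_real_inner_le_norm (z + xb) w
  rw [← hAdef] at hA
  rw [← hBdef] at hB
  obtain ⟨hA1, hA2⟩ := abs_le.1 hA
  obtain ⟨hB1, hB2⟩ := abs_le.1 hB
  have hc : (0:ℝ) ≤ ‖z - xb‖ := norm_nonneg _
  have hd : (0:ℝ) ≤ ‖z + xb‖ := norm_nonneg _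
  have hn : (0:ℝ) ≤ ‖w‖ := norm_nonneg _
  have hn1 : ‖w‖ ≤ 1 := hy1
  -- quadratic upper bound on the squared product
  have hquad : (‖y - xb‖ * ‖y + xb‖) ^ 2 ≤ (‖z - xb‖ * ‖z + xb‖) ^ 2
      + 2 * (‖z - xb‖ ^ 2 * B + ‖z + xb‖ ^ 2 * A)
      + (‖z - xb‖ ^ 2 + ‖z + xb‖ ^ 2 + 4 * ‖z - xb‖ * ‖z + xb‖ + 2 * ‖z - xb‖
          + 2 * ‖z + xb‖ + 1) * ‖w‖ ^ 2 := by
    have e1 : (‖y - xb‖ * ‖y + xb‖) ^ 2 = ‖y - xb‖ ^ 2 * ‖y + xb‖ ^ 2 := by ring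
    rw [e1, h1, h2]
    nlinarith [mul_nonneg (sub_nonneg.2 hA2) (sub_nonneg.2 hB2),
      mul_nonneg (show (0:ℝ) ≤ A + ‖z - xb‖ * ‖w‖ by linarith)
        (sub_nonneg.2 hB2),
      mul_nonneg (sub_nonneg.2 hA2)
        (show (0:ℝ) ≤ B + ‖z + xb‖ * ‖w‖ by linarith),
      sq_nonneg ‖w‖, mul_nonneg (mul_nonneg hc hn) (sq_nonneg ‖w‖),
      mul_nonneg (mul_nonneg hd hn) (sq_nonneg ‖w‖),
      mul_nonneg (sq_nonneg ‖w‖) (sub_nonneg.2 hn1),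
      mul_nonneg (mul_nonneg hc (sub_nonneg.2 hn1)) (sq_nonneg ‖w‖),
      mul_nonneg (mul_nonneg hd (sub_nonneg.2 hn1)) (sq_nonneg ‖w‖)]
  -- inner product with the gradient direction
  have hGinner : ⟪hz⁻¹ • ((‖z - xb‖ ^ 2) • (z + xb) + (‖z + xb‖ ^ 2) • (z - xb)), w⟫_ℝ
      = hz⁻¹ * (‖z - xb‖ ^ 2 * B + ‖z + xb‖ ^ 2 * A) := by
    rw [real_inner_smul_left, inner_add_left, real_inner_smul_left, real_inner_smul_left,
      ← hAdef, ← hBdef]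
  have hT := sqrt_le_tangent (u := (‖y - xb‖ * ‖y + xb‖) ^ 2 + ε ^ 2)
      (u0 := (‖z - xb‖ * ‖z + xb‖) ^ 2 + ε ^ 2) (by positivity) (by positivity)
  rw [← hzdef] at hT
  have hdivle : ((‖y - xb‖ * ‖y + xb‖) ^ 2 + ε ^ 2 - ((‖z - xb‖ * ‖z + xb‖) ^ 2 + ε ^ 2))
      / (2 * hz) ≤ (2 * (‖z - xb‖ ^ 2 * B + ‖z + xb‖ ^ 2 * A)
      + (‖z - xb‖ ^ 2 + ‖z + xb‖ ^ 2 + 4 * ‖z - xb‖ * ‖z + xb‖ + 2 * ‖z - xb‖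
          + 2 * ‖z + xb‖ + 1) * ‖w‖ ^ 2) / (2 * hz) := by
    gcongr
    linarith
  have heq : (2 * (‖z - xb‖ ^ 2 * B + ‖z + xb‖ ^ 2 * A)
      + (‖z - xb‖ ^ 2 + ‖z + xb‖ ^ 2 + 4 * ‖z - xb‖ * ‖z + xb‖ + 2 * ‖z - xb‖
          + 2 * ‖z + xb‖ + 1) * ‖w‖ ^ 2) / (2 * hz)
      = hz⁻¹ * (‖z - xb‖ ^ 2 * B + ‖z + xb‖ ^ 2 * A)
      + ((‖z - xb‖ ^ 2 + ‖z + xb‖ ^ 2 + 4 * ‖z - xb‖ * ‖z + xb‖ + 2 * ‖z - xb‖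
          + 2 * ‖z + xb‖ + 1) / (2 * hz)) * ‖w‖ ^ 2 := by
    field_simp
  rw [hGinner]
  linarith [hT, hdivle, heq.le, heq.ge]

lemma Gnorm_lemma {d : ℕ} (xb z : EuclideanSpace ℝ (Fin d)) (ε : ℝ) (hε : 0 < ε) :
    ‖(Real.sqrt ((‖z - xb‖ * ‖z + xb‖) ^ 2 + ε ^ 2))⁻¹ •
      ((‖z - xb‖ ^ 2) • (z + xb) + (‖z + xb‖ ^ 2) • (z - xb))‖ ≤ ‖z - xb‖ + ‖z + xb‖ := by
  have hzpos : 0 < Real.sqrt ((‖z - xb‖ * ‖z + xb‖) ^ 2 + ε ^ 2) :=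
    Real.sqrt_pos.2 (by positivity)
  set hz : ℝ := Real.sqrt ((‖z - xb‖ * ‖z + xb‖) ^ 2 + ε ^ 2) with hzdef
  have hc : (0:ℝ) ≤ ‖z - xb‖ := norm_nonneg _
  have hd : (0:ℝ) ≤ ‖z + xb‖ := norm_nonneg _
  have hcd : ‖z - xb‖ * ‖z + xb‖ ≤ hz := by
    rw [hzdef]
    have h := Real.sqrt_le_sqrt (show (‖z - xb‖ * ‖z + xb‖) ^ 2
      ≤ (‖z - xb‖ * ‖z + xb‖) ^ 2 + ε ^ 2 by nlinarith [sq_nonneg ε])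
    rwa [Real.sqrt_sq (by positivity : (0:ℝ) ≤ ‖z - xb‖ * ‖z + xb‖)] at h
  have hW : ‖(‖z - xb‖ ^ 2) • (z + xb) + (‖z + xb‖ ^ 2) • (z - xb)‖
      ≤ ‖z - xb‖ ^ 2 * ‖z + xb‖ + ‖z + xb‖ ^ 2 * ‖z - xb‖ := by
    calc ‖(‖z - xb‖ ^ 2) • (z + xb) + (‖z + xb‖ ^ 2) • (z - xb)‖
        ≤ ‖(‖z - xb‖ ^ 2) • (z + xb)‖ + ‖(‖z + xb‖ ^ 2) • (z - xb)‖ := norm_add_le _ _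
      _ = ‖z - xb‖ ^ 2 * ‖z + xb‖ + ‖z + xb‖ ^ 2 * ‖z - xb‖ := by
          rw [norm_smul, norm_smul, Real.norm_eq_abs, Real.norm_eq_abs,
            abs_of_nonneg (by positivity : (0:ℝ) ≤ ‖z - xb‖ ^ 2),
            abs_of_nonneg (by positivity : (0:ℝ) ≤ ‖z + xb‖ ^ 2)]
  rw [norm_smul, Real.norm_eq_abs, abs_of_pos (by positivity), inv_mul_le_iff₀ hzpos]
  have h2 : (‖z - xb‖ * ‖z + xb‖) * (‖z - xb‖ + ‖z + xb‖) ≤ hz * (‖z - xb‖ + ‖z + xb‖) :=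
    mul_le_mul_of_nonneg_right hcd (by positivity)
  nlinarith [hW, h2]


set_option maxHeartbeats 1000000 in
lemma key_step {d : ℕ} (f g : EuclideanSpace ℝ (Fin d) → ℝ)
    (hf : LowerSemicontinuous f)
    (ρ δ : ℝ) (hρ : 0 ≤ ρ) (hδ : 0 < δ) (xb x : EuclideanSpace ℝ (Fin d))
    (happrox : ∀ y, |f y - g y| ≤ δ * ‖y - xb‖ * ‖y + xb‖)
    (glow : ∀ y, g x - ρ / 2 * ‖y - x‖ ^ 2 ≤ g y)
    (ε : ℝ) (hε : 0 < ε) :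
    ∃ z v, v ∈ frechetSubdiff f z ∧
      (ρ + 2 * δ) * ‖z - x‖ ^ 2 ≤ 4 * δ * (‖x - xb‖ * ‖x + xb‖) + 2 * δ * ε ∧
      ‖v‖ ≤ δ * (‖x - xb‖ + ‖x + xb‖) + 2 * (ρ + 2 * δ) * ‖z - x‖ ∧
      ∀ y, f z + δ * Real.sqrt ((‖z - xb‖ * ‖z + xb‖) ^ 2 + ε ^ 2) + (ρ + δ) * ‖z - x‖ ^ 2 ≤
           f y + δ * Real.sqrt ((‖y - xb‖ * ‖y + xb‖) ^ 2 + ε ^ 2) + (ρ + δ) * ‖y - x‖ ^ 2 := by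
  classical
  set lam : ℝ := ρ + δ with hlamdef
  have hlam : 0 < lam := by positivity
  set hh : (EuclideanSpace ℝ (Fin d)) → ℝ := fun y => ‖y - xb‖ * ‖y + xb‖ with hhdef
  have hh_nonneg : ∀ y, 0 ≤ hh y := fun y => by positivity
  set he : (EuclideanSpace ℝ (Fin d)) → ℝ := fun y => Real.sqrt ((hh y) ^ 2 + ε ^ 2) with hedef
  have he_pos : ∀ y, 0 < he y := fun y => Real.sqrt_pos.2 (by positivity)
  have hh_le_he : ∀ y, hh y ≤ he y := by
    intro y
    have : hh y = Real.sqrt ((hh y) ^ 2) := (Real.sqrt_sq (hh_nonneg y)).symm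
    rw [this]
    exact Real.sqrt_le_sqrt (by nlinarith [sq_nonneg ε])
  have he_le : ∀ y, he y ≤ hh y + ε := by
    intro y
    have h1 : (hh y) ^ 2 + ε ^ 2 ≤ (hh y + ε) ^ 2 := by nlinarith [hh_nonneg y, hε.le]
    calc he y ≤ Real.sqrt ((hh y + ε) ^ 2) := Real.sqrt_le_sqrt h1
    _ = hh y + ε := Real.sqrt_sq (by positivity)
  have flow : ∀ y, g y - δ * hh y ≤ f y := by
    intro y
    have h := (abs_le.1 (happrox y)).1
    simp only [hhdef]
    linarith [h]
  have fup : ∀ y, f y ≤ g y + δ * hh y := by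
    intro y
    have h := (abs_le.1 (happrox y)).2
    simp only [hhdef]
    linarith [h]
  set Fm : (EuclideanSpace ℝ (Fin d)) → ℝ := fun y => f y + (δ * he y + lam * ‖y - x‖ ^ 2) with hFmdef
  have Flow : ∀ y, g x + (ρ / 2 + δ) * ‖y - x‖ ^ 2 ≤ Fm y := by
    intro y
    have h1 := flow y
    have h2 := glow y
    have h3 := mul_le_mul_of_nonneg_left (hh_le_he y) hδ.le
    simp only [hFmdef, hlamdef]
    nlinarith [sq_nonneg ‖y - x‖]
  have Fup_x : Fm x ≤ g x + 2 * δ * hh x + δ * ε := by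
    have h1 := fup x
    have h3 := mul_le_mul_of_nonneg_left (he_le x) hδ.le
    have h4 : ‖x - x‖ = (0:ℝ) := by simp
    simp only [hFmdef]
    rw [h4]
    nlinarith [h1, h3]
  -- minimizer existence
  have hcont_hh : Continuous hh := by
    simp only [hhdef]
    exact ((continuous_id.sub continuous_const).norm).mul
      ((continuous_id.add continuous_const).norm)
  have hcont_he : Continuous he := by
    simp only [hedef]
    exact Real.continuous_sqrt.comp ((hcont_hh.pow 2).add continuous_const)
  have hcont_q : Continuous fun y : EuclideanSpace ℝ (Fin d) => ‖y - x‖ ^ 2 :=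
    ((continuous_id.sub continuous_const).norm).pow 2
  have hFm_lsc : LowerSemicontinuous Fm := by
    simp only [hFmdef]
    exact hf.add (((continuous_const.mul hcont_he).add
      (continuous_const.mul hcont_q)).lowerSemicontinuous)
  set q : ℝ := (2 * δ * hh x + δ * ε) / (ρ / 2 + δ) with hqdef
  have hq_nonneg : 0 ≤ q := by
    apply div_nonneg
    · nlinarith [hh_nonneg x]
    · nlinarith
  set R : ℝ := Real.sqrt q + 1 with hRdef
  have hR1 : 1 ≤ R := by
    have := Real.sqrt_nonneg q
    simp only [hRdef]; linarith
  have hRpos : 0 < R := by linarith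
  clear_value lam hh he Fm q R
  obtain ⟨z, hzs, hzmin⟩ := lsc_exists_min (isCompact_closedBall x R)
    ⟨x, Metric.mem_closedBall_self hRpos.le⟩ hFm_lsc
  have hglobal : ∀ y, Fm z ≤ Fm y := by
    intro y
    by_cases hy : y ∈ Metric.closedBall x R
    · exact hzmin y hy
    · have hylarge : R < ‖y - x‖ := by
        simp only [Metric.mem_closedBall, dist_eq_norm, not_le] at hy
        exact hy
      have hRq : 2 * δ * hh x + δ * ε + (ρ / 2 + δ) ≤ (ρ / 2 + δ) * R ^ 2 := by
        have hsq : Real.sqrt q ^ 2 = q := Real.sq_sqrt hq_nonneg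
        have hqq : (ρ / 2 + δ) * q = 2 * δ * hh x + δ * ε := by
          simp only [hqdef]
          field_simp
        have hs := Real.sqrt_nonneg q
        simp only [hRdef]
        nlinarith [hqq, hsq]
      have h1 : (ρ / 2 + δ) * R ^ 2 ≤ (ρ / 2 + δ) * ‖y - x‖ ^ 2 := by
        have hsq : R ^ 2 ≤ ‖y - x‖ ^ 2 := by nlinarith [hRpos]
        exact mul_le_mul_of_nonneg_left hsq (by positivity)
      have h2 := Flow y
      have h3 := Fup_x
      have h4 : Fm x ≤ Fm y := by linarith
      exact le_trans (hzmin x (Metric.mem_closedBall_self hRpos.le)) h4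
  have hboundt : (ρ + 2 * δ) * ‖z - x‖ ^ 2 ≤ 4 * δ * hh x + 2 * δ * ε := by
    have h1 := Flow z
    have h2 := hglobal x
    have h3 := Fup_x
    have e : (ρ + 2 * δ) * ‖z - x‖ ^ 2 = 2 * ((ρ / 2 + δ) * ‖z - x‖ ^ 2) := by ring
    linarith
  simp only [hhdef] at hboundt
  -- the subgradient candidate
  have hezpos : 0 < he z := he_pos z
  set G := (Real.sqrt ((‖z - xb‖ * ‖z + xb‖) ^ 2 + ε ^ 2))⁻¹ •
      ((‖z - xb‖ ^ 2) • (z + xb) + (‖z + xb‖ ^ 2) • (z - xb)) with hGdef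
  set C₀ : ℝ := ‖z - xb‖ ^ 2 + ‖z + xb‖ ^ 2 + 4 * ‖z - xb‖ * ‖z + xb‖ + 2 * ‖z - xb‖
      + 2 * ‖z + xb‖ + 1 with hC0def
  have hC0pos : (0:ℝ) < C₀ := by rw [hC0def]; positivity
  set v := -(δ • G + ((2:ℝ) * lam) • (z - x)) with hvdef
  have KI : ∀ y, ‖y - z‖ ≤ 1 → he y ≤ he z + ⟪G, y - z⟫_ℝ + (C₀ / (2 * he z)) * ‖y - z‖ ^ 2 := by
    intro y hy1
    have h := KI_lemma xb z y ε hε hy1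
    simp only [hedef, hhdef, hGdef, hC0def]
    exact h
  set C₁ : ℝ := δ * (C₀ / (2 * he z)) + lam with hC1def
  have hC1pos : 0 < C₁ := by
    rw [hC1def]
    have h1 : 0 ≤ δ * (C₀ / (2 * he z)) :=
      mul_nonneg hδ.le (div_nonneg hC0pos.le (by linarith))
    linarith
  clear_value G C₀ v C₁
  have key2 : ∀ y, ‖y - z‖ ≤ 1 → f z + ⟪v, y - z⟫_ℝ - C₁ * ‖y - z‖ ^ 2 ≤ f y := by
    intro y hy1
    have hKI := KI y hy1
    have hglob : f z + (δ * he z + lam * ‖z - x‖ ^ 2) ≤ f y + (δ * he y + lam * ‖y - x‖ ^ 2) := by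
      have h := hglobal y
      simp only [hFmdef] at h
      exact h
    have hq : ‖y - x‖ ^ 2 = ‖z - x‖ ^ 2 + 2 * ⟪z - x, y - z⟫_ℝ + ‖y - z‖ ^ 2 := by
      rw [show y - x = (z - x) + (y - z) by abel, @norm_add_sq_real]
    have hvinner : ⟪v, y - z⟫_ℝ = -(δ * ⟪G, y - z⟫_ℝ + 2 * lam * ⟪z - x, y - z⟫_ℝ) := by
      rw [hvdef]
      simp only [inner_neg_left, inner_add_left, real_inner_smul_left]
    have hq' : lam * ‖y - x‖ ^ 2
        = lam * ‖z - x‖ ^ 2 + 2 * lam * ⟪z - x, y - z⟫_ℝ + lam * ‖y - z‖ ^ 2 := by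
      rw [hq]; ring
    have hmul := mul_le_mul_of_nonneg_left hKI hδ.le
    rw [hvinner, hC1def]
    linarith [hmul, hglob, hq']
  have hvmem : v ∈ frechetSubdiff f z := by
    intro ε' hε'
    refine ⟨min 1 (ε' / C₁), lt_min one_pos (div_pos hε' hC1pos), fun y hy => ?_⟩
    have hy1 : ‖y - z‖ ≤ 1 := le_of_lt (lt_of_lt_of_le hy (min_le_left _ _))
    have hy2 : ‖y - z‖ < ε' / C₁ := lt_of_lt_of_le hy (min_le_right _ _)
    have h := key2 y hy1
    have hq2 : C₁ * ‖y - z‖ ^ 2 ≤ ε' * ‖y - z‖ := by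
      have h3 : ‖y - z‖ * C₁ < ε' := (lt_div_iff₀ hC1pos).1 hy2
      nlinarith [norm_nonneg (y - z)]
    linarith [h, hq2]
  have hGnorm : ‖G‖ ≤ ‖z - xb‖ + ‖z + xb‖ := by
    rw [hGdef]; exact Gnorm_lemma xb z ε hε
  have hvnorm : ‖v‖ ≤ δ * (‖z - xb‖ + ‖z + xb‖) + 2 * lam * ‖z - x‖ := by
    rw [hvdef, norm_neg]
    calc ‖δ • G + ((2:ℝ) * lam) • (z - x)‖ ≤ ‖δ • G‖ + ‖((2:ℝ) * lam) • (z - x)‖ :=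
          norm_add_le _ _
      _ = δ * ‖G‖ + 2 * lam * ‖z - x‖ := by
          rw [norm_smul, norm_smul, Real.norm_eq_abs, Real.norm_eq_abs, abs_of_pos hδ,
            abs_of_pos (by linarith : (0:ℝ) < 2 * lam)]
      _ ≤ δ * (‖z - xb‖ + ‖z + xb‖) + 2 * lam * ‖z - x‖ := by
          have := mul_le_mul_of_nonneg_left hGnorm hδ.le
          linarith
  have hzxb : ‖z - xb‖ ≤ ‖x - xb‖ + ‖z - x‖ := by
    calc ‖z - xb‖ = ‖(x - xb) + (z - x)‖ := by rw [show z - xb = (x - xb) + (z - x) by abel]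
      _ ≤ ‖x - xb‖ + ‖z - x‖ := norm_add_le _ _
  have hzxb2 : ‖z + xb‖ ≤ ‖x + xb‖ + ‖z - x‖ := by
    calc ‖z + xb‖ = ‖(x + xb) + (z - x)‖ := by rw [show z + xb = (x + xb) + (z - x) by abel]
      _ ≤ ‖x + xb‖ + ‖z - x‖ := norm_add_le _ _
  have hvfinal : ‖v‖ ≤ δ * (‖x - xb‖ + ‖x + xb‖) + 2 * (ρ + 2 * δ) * ‖z - x‖ := by
    have e : 2 * lam * ‖z - x‖ = 2 * (ρ + δ) * ‖z - x‖ := by rw [hlamdef]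
    have h1 : δ * (‖z - xb‖ + ‖z + xb‖)
        ≤ δ * (‖x - xb‖ + ‖x + xb‖ + 2 * ‖z - x‖) :=
      mul_le_mul_of_nonneg_left (by linarith) hδ.le
    linarith [hvnorm, e, h1]
  refine ⟨z, v, hvmem, hboundt, hvfinal, ?_⟩
  intro y
  have hgy := hglobal y
  simp only [hFmdef, hedef, hhdef, hlamdef] at hgy
  rw [hlamdef]
  linarith [hgy]
set_option maxHeartbeats 1000000 in
/-- If `g` is ρ-weakly convex and `|f - g| ≤ δ‖· - xb‖‖· + xb‖`, then near any stationary
point `x` of `g` there is a point `xh` at which `f` is approximately stationary. -/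
theorem approximate_stationarity_transfer
    {d : ℕ} (f g : EuclideanSpace ℝ (Fin d) → ℝ)
    (hf : LowerSemicontinuous f) (hg : LowerSemicontinuous g)
    (ρ δ : ℝ) (hρ : 0 ≤ ρ) (hδ : 0 < δ)
    (hwc : ∀ x y v, v ∈ limitingSubdiff g x →
      g y ≥ g x + ⟪v, y - x⟫_ℝ - ρ / 2 * ‖y - x‖ ^ 2)
    (xb : EuclideanSpace ℝ (Fin d))
    (happrox : ∀ y, |f y - g y| ≤ δ * ‖y - xb‖ * ‖y + xb‖)
    (x : EuclideanSpace ℝ (Fin d))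
    (hstat : (0 : EuclideanSpace ℝ (Fin d)) ∈ limitingSubdiff g x) :
    ∃ xh : EuclideanSpace ℝ (Fin d),
      ‖x - xh‖ ≤ Real.sqrt (4 * δ / (ρ + 2 * δ)) * Real.sqrt (‖x - xb‖ * ‖x + xb‖) ∧
      Metric.infDist 0 (limitingSubdiff f xh) ≤
        (δ + 2 * Real.sqrt (δ * (ρ + 2 * δ))) * (‖x - xb‖ + ‖x + xb‖) := by
  classical
  have hρ2 : (0:ℝ) < ρ + 2 * δ := by linarith
  have glow : ∀ y, g x - ρ / 2 * ‖y - x‖ ^ 2 ≤ g y := by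
    intro y
    have h := hwc x y 0 hstat
    simp only [inner_zero_left] at h
    linarith
  have hkey := fun n : ℕ => key_step f g hf ρ δ hρ hδ xb x happrox glow
    (1 / ((n:ℝ) + 1)) (by positivity)
  choose z v hvmem hbt hvn hgmin using hkey
  have hεn1 : ∀ n : ℕ, (1:ℝ) / ((n:ℝ) + 1) ≤ 1 := by
    intro n
    rw [div_le_one (by positivity)]
    have : (0:ℝ) ≤ (n:ℝ) := Nat.cast_nonneg n
    linarith
  have htbound : ∀ n, ‖z n - x‖ ≤
      Real.sqrt ((4 * δ * (‖x - xb‖ * ‖x + xb‖) + 2 * δ) / (ρ + 2 * δ)) := by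
    intro n
    have h1 := hbt n
    have h2 : (ρ + 2 * δ) * ‖z n - x‖ ^ 2 ≤ 4 * δ * (‖x - xb‖ * ‖x + xb‖) + 2 * δ := by
      have h3 := mul_le_mul_of_nonneg_left (hεn1 n) (by positivity : (0:ℝ) ≤ 2 * δ)
      linarith
    have h3 : ‖z n - x‖ ^ 2 ≤ (4 * δ * (‖x - xb‖ * ‖x + xb‖) + 2 * δ) / (ρ + 2 * δ) :=
      (le_div_iff₀ hρ2).2 (by linarith)
    calc ‖z n - x‖ = Real.sqrt (‖z n - x‖ ^ 2) := (Real.sqrt_sq (norm_nonneg _)).symm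
      _ ≤ _ := Real.sqrt_le_sqrt h3
  have hzball : ∀ n, z n ∈ Metric.closedBall x
      (Real.sqrt ((4 * δ * (‖x - xb‖ * ‖x + xb‖) + 2 * δ) / (ρ + 2 * δ))) := by
    intro n
    rw [Metric.mem_closedBall, dist_eq_norm]
    exact htbound n
  obtain ⟨zs, hzsball, φ, hφ, hzφ⟩ := (isCompact_closedBall x _).tendsto_subseq hzball
  have hvball : ∀ n, v (φ n) ∈ Metric.closedBall (0 : EuclideanSpace ℝ (Fin d))
      (δ * (‖x - xb‖ + ‖x + xb‖) + 2 * (ρ + 2 * δ) *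
        Real.sqrt ((4 * δ * (‖x - xb‖ * ‖x + xb‖) + 2 * δ) / (ρ + 2 * δ))) := by
    intro n
    rw [Metric.mem_closedBall, dist_zero_right]
    have h1 := hvn (φ n)
    have h2 := mul_le_mul_of_nonneg_left (htbound (φ n))
      (by positivity : (0:ℝ) ≤ 2 * (ρ + 2 * δ))
    linarith
  obtain ⟨vs, hvsball, ψ, hψ, hvψ⟩ :=
    (isCompact_closedBall (0 : EuclideanSpace ℝ (Fin d)) _).tendsto_subseq hvball
  set θ : ℕ → ℕ := φ ∘ ψ with hθdef
  have hθmono : StrictMono θ := hφ.comp hψ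
  have hzθ : Filter.Tendsto (fun n => z (θ n)) Filter.atTop (nhds zs) :=
    hzφ.comp hψ.tendsto_atTop
  have hvθ : Filter.Tendsto (fun n => v (θ n)) Filter.atTop (nhds vs) := hvψ
  have hεθ : Filter.Tendsto (fun n => (1:ℝ) / ((θ n : ℝ) + 1)) Filter.atTop (nhds 0) :=
    tendsto_one_div_add_atTop_nhds_zero_nat.comp hθmono.tendsto_atTop
  have htθ : Filter.Tendsto (fun n => ‖z (θ n) - x‖) Filter.atTop (nhds ‖zs - x‖) :=
    (hzθ.sub_const x).norm
  -- limit bound on ‖zs - x‖²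
  have htstar : (ρ + 2 * δ) * ‖zs - x‖ ^ 2 ≤ 4 * δ * (‖x - xb‖ * ‖x + xb‖) := by
    have hL : Filter.Tendsto (fun n => (ρ + 2 * δ) * ‖z (θ n) - x‖ ^ 2) Filter.atTop
        (nhds ((ρ + 2 * δ) * ‖zs - x‖ ^ 2)) := tendsto_const_nhds.mul (htθ.pow 2)
    have hR : Filter.Tendsto
        (fun n => 4 * δ * (‖x - xb‖ * ‖x + xb‖) + 2 * δ * (1 / ((θ n : ℝ) + 1)))
        Filter.atTop (nhds (4 * δ * (‖x - xb‖ * ‖x + xb‖) + 2 * δ * 0)) :=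
      tendsto_const_nhds.add (tendsto_const_nhds.mul hεθ)
    have h := le_of_tendsto_of_tendsto' hL hR (fun n => hbt (θ n))
    simpa using h
  -- convergence of the function values
  have hprodθ : Filter.Tendsto (fun n => ‖z (θ n) - xb‖ * ‖z (θ n) + xb‖) Filter.atTop
      (nhds (‖zs - xb‖ * ‖zs + xb‖)) :=
    ((hzθ.sub_const xb).norm).mul ((hzθ.add_const xb).norm)
  have hS2 : Filter.Tendsto
      (fun n => Real.sqrt ((‖z (θ n) - xb‖ * ‖z (θ n) + xb‖) ^ 2 + (1 / ((θ n : ℝ) + 1)) ^ 2))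
      Filter.atTop (nhds (‖zs - xb‖ * ‖zs + xb‖)) := by
    have h := (Real.continuous_sqrt.tendsto
        ((‖zs - xb‖ * ‖zs + xb‖) ^ 2 + 0 ^ 2)).comp ((hprodθ.pow 2).add (hεθ.pow 2))
    simpa [Function.comp_def, Real.sqrt_sq (by positivity : (0:ℝ) ≤ ‖zs - xb‖ * ‖zs + xb‖)] using h
  have hS1 : Filter.Tendsto
      (fun n => Real.sqrt ((‖zs - xb‖ * ‖zs + xb‖) ^ 2 + (1 / ((θ n : ℝ) + 1)) ^ 2))
      Filter.atTop (nhds (‖zs - xb‖ * ‖zs + xb‖)) := by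
    have h := (Real.continuous_sqrt.tendsto
        ((‖zs - xb‖ * ‖zs + xb‖) ^ 2 + 0 ^ 2)).comp (tendsto_const_nhds.add (hεθ.pow 2))
    simpa [Function.comp_def, Real.sqrt_sq (by positivity : (0:ℝ) ≤ ‖zs - xb‖ * ‖zs + xb‖)] using h
  have hle : ∀ n, f (z (θ n)) ≤ f zs
      + (δ * (Real.sqrt ((‖zs - xb‖ * ‖zs + xb‖) ^ 2 + (1 / ((θ n : ℝ) + 1)) ^ 2)
          - Real.sqrt ((‖z (θ n) - xb‖ * ‖z (θ n) + xb‖) ^ 2 + (1 / ((θ n : ℝ) + 1)) ^ 2))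
        + (ρ + δ) * (‖zs - x‖ ^ 2 - ‖z (θ n) - x‖ ^ 2)) := by
    intro n
    have h := hgmin (θ n) zs
    linarith
  have hu : Filter.Tendsto (fun n => f zs
      + (δ * (Real.sqrt ((‖zs - xb‖ * ‖zs + xb‖) ^ 2 + (1 / ((θ n : ℝ) + 1)) ^ 2)
          - Real.sqrt ((‖z (θ n) - xb‖ * ‖z (θ n) + xb‖) ^ 2 + (1 / ((θ n : ℝ) + 1)) ^ 2))
        + (ρ + δ) * (‖zs - x‖ ^ 2 - ‖z (θ n) - x‖ ^ 2))) Filter.atTop (nhds (f zs)) := by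
    have h : Filter.Tendsto (fun n => f zs
      + (δ * (Real.sqrt ((‖zs - xb‖ * ‖zs + xb‖) ^ 2 + (1 / ((θ n : ℝ) + 1)) ^ 2)
          - Real.sqrt ((‖z (θ n) - xb‖ * ‖z (θ n) + xb‖) ^ 2 + (1 / ((θ n : ℝ) + 1)) ^ 2))
        + (ρ + δ) * (‖zs - x‖ ^ 2 - ‖z (θ n) - x‖ ^ 2))) Filter.atTop
        (nhds (f zs + (δ * (‖zs - xb‖ * ‖zs + xb‖ - ‖zs - xb‖ * ‖zs + xb‖)
          + (ρ + δ) * (‖zs - x‖ ^ 2 - ‖zs - x‖ ^ 2)))) :=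
      tendsto_const_nhds.add ((tendsto_const_nhds.mul (hS1.sub hS2)).add
        (tendsto_const_nhds.mul (tendsto_const_nhds.sub (htθ.pow 2))))
    simpa using h
  have hfz : Filter.Tendsto (fun n => f (z (θ n))) Filter.atTop (nhds (f zs)) := by
    refine tendsto_order.2 ⟨fun c hc => ?_, fun c hc => ?_⟩
    · exact hzθ.eventually (hf zs c hc)
    · filter_upwards [hu.eventually_lt_const hc] with n hn using lt_of_le_of_lt (hle n) hn
  have hmem : vs ∈ limitingSubdiff f zs :=
    ⟨fun n => z (θ n), fun n => v (θ n), fun n => hvmem (θ n), hzθ, hfz, hvθ⟩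
  have hvstar : ‖vs‖ ≤ δ * (‖x - xb‖ + ‖x + xb‖) + 2 * (ρ + 2 * δ) * ‖zs - x‖ :=
    le_of_tendsto_of_tendsto' hvθ.norm
      (tendsto_const_nhds.add (tendsto_const_nhds.mul htθ)) (fun n => hvn (θ n))
  refine ⟨zs, ?_, ?_⟩
  · have h1 : ‖zs - x‖ ^ 2 ≤ 4 * δ / (ρ + 2 * δ) * (‖x - xb‖ * ‖x + xb‖) := by
      have h2 : ‖zs - x‖ ^ 2 ≤ 4 * δ * (‖x - xb‖ * ‖x + xb‖) / (ρ + 2 * δ) :=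
        (le_div_iff₀ hρ2).2 (by linarith)
      have h3 : 4 * δ * (‖x - xb‖ * ‖x + xb‖) / (ρ + 2 * δ)
          = 4 * δ / (ρ + 2 * δ) * (‖x - xb‖ * ‖x + xb‖) := by ring
      linarith
    calc ‖x - zs‖ = ‖zs - x‖ := norm_sub_rev _ _
      _ = Real.sqrt (‖zs - x‖ ^ 2) := (Real.sqrt_sq (norm_nonneg _)).symm
      _ ≤ Real.sqrt (4 * δ / (ρ + 2 * δ) * (‖x - xb‖ * ‖x + xb‖)) := Real.sqrt_le_sqrt h1
      _ = Real.sqrt (4 * δ / (ρ + 2 * δ)) * Real.sqrt (‖x - xb‖ * ‖x + xb‖) :=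
        Real.sqrt_mul (by positivity) _
  · have hd : Metric.infDist 0 (limitingSubdiff f zs) ≤ ‖vs‖ := by
      have h := Metric.infDist_le_dist_of_mem
        (x := (0 : EuclideanSpace ℝ (Fin d))) hmem
      rwa [dist_zero_left] at h
    have hs2 : Real.sqrt (δ * (ρ + 2 * δ)) ^ 2 = δ * (ρ + 2 * δ) :=
      Real.sq_sqrt (by positivity)
    have hkey2 : (2 * (ρ + 2 * δ) * ‖zs - x‖) ^ 2
        ≤ (2 * Real.sqrt (δ * (ρ + 2 * δ)) * (‖x - xb‖ + ‖x + xb‖)) ^ 2 := by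
      have hint1 := mul_le_mul_of_nonneg_left htstar
        (by positivity : (0:ℝ) ≤ 4 * (ρ + 2 * δ))
      have hint2 : 0 ≤ 4 * δ * (ρ + 2 * δ) * (‖x - xb‖ - ‖x + xb‖) ^ 2 :=
        mul_nonneg (by positivity) (sq_nonneg _)
      have e : (2 * Real.sqrt (δ * (ρ + 2 * δ)) * (‖x - xb‖ + ‖x + xb‖)) ^ 2
          = 4 * (δ * (ρ + 2 * δ)) * (‖x - xb‖ + ‖x + xb‖) ^ 2 := by
        have e2 : (2 * Real.sqrt (δ * (ρ + 2 * δ)) * (‖x - xb‖ + ‖x + xb‖)) ^ 2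
            = 4 * (Real.sqrt (δ * (ρ + 2 * δ))) ^ 2 * (‖x - xb‖ + ‖x + xb‖) ^ 2 := by ring
        rw [e2, hs2]
      rw [e]
      nlinarith [hint1, hint2]
    have htfinal : 2 * (ρ + 2 * δ) * ‖zs - x‖
        ≤ 2 * Real.sqrt (δ * (ρ + 2 * δ)) * (‖x - xb‖ + ‖x + xb‖) := by
      have h := Real.sqrt_le_sqrt hkey2
      rwa [Real.sqrt_sq (by positivity), Real.sqrt_sq (by positivity)] at h
    have hfin : ‖vs‖ ≤ (δ + 2 * Real.sqrt (δ * (ρ + 2 * δ))) * (‖x - xb‖ + ‖x + xb‖) := by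
      have e : (δ + 2 * Real.sqrt (δ * (ρ + 2 * δ))) * (‖x - xb‖ + ‖x + xb‖)
          = δ * (‖x - xb‖ + ‖x + xb‖)
            + 2 * Real.sqrt (δ * (ρ + 2 * δ)) * (‖x - xb‖ + ‖x + xb‖) := by ring
      linarith
    linarith
end

section
/- Fix 0 ≤ ε < 1/3 and nonzero vectors x, x̄ ∈ ℝ^d. Suppose X = xx^T - x̄x̄^T satisfies λ_max(X) = -c²·λ_min(X) for some c > 0 and |⟨x, x̄⟩| ≤ ε‖x‖‖x̄‖. Then 1 - (1+c²)(ε + ε²) ≤ c²‖x̄‖²/‖x‖² ≤ 1 + (1+c²)(ε + ε²). -/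
open Matrix
set_option maxHeartbeats 1000000
open scoped InnerProductSpace

lemma dot_lin {d : ℕ} (u v w : Fin d → ℝ) (p q : ℝ) :
    u ⬝ᵥ (fun k => p * v k - q * w k) = p * (u ⬝ᵥ v) - q * (u ⬝ᵥ w) := by
  simp only [dotProduct, Finset.mul_sum]
  rw [← Finset.sum_sub_distrib]
  exact Finset.sum_congr rfl fun k _ => by ring

lemma rayleigh_aux {d : ℕ} (X : Matrix (Fin d) (Fin d) ℝ) (hX : X.IsHermitian)
    {lo hi : ℝ} (hlo : ∀ i, lo ≤ hX.eigenvalues i) (hhi : ∀ i, hX.eigenvalues i ≤ hi)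
    (v : Fin d → ℝ) :
    lo * (v ⬝ᵥ v) ≤ v ⬝ᵥ X *ᵥ v ∧ v ⬝ᵥ X *ᵥ v ≤ hi * (v ⬝ᵥ v) := by
  set U : Matrix (Fin d) (Fin d) ℝ := (hX.eigenvectorUnitary : Matrix (Fin d) (Fin d) ℝ) with hU
  have hUU : U * star U = 1 := (Matrix.mem_unitaryGroup_iff).1 hX.eigenvectorUnitary.2
  set w : Fin d → ℝ := star U *ᵥ v with hw
  have hsU : star U = Uᵀ := by
    simp [Matrix.star_eq_conjTranspose, Matrix.conjTranspose_eq_transpose_of_trivial]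
  have h2 : v ⬝ᵥ v = w ⬝ᵥ w := by
    rw [hw, hsU, mulVec_transpose, ← dotProduct_mulVec, ← mulVec_transpose,
      mulVec_mulVec, ← hsU, hUU, one_mulVec]
  have h1 : v ⬝ᵥ X *ᵥ v = ∑ i, hX.eigenvalues i * w i ^ 2 := by
    conv_lhs => rw [hX.spectral_theorem, Unitary.conjStarAlgAut_apply, ← Unitary.coe_star]
    rw [← mulVec_mulVec, ← mulVec_mulVec, dotProduct_mulVec (R := ℝ)]
    have hvU : v ᵥ* U = w := by rw [hw, hsU, mulVec_transpose]
    rw [hvU]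
    simp [dotProduct, mulVec_diagonal, Finset.mul_sum]
    exact Finset.sum_congr rfl fun i _ => by ring
  constructor
  · rw [h1, h2]; simp only [dotProduct]; rw [Finset.mul_sum]
    refine Finset.sum_le_sum fun i _ => ?_
    have := mul_le_mul_of_nonneg_right (hlo i) (sq_nonneg (w i))
    calc lo * (w i * w i) = lo * w i ^ 2 := by ring
      _ ≤ hX.eigenvalues i * w i ^ 2 := this
  · rw [h1, h2]; simp only [dotProduct]; rw [Finset.mul_sum]
    refine Finset.sum_le_sum fun i _ => ?_
    have := mul_le_mul_of_nonneg_right (hhi i) (sq_nonneg (w i))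
    calc hX.eigenvalues i * w i ^ 2 ≤ hi * w i ^ 2 := this
      _ = hi * (w i * w i) := by ring

/-- If `λ_max(X) = -c²·λ_min(X)` for `X = x xᵀ - xb xbᵀ` and `x, xb` are nearly
orthogonal, then `‖x‖ ≈ c‖xb‖`. -/
theorem near_orthogonal_norm_ratio {d : ℕ} (hd : 0 < d) (ε c : ℝ)
    (hε0 : 0 ≤ ε) (hε : ε < 1 / 3) (hc : 0 < c)
    (x xb : EuclideanSpace ℝ (Fin d)) (hx : x ≠ 0) (hxb : xb ≠ 0)
    (X : Matrix (Fin d) (Fin d) ℝ)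
    (hXdef : X = Matrix.of fun i j => x i * x j - xb i * xb j)
    (hX : X.IsHermitian)
    (heig : (⨆ i, hX.eigenvalues i) = -c ^ 2 * (⨅ i, hX.eigenvalues i))
    (hip : |⟪x, xb⟫_ℝ| ≤ ε * ‖x‖ * ‖xb‖) :
    1 - (1 + c ^ 2) * (ε + ε ^ 2) ≤ c ^ 2 * ‖xb‖ ^ 2 / ‖x‖ ^ 2 ∧
      c ^ 2 * ‖xb‖ ^ 2 / ‖x‖ ^ 2 ≤ 1 + (1 + c ^ 2) * (ε + ε ^ 2) := by
  classical
  have hd' : Nonempty (Fin d) := ⟨⟨0, hd⟩⟩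
  have hinner : ∀ v w : EuclideanSpace ℝ (Fin d), ⟪v, w⟫_ℝ = v ⬝ᵥ w := fun v w => by
    simp [PiLp.inner_apply, dotProduct]
    exact Finset.sum_congr rfl fun _ _ => mul_comm _ _
  set a : ℝ := ‖x‖ ^ 2 with ha_def
  set b : ℝ := ‖xb‖ ^ 2 with hb_def
  set s : ℝ := ⟪x, xb⟫_ℝ with hs_def
  have ha : 0 < a := pow_pos (norm_pos_iff.mpr hx) 2
  have hb : 0 < b := pow_pos (norm_pos_iff.mpr hxb) 2
  have hxx : (x ⬝ᵥ x : ℝ) = a := by rw [← hinner x x, real_inner_self_eq_norm_sq]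
  have hbb : (xb ⬝ᵥ xb : ℝ) = b := by rw [← hinner xb xb, real_inner_self_eq_norm_sq]
  have hxxb : (x ⬝ᵥ xb : ℝ) = s := (hinner x xb).symm
  have hxbx : (xb ⬝ᵥ x : ℝ) = s := by rw [dotProduct_comm]; exact (hinner x xb).symm
  have hs2 : s ^ 2 ≤ ε ^ 2 * (a * b) := by
    have h1 : |s| ^ 2 ≤ (ε * ‖x‖ * ‖xb‖) ^ 2 := pow_le_pow_left₀ (abs_nonneg s) hip 2
    rw [sq_abs] at h1
    calc s ^ 2 ≤ (ε * ‖x‖ * ‖xb‖) ^ 2 := h1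
      _ = ε ^ 2 * (a * b) := by rw [ha_def, hb_def]; ring
  have hε1 : ε ^ 2 < 1 := by nlinarith
  have hab : s ^ 2 < a * b := lt_of_le_of_lt hs2 (by nlinarith [mul_pos ha hb])
  set lam := hX.eigenvalues with hlam
  obtain ⟨iM, hiM⟩ := Finite.exists_max lam
  obtain ⟨im, him⟩ := Finite.exists_min lam
  set M : ℝ := ⨆ i, lam i with hM_def
  set m : ℝ := ⨅ i, lam i with hm_def
  have hMeq : M = lam iM :=
    le_antisymm (ciSup_le hiM) (le_ciSup (Set.finite_range lam).bddAbove iM)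
  have hmeq : m = lam im :=
    le_antisymm (ciInf_le (Set.finite_range lam).bddBelow im) (le_ciInf him)
  have hMax : ∀ i, lam i ≤ M := fun i => hMeq ▸ hiM i
  have hMin : ∀ i, m ≤ lam i := fun i => hmeq ▸ him i
  have hray := rayleigh_aux X hX hMin hMax
  have hform : ∀ w : Fin d → ℝ, X *ᵥ w = fun k => (x ⬝ᵥ w) * x k - (xb ⬝ᵥ w) * xb k := by
    intro w
    funext k
    simp only [hXdef, mulVec, dotProduct, Matrix.of_apply]
    have h : ∀ j, (x k * x j - xb k * xb j) * w j
        = x k * (x j * w j) - xb k * (xb j * w j) := fun j => by ring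
    simp_rw [h]
    rw [Finset.sum_sub_distrib, ← Finset.mul_sum, ← Finset.mul_sum]
    ring
  have hquadform : ∀ w : Fin d → ℝ, w ⬝ᵥ X *ᵥ w = (x ⬝ᵥ w) ^ 2 - (xb ⬝ᵥ w) ^ 2 := by
    intro w
    rw [hform w, dot_lin w x xb (x ⬝ᵥ w) (xb ⬝ᵥ w), dotProduct_comm w x, dotProduct_comm w xb]
    ring
  have heigvec : ∀ i : Fin d, X *ᵥ ⇑(hX.eigenvectorBasis i) = lam i • ⇑(hX.eigenvectorBasis i) :=
    hX.mulVec_eigenvectorBasis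
  -- every nonzero eigenvalue satisfies the quadratic equation
  have hquad : ∀ i : Fin d, lam i ≠ 0 →
      lam i ^ 2 + (b - a) * lam i + (s ^ 2 - a * b) = 0 := by
    intro i hi0
    set v : Fin d → ℝ := ⇑(hX.eigenvectorBasis i) with hv
    have hveq : (fun k => (x ⬝ᵥ v) * x k - (xb ⬝ᵥ v) * xb k) = lam i • v := by
      rw [← hform v]; exact heigvec i
    set p : ℝ := x ⬝ᵥ v with hp_def
    set q : ℝ := xb ⬝ᵥ v with hq_def
    have e1 : p * a - q * s = lam i * p := by
      have h := congrArg (fun u => x ⬝ᵥ u) hveq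
      simp only at h
      rw [dot_lin x x xb p q, dotProduct_smul, smul_eq_mul, hxx, hxxb] at h
      linarith [h]
    have e2 : p * s - q * b = lam i * q := by
      have h := congrArg (fun u => xb ⬝ᵥ u) hveq
      simp only at h
      rw [dot_lin xb x xb p q, dotProduct_smul, smul_eq_mul, hbb, hxbx] at h
      linarith [h]
    have hvne : v ≠ 0 := by
      intro h
      exact hX.eigenvectorBasis.orthonormal.ne_zero i (by ext k; exact congrFun h k)
    have hpq : ¬(p = 0 ∧ q = 0) := by
      rintro ⟨hp, hq⟩
      have h0 : lam i • v = 0 := by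
        rw [← hveq]; funext k; simp [hp, hq]
      rcases smul_eq_zero.mp h0 with h | h
      · exact hi0 h
      · exact hvne h
    have Qp : (lam i ^ 2 + (b - a) * lam i + (s ^ 2 - a * b)) * p = 0 := by
      linear_combination (-(lam i + b)) * e1 + s * e2
    have Qq : (lam i ^ 2 + (b - a) * lam i + (s ^ 2 - a * b)) * q = 0 := by
      linear_combination (-s) * e1 + (a - lam i) * e2
    rcases not_and_or.mp hpq with hp | hq
    · exact (mul_eq_zero.mp Qp).resolve_right hp
    · exact (mul_eq_zero.mp Qq).resolve_right hq
  -- M ≤ a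
  have hvvM : (0 : ℝ) < ⇑(hX.eigenvectorBasis iM) ⬝ᵥ ⇑(hX.eigenvectorBasis iM) := by
    have h1 : (0:ℝ) < ‖hX.eigenvectorBasis iM‖ ^ 2 :=
      pow_pos (norm_pos_iff.mpr (hX.eigenvectorBasis.orthonormal.ne_zero iM)) 2
    have h2 := real_inner_self_eq_norm_sq (hX.eigenvectorBasis iM)
    rw [hinner] at h2
    rw [← h2] at h1
    exact h1
  have hMa : M ≤ a := by
    set v : Fin d → ℝ := ⇑(hX.eigenvectorBasis iM) with hv
    have hXvv : v ⬝ᵥ X *ᵥ v = M * (v ⬝ᵥ v) := by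
      rw [heigvec iM, dotProduct_smul, smul_eq_mul, hMeq]
    have hcs : (x ⬝ᵥ v) ^ 2 ≤ a * (v ⬝ᵥ v) := by
      have h := real_inner_mul_inner_self_le x (hX.eigenvectorBasis iM)
      rw [hinner, hinner, hinner] at h
      rw [hxx] at h
      calc (x ⬝ᵥ v) ^ 2 = (x ⬝ᵥ v) * (x ⬝ᵥ v) := sq (x ⬝ᵥ v) ▸ by ring
        _ ≤ a * (v ⬝ᵥ v) := h
    have hq := hquadform v
    rw [hXvv] at hq
    have hle : M * (v ⬝ᵥ v) ≤ a * (v ⬝ᵥ v) := by nlinarith [sq_nonneg (xb ⬝ᵥ v)]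
    exact (mul_le_mul_iff_left₀ hvvM).mp hle
  -- lower bound on M via Rayleigh quotient at v₀ = b x - s xb
  have hMlow : a * b - s ^ 2 ≤ M * b := by
    set v₀ : Fin d → ℝ := fun k => b * x k - s * xb k with hv₀
    have hxv₀ : x ⬝ᵥ v₀ = b * a - s * s := by
      rw [hv₀, dot_lin x x xb b s, hxx, hxxb]
    have hxbv₀ : xb ⬝ᵥ v₀ = 0 := by
      rw [hv₀, dot_lin xb x xb b s, hbb, hxbx]; ring
    have hvv₀ : v₀ ⬝ᵥ v₀ = b * (a * b - s ^ 2) := by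
      rw [hv₀, dot_lin v₀ x xb b s, dotProduct_comm v₀ x, dotProduct_comm v₀ xb,
        hxv₀, hxbv₀]
      ring
    have h := (hray v₀).2
    rw [hquadform v₀, hxv₀, hxbv₀, hvv₀] at h
    have h' : (a * b - s ^ 2) * (a * b - s ^ 2) ≤ (M * b) * (a * b - s ^ 2) := by nlinarith [h]
    exact (mul_le_mul_iff_left₀ (by linarith : (0:ℝ) < a * b - s ^ 2)).mp h'
  -- upper bound on m via Rayleigh quotient at v₁ = a xb - s x
  have hmup : m * a ≤ -(a * b - s ^ 2) := by
    set v₁ : Fin d → ℝ := fun k => a * xb k - s * x k with hv₁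
    have hxv₁ : x ⬝ᵥ v₁ = 0 := by
      rw [hv₁, dot_lin x xb x a s, hxx, hxxb]; ring
    have hxbv₁ : xb ⬝ᵥ v₁ = a * b - s * s := by
      rw [hv₁, dot_lin xb xb x a s, hbb, hxbx]
    have hvv₁ : v₁ ⬝ᵥ v₁ = a * (a * b - s ^ 2) := by
      rw [hv₁, dot_lin v₁ xb x a s, dotProduct_comm v₁ x, dotProduct_comm v₁ xb,
        hxv₁, hxbv₁]
      ring
    have h := (hray v₁).1
    rw [hquadform v₁, hxv₁, hxbv₁, hvv₁] at h
    have h' : (m * a) * (a * b - s ^ 2) ≤ (-(a * b - s ^ 2)) * (a * b - s ^ 2) := by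
      nlinarith [h]
    exact (mul_le_mul_iff_left₀ (by linarith : (0:ℝ) < a * b - s ^ 2)).mp h'
  have hMpos : 0 < M := by
    have hMb : 0 < M * b := lt_of_lt_of_le (by linarith) hMlow
    rcases mul_pos_iff.mp hMb with ⟨h1, _⟩ | ⟨_, h2⟩
    · exact h1
    · linarith
  have hmneg : m < 0 := by nlinarith
  -- quadratic equations for M and m
  have hqM : M ^ 2 + (b - a) * M + (s ^ 2 - a * b) = 0 := by
    have h := hquad iM (by rw [← hMeq]; exact ne_of_gt hMpos)
    rw [← hMeq] at h; exact h
  have hqm : m ^ 2 + (b - a) * m + (s ^ 2 - a * b) = 0 := by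
    have h := hquad im (by rw [← hmeq]; exact ne_of_lt hmneg)
    rw [← hmeq] at h; exact h
  have hfac : (M - m) * (M + m + (b - a)) = 0 := by linear_combination hqM - hqm
  have hsum : M + m = a - b := by
    rcases mul_eq_zero.mp hfac with h | h
    · exfalso; have : M ≠ m := by linarith
      exact this (by linarith)
    · linarith
  -- key linear identity
  have hkey : c ^ 2 * b - a = (c ^ 2 - 1) * (a - M) := by
    linear_combination c ^ 2 * hsum - heig
  have hD0 : 0 ≤ a - M := by linarith
  have hD2 : a - M ≤ ε ^ 2 * a := by
    have h1 : b * (a - M) ≤ s ^ 2 := by nlinarith [hMlow]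
    have h2 : (a - M) * b ≤ (ε ^ 2 * a) * b := by nlinarith [hs2]
    exact (mul_le_mul_iff_left₀ hb).mp h2
  have hcsq : (0:ℝ) ≤ 1 + c ^ 2 := by positivity
  have hbig : (1 + c ^ 2) * (a - M) ≤ (1 + c ^ 2) * (ε ^ 2 * a) :=
    mul_le_mul_of_nonneg_left hD2 hcsq
  have hepos : (0:ℝ) ≤ (1 + c ^ 2) * (ε * a) := by positivity
  have hub : c ^ 2 * b - a ≤ (1 + c ^ 2) * (ε + ε ^ 2) * a := by nlinarith [hkey, hD0, hbig]
  have hlb : a - c ^ 2 * b ≤ (1 + c ^ 2) * (ε + ε ^ 2) * a := by nlinarith [hkey, hD0, hbig]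
  clear hray hform hquadform heigvec hquad hinner hiM him hip hXdef heig
  constructor
  · rw [le_div_iff₀ ha]
    linarith [hlb]
  · rw [div_le_iff₀ ha]
    linarith [hub]
end

section
/- For 0 ≤ ε < 1: define c₁(ε), c₂(ε) > 0 as the unique solutions of (π/4)(1-ε) = c₁/(1+c₁²) + arctan(c₁) and (π/4)(1+ε) = c₂/(1+c₂²) + arctan(c₂). Then for 0 < ε < 1/2, c₂(ε) - c₁(ε) ≤ 5πε. -/
open Real

/-- derivative of `ω(c) = c/(1+c²) + arctan c` is `2/(1+c²)²`. -/
lemma omega_hasDerivAt (x : ℝ) :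
    HasDerivAt (fun c : ℝ => c / (1 + c ^ 2) + Real.arctan c)
      (2 / (1 + x ^ 2) ^ 2) x := by
  have hden : (1 : ℝ) + x ^ 2 ≠ 0 := by positivity
  have h1 : HasDerivAt (fun c : ℝ => c / (1 + c ^ 2))
      ((1 * (1 + x ^ 2) - x * (2 * x)) / (1 + x ^ 2) ^ 2) x := by
    have hx : HasDerivAt (fun c : ℝ => c) 1 x := hasDerivAt_id x
    have hd : HasDerivAt (fun c : ℝ => 1 + c ^ 2) (2 * x) x := by
      simpa using ((hasDerivAt_pow 2 x).const_add 1)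
    exact hx.div hd hden
  have h2 := Real.hasDerivAt_arctan x
  have := h1.add h2
  refine (this.congr_deriv ?_ : _)
  field_simp
  ring

lemma omega_strictMono :
    StrictMono (fun c : ℝ => c / (1 + c ^ 2) + Real.arctan c) := by
  apply strictMono_of_deriv_pos
  intro x
  rw [(omega_hasDerivAt x).deriv]
  positivity

lemma arctan_lt_self {x : ℝ} (hx : 0 < x) : Real.arctan x < x := by
  have h0 : 0 < Real.arctan x := by
    have := Real.arctan_strictMono hx
    rwa [Real.arctan_zero] at this
  have h2 : Real.arctan x < π / 2 := Real.arctan_lt_pi_div_two x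
  have := Real.lt_tan h0 h2
  rwa [Real.tan_arctan] at this

/-- If `c₁, c₂ > 0` solve `(π/4)(1-ε) = ω(c₁)` and `(π/4)(1+ε) = ω(c₂)` with
`ω(c) = c/(1+c²) + arctan c`, then for `0 < ε < 1/2` one has `c₂ - c₁ ≤ 5πε`. -/
theorem c_two_minus_c_one_bound (ε : ℝ) (hε0 : 0 < ε) (hε : ε < 1 / 2)
    (c₁ c₂ : ℝ) (hc₁0 : 0 < c₁) (hc₂0 : 0 < c₂)
    (hc₁ : Real.pi / 4 * (1 - ε) = c₁ / (1 + c₁ ^ 2) + Real.arctan c₁)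
    (hc₂ : Real.pi / 4 * (1 + ε) = c₂ / (1 + c₂ ^ 2) + Real.arctan c₂) :
    c₂ - c₁ ≤ 5 * Real.pi * ε := by
  set f : ℝ → ℝ := fun c => c / (1 + c ^ 2) + Real.arctan c with hf
  have hpi : (3.14 : ℝ) < π := by
    have := Real.pi_gt_d6; linarith
  -- c₁ < c₂
  have hlt : c₁ < c₂ := by
    by_contra h
    push_neg at h
    have := omega_strictMono.le_iff_le.mpr h
    change c₂ / (1 + c₂ ^ 2) + Real.arctan c₂ ≤ c₁ / (1 + c₁ ^ 2) + Real.arctan c₁ at this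
    rw [← hc₁, ← hc₂] at this
    nlinarith
  -- c₂ ≤ 1.3
  have hc₂le : c₂ ≤ 1.3 := by
    by_contra h
    push_neg at h
    have hmono : f 1.3 < f c₂ := omega_strictMono h
    have harc : Real.arctan (1.3 : ℝ) ≥ π / 2 - 1 / 1.3 := by
      have hinv : Real.arctan ((1.3 : ℝ)⁻¹) = π / 2 - Real.arctan 1.3 :=
        Real.arctan_inv_of_pos (by norm_num)
      have hle : Real.arctan ((1.3 : ℝ)⁻¹) < (1.3 : ℝ)⁻¹ :=
        arctan_lt_self (by norm_num)
      rw [hinv] at hle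
      rw [ge_iff_le, show (1:ℝ)/1.3 = (1.3:ℝ)⁻¹ by norm_num]
      linarith
    have hval : f 1.3 = 1.3 / (1 + (1.3:ℝ) ^ 2) + Real.arctan 1.3 := rfl
    have hfc₂ : f c₂ = π / 4 * (1 + ε) := hc₂.symm
    rw [hval, hfc₂] at hmono
    nlinarith
  -- MVT on [c₁, c₂]
  have hcont : ContinuousOn f (Set.Icc c₁ c₂) := by
    intro x _
    exact ((omega_hasDerivAt x).differentiableAt.continuousAt).continuousWithinAt
  have hderiv : ∀ x ∈ Set.Ioo c₁ c₂, HasDerivAt f (2 / (1 + x ^ 2) ^ 2) x :=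
    fun x _ => omega_hasDerivAt x
  obtain ⟨c, hc, hslope⟩ := exists_hasDerivAt_eq_slope f _ hlt hcont hderiv
  have hfd : f c₂ - f c₁ = π / 2 * ε := by
    simp only [hf]
    rw [← hc₁, ← hc₂]; ring
  have hclt : c < 1.3 := lt_of_lt_of_le hc.2 hc₂le
  have hc0 : 0 < c := lt_trans hc₁0 hc.1
  have h1c : 1 + c ^ 2 ≤ (2.69 : ℝ) := by nlinarith
  have hden : (1 + c ^ 2) ^ 2 ≤ (2.69 : ℝ) ^ 2 := by nlinarith [sq_nonneg (1 + c ^ 2)]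
  have hderge : (2 : ℝ) / 2.69 ^ 2 ≤ 2 / (1 + c ^ 2) ^ 2 := by
    apply div_le_div_of_nonneg_left (by norm_num) (by positivity) hden
  rw [hfd] at hslope
  have hsub : 0 < c₂ - c₁ := by linarith
  have hkey : π / 2 * ε = 2 / (1 + c ^ 2) ^ 2 * (c₂ - c₁) := by
    rw [hslope, div_mul_cancel₀ _ (ne_of_gt hsub)]
  have : (2 : ℝ) / 2.69 ^ 2 * (c₂ - c₁) ≤ π / 2 * ε := by
    rw [hkey]
    exact mul_le_mul_of_nonneg_right hderge (le_of_lt hsub)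
  nlinarith [Real.pi_pos]
end

section
/- Let g(x) = f_λ(xx^T - x̄x̄^T) where f: ℝ^d → ℝ is symmetric convex and f_λ(X) = f(λ(X)) is the induced spectral function on symmetric matrices. Suppose there exists κ > 0 with g(x) - g(x̄) ≥ κ‖x-x̄‖‖x+x̄‖ for all x. Then for any x ∉ {x̄, -x̄} and any V ∈ ∂f_λ(X) (with X = xx^T - x̄x̄^T), one has max{|λ₁(V)|, |λ_d(V)|} ≥ κ/2, where λ₁(V), λ_d(V) are the largest and smallest eigenvalues of V. -/
open scoped InnerProductSpace Matrix

/-- The matrix `X = x xᵀ - xb xbᵀ`. -/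
def phaseMatrix {d : ℕ} (x xb : EuclideanSpace ℝ (Fin d)) : Matrix (Fin d) (Fin d) ℝ :=
  Matrix.of fun i j => x i * x j - xb i * xb j

theorem phaseMatrix_isHermitian {d : ℕ} (x xb : EuclideanSpace ℝ (Fin d)) :
    (phaseMatrix x xb).IsHermitian := by
  unfold Matrix.IsHermitian
  ext i j
  simp [phaseMatrix, Matrix.conjTranspose_apply, mul_comm]

/-- The spectral composite objective `g(x) = f(λ(x xᵀ - xb xbᵀ))`. -/
noncomputable def spectralObj {d : ℕ} (f : (Fin d → ℝ) → ℝ)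
    (xb : EuclideanSpace ℝ (Fin d)) (x : EuclideanSpace ℝ (Fin d)) : ℝ :=
  f ((phaseMatrix_isHermitian x xb).eigenvalues)

namespace SpectralAux

open Polynomial Matrix Finset

variable {d : ℕ}

lemma my_charpoly_conj (U A : Matrix (Fin d) (Fin d) ℝ) (h1 : U * Uᵀ = 1) :
    (U * A * Uᵀ).charpoly = A.charpoly := by
  have hmap : ∀ M N : Matrix (Fin d) (Fin d) ℝ,
      (M * N).map (C : ℝ →+* ℝ[X]) = M.map C * N.map C := fun M N => Matrix.map_mul
  have hone : (1 : Matrix (Fin d) (Fin d) ℝ).map (C : ℝ →+* ℝ[X]) = 1 :=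
    Matrix.map_one _ (map_zero _) (map_one _)
  have hUU : U.map (C : ℝ →+* ℝ[X]) * Uᵀ.map C = 1 := by rw [← hmap, h1, hone]
  have hcomm : ∀ M : Matrix (Fin d) (Fin d) ℝ[X],
      Matrix.scalar (Fin d) (X : ℝ[X]) * M = M * Matrix.scalar (Fin d) (X : ℝ[X]) := by
    intro M
    exact (Matrix.scalar_commute (X : ℝ[X]) (fun r => mul_comm _ _) M).eq
  have hcm : charmatrix (U * A * Uᵀ) = U.map C * charmatrix A * Uᵀ.map C := by
    simp only [charmatrix, RingHom.mapMatrix_apply]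
    rw [hmap, hmap, Matrix.mul_sub, Matrix.sub_mul]
    congr 1
    rw [← hcomm, Matrix.mul_assoc, hUU, Matrix.mul_one]
  rw [Matrix.charpoly, Matrix.charpoly, hcm, det_mul, det_mul]
  have h2 : (U.map (C : ℝ →+* ℝ[X])).det * (Uᵀ.map C).det = 1 := by
    rw [← det_mul, hUU, det_one]
  calc (U.map (C : ℝ →+* ℝ[X])).det * (charmatrix A).det * (Uᵀ.map C).det
      = (charmatrix A).det * ((U.map (C : ℝ →+* ℝ[X])).det * (Uᵀ.map C).det) := by ring
    _ = (charmatrix A).det := by rw [h2, mul_one]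

lemma my_charpoly_diagonal (w : Fin d → ℝ) :
    (Matrix.diagonal w).charpoly = ∏ i, (X - C (w i)) := by
  rw [Matrix.charpoly_of_upperTriangular _ (Matrix.blockTriangular_diagonal w)]
  simp

lemma my_roots_prod (v : Fin d → ℝ) :
    (∏ i, (X - C (v i))).roots = Finset.univ.val.map v := by
  have := Polynomial.roots_multiset_prod_X_sub_C (Finset.univ.val.map v)
  rwa [Multiset.map_map, ← Finset.prod_eq_multiset_prod] at this

lemma my_eig_multiset {A : Matrix (Fin d) (Fin d) ℝ} (hA : A.IsHermitian)
    (U : Matrix (Fin d) (Fin d) ℝ) (h1 : U * Uᵀ = 1) (l : Fin d → ℝ)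
    (hdec : A = U * Matrix.diagonal l * Uᵀ) :
    Finset.univ.val.map hA.eigenvalues = Finset.univ.val.map l := by
  have e1 : A.charpoly = ∏ i, (X - C (l i)) := by
    rw [hdec, my_charpoly_conj _ _ h1, my_charpoly_diagonal]
  have hst : (star (hA.eigenvectorUnitary : Matrix (Fin d) (Fin d) ℝ)) =
      (hA.eigenvectorUnitary : Matrix (Fin d) (Fin d) ℝ)ᵀ := rfl
  have hW : (hA.eigenvectorUnitary : Matrix (Fin d) (Fin d) ℝ) *
      (hA.eigenvectorUnitary : Matrix (Fin d) (Fin d) ℝ)ᵀ = 1 := by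
    rw [← hst]
    exact (Matrix.mem_unitaryGroup_iff).mp hA.eigenvectorUnitary.2
  have e2 : A.charpoly = ∏ i, (X - C (hA.eigenvalues i)) := by
    have hs := hA.spectral_theorem
    have hd : Matrix.diagonal (RCLike.ofReal ∘ hA.eigenvalues)
        = Matrix.diagonal hA.eigenvalues := rfl
    rw [hd, Unitary.conjStarAlgAut_apply, hst] at hs
    have h2 : A.charpoly = ((hA.eigenvectorUnitary : Matrix (Fin d) (Fin d) ℝ) *
        Matrix.diagonal hA.eigenvalues *
          (hA.eigenvectorUnitary : Matrix (Fin d) (Fin d) ℝ)ᵀ).charpoly :=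
      congrArg _ hs
    rw [h2, my_charpoly_conj _ _ hW, my_charpoly_diagonal]
  have h3 := my_roots_prod hA.eigenvalues
  rw [← e2, e1, my_roots_prod] at h3
  exact h3.symm

lemma my_symm_apply_eq (f : (Fin d → ℝ) → ℝ)
    (hsymm : ∀ σ : Equiv.Perm (Fin d), ∀ z : Fin d → ℝ, f (z ∘ σ) = f z)
    (a b : Fin d → ℝ) (h : Finset.univ.val.map a = Finset.univ.val.map b) :
    f a = f b := by
  have hperm : (List.ofFn a).Perm (List.ofFn b) := by
    rw [← Multiset.coe_eq_coe]
    simpa [Fin.univ_val_map] using h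
  set σa := Tuple.sort a
  set σb := Tuple.sort b
  have hma : Monotone (a ∘ σa) := Tuple.monotone_sort a
  have hmb : Monotone (b ∘ σb) := Tuple.monotone_sort b
  have hperm' : (List.ofFn (a ∘ σa)).Perm (List.ofFn (b ∘ σb)) :=
    ((σa.ofFn_comp_perm a).trans hperm).trans (σb.ofFn_comp_perm b).symm
  have heq : List.ofFn (a ∘ σa) = List.ofFn (b ∘ σb) :=
    List.Perm.eq_of_sortedLE hma.sortedLE_ofFn hmb.sortedLE_ofFn hperm'
  have hab : a ∘ σa = b ∘ σb := List.ofFn_injective heq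
  calc f a = f (a ∘ σa) := (hsymm σa a).symm
    _ = f (b ∘ σb) := by rw [hab]
    _ = f b := hsymm σb b

lemma my_rank_add_le (A B : Matrix (Fin d) (Fin d) ℝ) : (A + B).rank ≤ A.rank + B.rank := by
  unfold Matrix.rank
  have hle : LinearMap.range (A + B).mulVecLin ≤
      LinearMap.range A.mulVecLin ⊔ LinearMap.range B.mulVecLin := by
    rintro y ⟨u, rfl⟩
    rw [Matrix.mulVecLin_add]
    exact Submodule.add_mem_sup ⟨u, rfl⟩ ⟨u, rfl⟩
  calc Module.finrank ℝ (LinearMap.range (A + B).mulVecLin)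
      ≤ Module.finrank ℝ ↥(LinearMap.range A.mulVecLin ⊔ LinearMap.range B.mulVecLin) :=
        Submodule.finrank_mono hle
    _ ≤ _ := Submodule.finrank_add_le_finrank_add_finrank _ _

lemma my_rank_vecMulVec (w v : Fin d → ℝ) : (Matrix.vecMulVec w v).rank ≤ 1 := by
  unfold Matrix.rank
  have hle : LinearMap.range (Matrix.vecMulVec w v).mulVecLin ≤ Submodule.span ℝ {w} := by
    rintro y ⟨u, rfl⟩
    have h : (Matrix.vecMulVec w v).mulVecLin u = (v ⬝ᵥ u) • w := by
      ext i
      simp [Matrix.mulVecLin_apply, Matrix.mulVec, Matrix.vecMulVec, dotProduct,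
        Finset.mul_sum, Finset.sum_mul, mul_assoc]
      exact Finset.sum_congr rfl fun k _ => by ring
    rw [h]
    exact Submodule.smul_mem _ _ (Submodule.mem_span_singleton_self w)
  calc Module.finrank ℝ (LinearMap.range (Matrix.vecMulVec w v).mulVecLin)
      ≤ Module.finrank ℝ (Submodule.span ℝ {w}) := Submodule.finrank_mono hle
    _ ≤ 1 := by simpa using finrank_span_le_card ({w} : Set (Fin d → ℝ))

lemma my_support_card (x xb : EuclideanSpace ℝ (Fin d)) (U : Matrix (Fin d) (Fin d) ℝ)
    (h1 : U * Uᵀ = 1) (lX : Fin d → ℝ)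
    (hdec : phaseMatrix x xb = U * Matrix.diagonal lX * Uᵀ) :
    (Finset.univ.filter (fun i => lX i ≠ 0)).card ≤ 2 := by
  have hUdet : IsUnit U.det := by
    apply IsUnit.of_mul_eq_one Uᵀ.det
    rw [← Matrix.det_mul, h1, Matrix.det_one]
  have hUtdet : IsUnit Uᵀ.det := by
    apply IsUnit.of_mul_eq_one U.det
    rw [← Matrix.det_mul]
    rw [mul_eq_one_comm] at h1
    rw [h1, Matrix.det_one]
  have hsplit : phaseMatrix x xb
      = Matrix.vecMulVec x x + Matrix.vecMulVec xb (fun k => - xb k) := by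
    ext i j
    simp [phaseMatrix, Matrix.vecMulVec]
    ring
  have hr2 : (phaseMatrix x xb).rank ≤ 2 := by
    rw [hsplit]
    calc (Matrix.vecMulVec x x + Matrix.vecMulVec xb (fun k => - xb k)).rank
        ≤ (Matrix.vecMulVec x x).rank + (Matrix.vecMulVec xb (fun k => - xb k)).rank :=
          my_rank_add_le _ _
      _ ≤ 1 + 1 := add_le_add (my_rank_vecMulVec _ _) (my_rank_vecMulVec _ _)
  have hreq : (phaseMatrix x xb).rank = (Matrix.diagonal lX).rank := by
    rw [hdec, Matrix.rank_mul_eq_left_of_isUnit_det Uᵀ _ hUtdet,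
      Matrix.rank_mul_eq_right_of_isUnit_det U _ hUdet]
  rw [hreq, Matrix.rank_diagonal] at hr2
  rwa [← Fintype.card_subtype]

lemma my_sum_sq_norm (v : EuclideanSpace ℝ (Fin d)) : ∑ k, v k ^ 2 = ‖v‖ ^ 2 := by
  rw [EuclideanSpace.norm_eq, Real.sq_sqrt (by positivity)]
  simp [sq_abs]

lemma my_cs (u : Fin d → ℝ) (hu : ∑ k, u k ^ 2 = 1) (v : EuclideanSpace ℝ (Fin d)) :
    |∑ k, u k * v k| ≤ ‖v‖ := by
  have h := Finset.sum_mul_sq_le_sq_mul_sq Finset.univ u (fun k => v k)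
  rw [hu, one_mul, my_sum_sq_norm] at h
  calc |∑ k, u k * v k| = Real.sqrt ((∑ k, u k * v k) ^ 2) := (Real.sqrt_sq_eq_abs _).symm
    _ ≤ Real.sqrt (‖v‖ ^ 2) := Real.sqrt_le_sqrt h
    _ = ‖v‖ := Real.sqrt_sq (norm_nonneg v)

lemma my_eig_bound (x xb : EuclideanSpace ℝ (Fin d)) (U : Matrix (Fin d) (Fin d) ℝ)
    (h2 : Uᵀ * U = 1) (lX : Fin d → ℝ)
    (hdec : phaseMatrix x xb = U * Matrix.diagonal lX * Uᵀ) (j : Fin d) :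
    |lX j| ≤ ‖x - xb‖ * ‖x + xb‖ := by
  have hdiag : Matrix.diagonal lX = Uᵀ * phaseMatrix x xb * U := by
    rw [hdec]
    have h3 : Uᵀ * (U * Matrix.diagonal lX * Uᵀ) * U
        = (Uᵀ * U) * (Matrix.diagonal lX) * (Uᵀ * U) := by
      simp only [Matrix.mul_assoc]
    rw [h3, h2, Matrix.one_mul, Matrix.mul_one]
  have hu : ∑ k, (U k j) ^ 2 = 1 := by
    have h := congrArg (fun M => M j j) h2
    simpa [Matrix.mul_apply, Matrix.transpose_apply, Matrix.one_apply, sq] using h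
  have hjj : lX j = (∑ k, U k j * x k) * (∑ k, U k j * x k)
      - (∑ k, U k j * xb k) * (∑ k, U k j * xb k) := by
    have h := congrArg (fun M => M j j) hdiag
    simp only [Matrix.diagonal_apply_eq, Matrix.mul_apply, Matrix.transpose_apply,
      phaseMatrix, Matrix.of_apply] at h
    rw [h]
    simp only [Finset.sum_mul, Finset.mul_sum, mul_sub, sub_mul, Finset.sum_sub_distrib]
    congr 1 <;>
    · rw [Finset.sum_comm]
      exact Finset.sum_congr rfl fun l _ => Finset.sum_congr rfl fun k _ => by ring
  have hsub : ∑ k, U k j * (x - xb) k = (∑ k, U k j * x k) - (∑ k, U k j * xb k) := by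
    simp [PiLp.sub_apply, mul_sub, Finset.sum_sub_distrib]
  have hadd : ∑ k, U k j * (x + xb) k = (∑ k, U k j * x k) + (∑ k, U k j * xb k) := by
    simp [PiLp.add_apply, mul_add, Finset.sum_add_distrib]
  have key : lX j = (∑ k, U k j * (x - xb) k) * (∑ k, U k j * (x + xb) k) := by
    rw [hsub, hadd, hjj]; ring
  rw [key, abs_mul]
  exact mul_le_mul (my_cs _ hu _) (my_cs _ hu _) (abs_nonneg _) (norm_nonneg _)

end SpectralAux

open SpectralAux in
/-- If `g = f_λ(x xᵀ - xb xbᵀ)` is sharp with constant `κ`, then for `x ∉ {±xb}` and any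
`V ∈ ∂f_λ(X)` (presented by a simultaneous ordered spectral decomposition with `X` and a
convex subgradient inclusion `λ(V) ∈ ∂f(λ(X))`), the extreme eigenvalues of `V` satisfy
`max{|λ₁(V)|, |λ_d(V)|} ≥ κ/2`. -/
theorem spectral_subgradient_eigenvalue_lower_bound {d : ℕ} (hd : 0 < d)
    (f : (Fin d → ℝ) → ℝ) (hconv : ConvexOn ℝ Set.univ f)
    (hsymm : ∀ σ : Equiv.Perm (Fin d), ∀ z : Fin d → ℝ, f (z ∘ σ) = f z)
    (xb : EuclideanSpace ℝ (Fin d)) (κ : ℝ) (hκ : 0 < κ)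
    (hsharp : ∀ y, spectralObj f xb y - spectralObj f xb xb ≥ κ * ‖y - xb‖ * ‖y + xb‖)
    (x : EuclideanSpace ℝ (Fin d)) (hx1 : x ≠ xb) (hx2 : x ≠ -xb)
    (U : Matrix (Fin d) (Fin d) ℝ) (hU : U ∈ Matrix.orthogonalGroup (Fin d) ℝ)
    (lX lV : Fin d → ℝ) (hlX : Antitone lX) (hlV : Antitone lV)
    (hdecX : phaseMatrix x xb = U * Matrix.diagonal lX * Uᵀ)
    (V : Matrix (Fin d) (Fin d) ℝ) (hdecV : V = U * Matrix.diagonal lV * Uᵀ)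
    (hsub : ∀ z : Fin d → ℝ, f z ≥ f lX + ∑ i, lV i * (z i - lX i)) :
    κ / 2 ≤ max |⨆ i, lV i| |⨅ i, lV i| := by
  classical
  have hne : Nonempty (Fin d) := ⟨⟨0, hd⟩⟩
  have h1 : U * Uᵀ = 1 := hU.2
  have h2 : Uᵀ * U = 1 := hU.1
  -- identify g x with f lX
  have hmul := my_eig_multiset (phaseMatrix_isHermitian x xb) U h1 lX hdecX
  have hgx : spectralObj f xb x = f lX := my_symm_apply_eq f hsymm _ _ hmul
  -- identify g xb with f 0
  have hzero : phaseMatrix xb xb = (1 : Matrix (Fin d) (Fin d) ℝ) *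
      Matrix.diagonal (fun _ => (0 : ℝ)) * (1 : Matrix (Fin d) (Fin d) ℝ)ᵀ := by
    ext i j
    simp [phaseMatrix, Matrix.diagonal]
  have hmul0 := my_eig_multiset (phaseMatrix_isHermitian xb xb) 1 (by simp) (fun _ => 0) hzero
  have hgxb : spectralObj f xb xb = f (fun _ => 0) := my_symm_apply_eq f hsymm _ _ hmul0
  -- positivity of the sharpness scale
  have hs1 : x - xb ≠ 0 := sub_ne_zero.mpr hx1
  have hs2 : x + xb ≠ 0 := by
    intro h
    exact hx2 (eq_neg_of_add_eq_zero_left h)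
  set s : ℝ := ‖x - xb‖ * ‖x + xb‖ with hs
  have hspos : 0 < s := mul_pos (norm_pos_iff.mpr hs1) (norm_pos_iff.mpr hs2)
  have hsharp' : κ * s ≤ f lX - f (fun _ => 0) := by
    have h := hsharp x
    rw [hgx, hgxb] at h
    calc κ * s = κ * ‖x - xb‖ * ‖x + xb‖ := by rw [hs]; ring
      _ ≤ f lX - f (fun _ => 0) := h
  -- subgradient inequality at 0
  have hsub0 : f lX - f (fun _ => 0) ≤ ∑ i, lV i * lX i := by
    have h := hsub (fun _ => 0)
    have h' : ∑ i, lV i * ((fun _ => (0 : ℝ)) i - lX i) = -∑ i, lV i * lX i := by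
      rw [← Finset.sum_neg_distrib]
      exact Finset.sum_congr rfl fun i _ => by ring
    rw [h'] at h
    linarith
  set M : ℝ := max |⨆ i, lV i| |⨅ i, lV i| with hM
  have hMnn : 0 ≤ M := le_trans (abs_nonneg _) (le_max_left _ _)
  have habs : ∀ i, |lV i| ≤ M := by
    intro i
    have hba : BddAbove (Set.range lV) := (Set.finite_range lV).bddAbove
    have hbb : BddBelow (Set.range lV) := (Set.finite_range lV).bddBelow
    have hup : lV i ≤ ⨆ j, lV j := le_ciSup hba i
    have hlo : ⨅ j, lV j ≤ lV i := ciInf_le hbb i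
    rw [abs_le]
    constructor
    · calc -M ≤ -|⨅ j, lV j| := neg_le_neg (le_max_right _ _)
        _ ≤ ⨅ j, lV j := neg_abs_le _
        _ ≤ lV i := hlo
    · calc lV i ≤ ⨆ j, lV j := hup
        _ ≤ |⨆ j, lV j| := le_abs_self _
        _ ≤ M := le_max_left _ _
  -- bound the pairing
  have hb2 : ∑ i, |lX i| ≤ 2 * s := by
    have hcard := my_support_card x xb U h1 lX hdecX
    have heq : ∑ i, |lX i|
        = ∑ i ∈ Finset.univ.filter (fun i => lX i ≠ 0), |lX i| := by
      symm
      apply Finset.sum_subset (Finset.filter_subset _ _)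
      intro i _ hi
      simp only [Finset.mem_filter, Finset.mem_univ, true_and, not_not] at hi
      simp [hi]
    have hbound : ∀ i ∈ Finset.univ.filter (fun i => lX i ≠ 0), |lX i| ≤ s :=
      fun i _ => my_eig_bound x xb U h2 lX hdecX i
    calc ∑ i, |lX i| = ∑ i ∈ Finset.univ.filter (fun i => lX i ≠ 0), |lX i| := heq
      _ ≤ (Finset.univ.filter (fun i => lX i ≠ 0)).card • s :=
          Finset.sum_le_card_nsmul _ _ s hbound
      _ = ((Finset.univ.filter (fun i => lX i ≠ 0)).card : ℝ) * s := nsmul_eq_mul _ _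
      _ ≤ 2 * s := by
          apply mul_le_mul_of_nonneg_right _ hspos.le
          exact_mod_cast hcard
  have hsum : ∑ i, lV i * lX i ≤ M * (2 * s) := by
    have hb1 : ∑ i, lV i * lX i ≤ ∑ i, |lX i| * M := by
      apply Finset.sum_le_sum
      intro i _
      calc lV i * lX i ≤ |lV i * lX i| := le_abs_self _
        _ = |lV i| * |lX i| := abs_mul _ _
        _ ≤ M * |lX i| := mul_le_mul_of_nonneg_right (habs i) (abs_nonneg _)
        _ = |lX i| * M := mul_comm _ _
    calc ∑ i, lV i * lX i ≤ ∑ i, |lX i| * M := hb1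
      _ = (∑ i, |lX i|) * M := (Finset.sum_mul _ _ _).symm
      _ ≤ (2 * s) * M := mul_le_mul_of_nonneg_right hb2 hMnn
      _ = M * (2 * s) := mul_comm _ _
  have hfinal : κ * s ≤ M * (2 * s) := le_trans hsharp' (le_trans hsub0 hsum)
  nlinarith [hspos, hfinal]
end
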